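/- arXiv:2406.04126 — 8 statements merged into one kernel-verified Lean document; each statement's English description precedes it below -/
import Mathlib

section
/- Suppose (A_n) admits a (μ,ν)-dichotomy with projections P_n, constants D, λ > 0, and suppose there exists ε ∈ [0,λ) with sup_n (μ_n^{-ε} ν_n) < ∞. Fix β ∈ (-(λ-ε), λ). Then for every y = (y_n) ∈ ℓ^1_{β,0} (i.e. Σ_n μ_n^β ν_n ‖y_n‖ < ∞ and y_0 = 0), the sequence x_n := Σ_{k=0}^n 𝒜(n,k) P_k y_k − Σ_{k=n+1}^∞ 𝒜(n,k)(Id − P_k) y_k satisfies sup_n (μ_n^β ‖x_n‖) ≤ D Σ_{k=0}^∞ μ_k^β ν_k ‖y_k‖, x_0 ∈ Ker P_0, and x_{n+1} − A_n x_n = y_{n+1} for all n ∈ ℕ. -/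
lemma rpow_key {a b lam β : ℝ} (ha : 0 < a) (hb : 0 < b) (hab : a ≤ b)
    (h1 : 0 ≤ β + lam) (h2 : β ≤ lam) :
    a ^ β * (b / a) ^ (-lam) ≤ b ^ β ∧ b ^ β * (b / a) ^ (-lam) ≤ a ^ β := by
  set r : ℝ := a / b with hr
  have hrpos : 0 < r := div_pos ha hb
  have hr1 : r ≤ 1 := div_le_one_of_le₀ hab hb.le
  have hba : (b / a) ^ (-lam) = r ^ lam := by
    rw [Real.rpow_neg (div_nonneg hb.le ha.le), ← Real.inv_rpow (div_nonneg hb.le ha.le),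
      inv_div]
  have haeq : a ^ β = b ^ β * r ^ β := by
    rw [← Real.mul_rpow hb.le hrpos.le]
    congr 1
    rw [hr]; field_simp
  constructor
  · rw [hba, haeq, mul_assoc, ← Real.rpow_add hrpos]
    have h3 : r ^ (β + lam) ≤ 1 := by
      have := Real.rpow_le_rpow_of_exponent_ge hrpos hr1 h1
      simpa using this
    calc b ^ β * r ^ (β + lam) ≤ b ^ β * 1 :=
          mul_le_mul_of_nonneg_left h3 (Real.rpow_nonneg hb.le β)
      _ = b ^ β := mul_one _
  · rw [hba, haeq]
    exact mul_le_mul_of_nonneg_left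
      (Real.rpow_le_rpow_of_exponent_ge hrpos hr1 h2) (Real.rpow_nonneg hb.le β)


/-- Suppose `(A_n)` admits a `(μ,ν)`-dichotomy (projections `P n`, backward
Green operators `B m n = 𝒜(m,n)(Id - P n)` for `m ≤ n`, constants `D, λ > 0`),
there is `ε ∈ [0,λ)` with `sup_n μ_n^{-ε} ν_n < ∞`, and `β ∈ (-(λ-ε), λ)`.
Then for every `y ∈ ℓ^1_{β,0}`, the sequence
`x_n = Σ_{k=0}^n 𝒜(n,k)P_k y_k − Σ_{k>n} 𝒜(n,k)(Id−P_k) y_k` satisfies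
`μ_n^β ‖x_n‖ ≤ D Σ_k μ_k^β ν_k ‖y_k‖`, `x_0 ∈ Ker P_0`, and
`x_{n+1} − A_n x_n = y_{n+1}` for all `n`. -/
theorem stmt3 {X : Type*} [NormedAddCommGroup X] [NormedSpace ℝ X] [CompleteSpace X]
    (μ : ℕ → ℝ) (hμpos : ∀ n, 0 < μ n) (hμmono : StrictMono μ)
    (hμtop : Filter.Tendsto μ Filter.atTop Filter.atTop)
    (ν : ℕ → ℝ) (hν : ∀ n, 1 ≤ ν n)
    (A : ℕ → X →L[ℝ] X) (𝒜 : ℕ → ℕ → X →L[ℝ] X)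
    (h𝒜id : ∀ n, 𝒜 n n = 1)
    (h𝒜succ : ∀ m n, n ≤ m → 𝒜 (m + 1) n = (A m).comp (𝒜 m n))
    -- the family of projections
    (P : ℕ → X →L[ℝ] X) (hP : ∀ n, (P n).comp (P n) = P n)
    (hPA : ∀ n, (A n).comp (P n) = (P (n + 1)).comp (A n))
    -- the backward evolution on kernels: `B m n = 𝒜(m,n)(Id − P n)` for `m ≤ n`
    (B : ℕ → ℕ → X →L[ℝ] X)
    (hBdiag : ∀ n, B n n = 1 - P n)
    (hBstep : ∀ m n, m < n → (A m).comp (B m n) = B (m + 1) n)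
    (hBker : ∀ m n, m ≤ n → (P m).comp (B m n) = 0)
    -- the dichotomy estimates
    (D lam : ℝ) (hD : 0 < D) (hlam : 0 < lam)
    (hS : ∀ m n, n ≤ m → ‖(𝒜 m n).comp (P n)‖ ≤ D * ν n * (μ m / μ n) ^ (-lam))
    (hU : ∀ m n, m ≤ n → ‖B m n‖ ≤ D * ν n * (μ n / μ m) ^ (-lam))
    -- nonuniformity control
    (ε : ℝ) (hε0 : 0 ≤ ε) (hεlam : ε < lam)
    (hμν : ∃ M, ∀ n, μ n ^ (-ε) * ν n ≤ M)
    (β : ℝ) (hβ1 : -(lam - ε) < β) (hβ2 : β < lam)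
    -- the input sequence `y ∈ ℓ^1_{β,0}`
    (y : ℕ → X) (hy0 : y 0 = 0)
    (hy : Summable (fun n => μ n ^ β * ν n * ‖y n‖))
    -- the sequence `x`
    (x : ℕ → X)
    (hx : ∀ n, x n = (∑ k ∈ Finset.range (n + 1), 𝒜 n k (P k (y k)))
        - ∑' k : ℕ, if n < k then B n k (y k) else 0) :
    (∀ n, μ n ^ β * ‖x n‖ ≤ D * ∑' k : ℕ, μ k ^ β * ν k * ‖y k‖)
      ∧ P 0 (x 0) = 0
      ∧ ∀ n, x (n + 1) - A n (x n) = y (n + 1) := by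
  have hμnn : ∀ n, (0:ℝ) ≤ μ n := fun n => (hμpos n).le
  have hνnn : ∀ n, (0:ℝ) ≤ ν n := fun n => le_trans zero_le_one (hν n)
  set w : ℕ → ℝ := fun k => μ k ^ β * ν k * ‖y k‖ with hwdef
  have hwnn : ∀ k, 0 ≤ w k := fun k => by
    have h1 := hμnn k; have h2 := hνnn k
    simp only [hwdef]
    positivity
  have hβlam : 0 ≤ β + lam := by linarith
  have hβle : β ≤ lam := hβ2.le
  -- per-term bounds
  have htB : ∀ n k, n < k → μ n ^ β * ‖B n k (y k)‖ ≤ D * w k := by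
    intro n k hnk
    have hmono := (hμmono hnk).le
    have hkey := (rpow_key (hμpos n) (hμpos k) hmono hβlam hβle).1
    have h1 : ‖B n k (y k)‖ ≤ D * ν k * (μ k / μ n) ^ (-lam) * ‖y k‖ :=
      le_trans ((B n k).le_opNorm (y k))
        (mul_le_mul_of_nonneg_right (hU n k hnk.le) (norm_nonneg _))
    calc μ n ^ β * ‖B n k (y k)‖
        ≤ μ n ^ β * (D * ν k * (μ k / μ n) ^ (-lam) * ‖y k‖) :=
          mul_le_mul_of_nonneg_left h1 (Real.rpow_nonneg (hμnn n) β)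
      _ = D * ν k * ‖y k‖ * (μ n ^ β * (μ k / μ n) ^ (-lam)) := by ring
      _ ≤ D * ν k * ‖y k‖ * μ k ^ β := by
          apply mul_le_mul_of_nonneg_left hkey
          have := hνnn k; positivity
      _ = D * w k := by simp only [hwdef]; ring
  have htS : ∀ n k, k ≤ n → μ n ^ β * ‖𝒜 n k (P k (y k))‖ ≤ D * w k := by
    intro n k hkn
    have hmono : μ k ≤ μ n := hμmono.le_iff_le.mpr hkn
    have hkey := (rpow_key (hμpos k) (hμpos n) hmono hβlam hβle).2
    have h1 : ‖𝒜 n k (P k (y k))‖ ≤ D * ν k * (μ n / μ k) ^ (-lam) * ‖y k‖ := by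
      have h2 := ((𝒜 n k).comp (P k)).le_opNorm (y k)
      rw [ContinuousLinearMap.comp_apply] at h2
      exact le_trans h2 (mul_le_mul_of_nonneg_right (hS n k hkn) (norm_nonneg _))
    calc μ n ^ β * ‖𝒜 n k (P k (y k))‖
        ≤ μ n ^ β * (D * ν k * (μ n / μ k) ^ (-lam) * ‖y k‖) :=
          mul_le_mul_of_nonneg_left h1 (Real.rpow_nonneg (hμnn n) β)
      _ = D * ν k * ‖y k‖ * (μ n ^ β * (μ n / μ k) ^ (-lam)) := by ring
      _ ≤ D * ν k * ‖y k‖ * μ k ^ β := by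
          apply mul_le_mul_of_nonneg_left hkey
          have := hνnn k; positivity
      _ = D * w k := by simp only [hwdef]; ring
  have hDw : Summable (fun k => D * w k) := hy.mul_left D
  have hnormbd : ∀ n k, ‖(if n < k then B n k (y k) else 0 : X)‖
      ≤ (μ n ^ β)⁻¹ * (D * w k) := by
    intro n k
    have hpow : (0:ℝ) < μ n ^ β := Real.rpow_pos_of_pos (hμpos n) β
    by_cases h : n < k
    · rw [if_pos h, inv_mul_eq_div, le_div_iff₀ hpow, mul_comm]
      exact htB n k h
    · rw [if_neg h, norm_zero]
      have := hwnn k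
      positivity
  have hsummX : ∀ n, Summable (fun k => if n < k then B n k (y k) else 0) :=
    fun n => Summable.of_norm_bounded (hDw.mul_left (μ n ^ β)⁻¹) (hnormbd n)
  have hsummN : ∀ n, Summable (fun k => ‖(if n < k then B n k (y k) else 0 : X)‖) :=
    fun n => Summable.of_nonneg_of_le (fun k => norm_nonneg _) (hnormbd n)
      (hDw.mul_left _)
  refine ⟨?_, ?_, ?_⟩
  · -- the bound
    intro n
    have hpownn : (0:ℝ) ≤ μ n ^ β := (Real.rpow_pos_of_pos (hμpos n) β).le
    set g : ℕ → ℝ := fun k => if n < k then w k else 0 with hg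
    have hgsum : Summable g := by
      apply Summable.of_nonneg_of_le _ _ hy
      · intro k; simp only [hg]; split
        · exact hwnn k
        · exact le_refl 0
      · intro k; simp only [hg]; split
        · exact le_refl _
        · exact hwnn k
    have hsplit : (∑ k ∈ Finset.range (n+1), w k) + ∑' k, g k = ∑' k, w k := by
      have hh : ∀ k, (fun k => if n < k then 0 else w k) k + g k = w k := by
        intro k; simp only [hg]; split <;> simp
      have hhs : Summable (fun k => if n < k then 0 else w k) := by
        apply summable_of_ne_finset_zero (s := Finset.range (n+1))
        intro k hk
        rw [Finset.mem_range, not_lt] at hk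
        rw [if_pos (by omega)]
      have hts : ∑' k, (if n < k then 0 else w k) = ∑ k ∈ Finset.range (n+1), w k := by
        rw [tsum_eq_sum (s := Finset.range (n+1))]
        · apply Finset.sum_congr rfl
          intro k hk
          rw [Finset.mem_range] at hk
          rw [if_neg (by omega)]
        · intro k hk
          rw [Finset.mem_range, not_lt] at hk
          rw [if_pos (by omega)]
      calc (∑ k ∈ Finset.range (n+1), w k) + ∑' k, g k
          = (∑' k, (if n < k then 0 else w k)) + ∑' k, g k := by rw [hts]
        _ = ∑' k, ((if n < k then 0 else w k) + g k) := (Summable.tsum_add hhs hgsum).symm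
        _ = ∑' k, w k := by apply tsum_congr; intro k; exact hh k
    have hDg : (fun k => if n < k then D * w k else 0) = fun k => D * g k := by
      funext k; simp only [hg]; split <;> simp
    calc μ n ^ β * ‖x n‖
        ≤ μ n ^ β * (‖∑ k ∈ Finset.range (n+1), 𝒜 n k (P k (y k))‖
            + ‖∑' k : ℕ, if n < k then B n k (y k) else 0‖) := by
          rw [hx n]
          exact mul_le_mul_of_nonneg_left (norm_sub_le _ _) hpownn
      _ = μ n ^ β * ‖∑ k ∈ Finset.range (n+1), 𝒜 n k (P k (y k))‖
            + μ n ^ β * ‖∑' k : ℕ, if n < k then B n k (y k) else 0‖ := by ring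
      _ ≤ (∑ k ∈ Finset.range (n+1), μ n ^ β * ‖𝒜 n k (P k (y k))‖)
            + ∑' k, μ n ^ β * ‖(if n < k then B n k (y k) else 0 : X)‖ := by
          apply add_le_add
          · calc μ n ^ β * ‖∑ k ∈ Finset.range (n+1), 𝒜 n k (P k (y k))‖
                ≤ μ n ^ β * ∑ k ∈ Finset.range (n+1), ‖𝒜 n k (P k (y k))‖ :=
                  mul_le_mul_of_nonneg_left (norm_sum_le _ _) hpownn
              _ = ∑ k ∈ Finset.range (n+1), μ n ^ β * ‖𝒜 n k (P k (y k))‖ :=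
                  Finset.mul_sum _ _ _
          · calc μ n ^ β * ‖∑' k : ℕ, if n < k then B n k (y k) else 0‖
                ≤ μ n ^ β * ∑' k, ‖(if n < k then B n k (y k) else 0 : X)‖ :=
                  mul_le_mul_of_nonneg_left (norm_tsum_le_tsum_norm (hsummN n)) hpownn
              _ = ∑' k, μ n ^ β * ‖(if n < k then B n k (y k) else 0 : X)‖ :=
                  (tsum_mul_left).symm
      _ ≤ (∑ k ∈ Finset.range (n+1), D * w k)
            + ∑' k, (if n < k then D * w k else 0) := by
          apply add_le_add
          · apply Finset.sum_le_sum
            intro k hk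
            rw [Finset.mem_range] at hk
            exact htS n k (by omega)
          · apply Summable.tsum_le_tsum _ ((hsummN n).mul_left _) (by rw [hDg]; exact hgsum.mul_left D)
            intro k
            by_cases h : n < k
            · rw [if_pos h, if_pos h]
              exact htB n k h
            · rw [if_neg h, if_neg h, norm_zero, mul_zero]
      _ = D * ∑' k, w k := by
          rw [hDg, tsum_mul_left, ← Finset.mul_sum, ← mul_add, hsplit]
  · -- x 0 in kernel
    have h0 : x 0 = -∑' k : ℕ, if 0 < k then B 0 k (y k) else 0 := by
      rw [hx 0]
      simp [hy0]
    rw [h0, map_neg, ContinuousLinearMap.map_tsum _ (hsummX 0)]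
    have hz : ∀ k : ℕ, P 0 ((if 0 < k then B 0 k (y k) else 0 : X)) = 0 := by
      intro k
      rw [apply_ite (P 0)]
      split
      · have h1 : (P 0).comp (B 0 k) = 0 := hBker 0 k (Nat.zero_le k)
        calc P 0 (B 0 k (y k)) = ((P 0).comp (B 0 k)) (y k) := rfl
          _ = 0 := by rw [h1]; rfl
      · exact map_zero _
    simp [hz]
  · -- the difference equation
    intro n
    have hAx : A n (x n) = (∑ k ∈ Finset.range (n+1), 𝒜 (n+1) k (P k (y k)))
        - ∑' k : ℕ, (if n < k then B (n+1) k (y k) else 0) := by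
      rw [hx n, map_sub, map_sum, ContinuousLinearMap.map_tsum _ (hsummX n)]
      congr 1
      · apply Finset.sum_congr rfl
        intro k hk
        rw [Finset.mem_range, Nat.lt_succ_iff] at hk
        rw [h𝒜succ n k hk]
        rfl
      · apply tsum_congr
        intro k
        rw [apply_ite (A n)]
        by_cases h : n < k
        · rw [if_pos h, if_pos h, ← hBstep n k h]
          rfl
        · rw [if_neg h, if_neg h, map_zero]
    have hsingle : Summable (fun k : ℕ =>
        if k = n+1 then B (n+1) (n+1) (y (n+1)) else 0) := by
      apply summable_of_ne_finset_zero (s := {n+1})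
      intro k hk
      rw [Finset.mem_singleton] at hk
      rw [if_neg hk]
    have heq : (fun k : ℕ => if n < k then B (n+1) k (y k) else 0)
        = fun k => (if n+1 < k then B (n+1) k (y k) else 0)
            + (if k = n+1 then B (n+1) (n+1) (y (n+1)) else 0) := by
      funext k
      rcases lt_trichotomy k (n+1) with h|h|h
      · rw [if_neg (by omega), if_neg (by omega), if_neg (by omega), add_zero]
      · subst h
        rw [if_pos (by omega), if_neg (by omega), if_pos rfl, zero_add]
      · rw [if_pos (by omega), if_pos h, if_neg (by omega), add_zero]
    have htsum : ∑' k : ℕ, (if n < k then B (n+1) k (y k) else 0)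
        = (∑' k : ℕ, if n+1 < k then B (n+1) k (y k) else 0)
            + B (n+1) (n+1) (y (n+1)) := by
      rw [heq, Summable.tsum_add (hsummX (n+1)) hsingle, tsum_ite_eq]
    rw [hx (n+1), hAx, htsum, Finset.sum_range_succ, h𝒜id (n+1), hBdiag (n+1)]
    simp only [ContinuousLinearMap.one_apply, ContinuousLinearMap.sub_apply]
    abel
end

section
/- Under the admissibility hypotheses, the restriction A_n|_{U(n)} : U(n) → U(n+1) is a bijective linear map for every n ∈ ℕ, where U(n) = 𝒜(n,0)Z. -/
/-- Under proper admissibility of `(ℓ^1_{β,0}, ℓ^∞_{β,Z})`, the restriction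
`A_n|_{U(n)} : U(n) → U(n+1)` is bijective for every `n`, where
`U(n) = 𝒜(n,0)Z`. -/
theorem stmt7 {X : Type*} [NormedAddCommGroup X] [NormedSpace ℝ X] [CompleteSpace X]
    (μ : ℕ → ℝ) (hμpos : ∀ n, 0 < μ n) (hμmono : StrictMono μ)
    (hμtop : Filter.Tendsto μ Filter.atTop Filter.atTop)
    (ν : ℕ → ℝ) (hν : ∀ n, 1 ≤ ν n)
    (A : ℕ → X →L[ℝ] X) (𝒜 : ℕ → ℕ → X →L[ℝ] X)
    (h𝒜id : ∀ n, 𝒜 n n = 1)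
    (h𝒜succ : ∀ m n, n ≤ m → 𝒜 (m + 1) n = (A m).comp (𝒜 m n))
    (Z : Submodule ℝ X) (hZ : IsClosed (Z : Set X))
    (β : ℝ) (hβ : 0 < β)
    (hadm : ∀ y : ℕ → X, y 0 = 0 → Summable (fun n => μ n ^ β * ν n * ‖y n‖) →
      ∃! x : ℕ → X, x 0 ∈ Z ∧ (∃ C, ∀ n, μ n ^ β * ‖x n‖ ≤ C) ∧
        ∀ n, x (n + 1) - A n (x n) = y (n + 1))
    (U : ℕ → Set X) (hUdef : ∀ n, U n = (𝒜 n 0) '' (Z : Set X)) :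
    ∀ n, Set.BijOn (fun v => A n v) (U n) (U (n + 1)) := by
  intro n
  have hcomp : ∀ z : X, A n (𝒜 n 0 z) = 𝒜 (n + 1) 0 z := by
    intro z; rw [h𝒜succ n 0 (Nat.zero_le n)]; rfl
  refine ⟨?_, ?_, ?_⟩
  · rintro v hv
    rw [hUdef n] at hv
    obtain ⟨z, hz, rfl⟩ := hv
    rw [hUdef (n + 1)]
    exact ⟨z, hz, (hcomp z).symm⟩
  · rintro v hv w hw hvw
    rw [hUdef n] at hv hw
    obtain ⟨z1, hz1, rfl⟩ := hv
    obtain ⟨z2, hz2, rfl⟩ := hw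
    simp only at hvw
    set u := z1 - z2 with hu
    have hA : A n (𝒜 n 0 u) = 0 := by
      rw [hu, map_sub, map_sub, hvw, sub_self]
    set x : ℕ → X := fun k => if k ≤ n then 𝒜 k 0 u else 0 with hxdef
    have hx0 : x 0 ∈ Z := by
      simp only [hxdef, if_pos (Nat.zero_le n), h𝒜id 0]
      exact Z.sub_mem hz1 hz2
    have hxbound : ∃ C, ∀ k, μ k ^ β * ‖x k‖ ≤ C := by
      refine ⟨∑ k ∈ Finset.range (n + 1), μ k ^ β * ‖x k‖, fun k => ?_⟩
      have hnonneg : ∀ j ∈ Finset.range (n + 1), 0 ≤ μ j ^ β * ‖x j‖ := fun j _ =>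
        mul_nonneg (Real.rpow_nonneg (hμpos j).le β) (norm_nonneg _)
      by_cases hk : k ≤ n
      · exact Finset.single_le_sum hnonneg (Finset.mem_range.mpr (Nat.lt_succ_of_le hk))
      · have : x k = 0 := if_neg hk
        rw [this, norm_zero, mul_zero]
        exact Finset.sum_nonneg hnonneg
    have hxeq : ∀ k, x (k + 1) - A k (x k) = 0 := by
      intro k
      rcases lt_trichotomy k n with hk | hk | hk
      · have h1 : x (k + 1) = 𝒜 (k + 1) 0 u := if_pos (Nat.succ_le_of_lt hk)
        have h2 : x k = 𝒜 k 0 u := if_pos hk.le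
        rw [h1, h2]
        rw [show A k (𝒜 k 0 u) = 𝒜 (k + 1) 0 u from by
          rw [h𝒜succ k 0 (Nat.zero_le k)]; rfl, sub_self]
      · subst hk
        have h1 : x (k + 1) = 0 := if_neg (by omega)
        have h2 : x k = 𝒜 k 0 u := if_pos le_rfl
        rw [h1, h2, hA, sub_zero]
      · have h1 : x (k + 1) = 0 := if_neg (by omega)
        have h2 : x k = 0 := if_neg (by omega)
        rw [h1, h2, map_zero, sub_zero]
    obtain ⟨x₀, _, huniq⟩ := hadm (fun _ => 0) rfl
      (by simpa using summable_zero)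
    have h1 : x = x₀ := huniq x ⟨hx0, hxbound, fun k => hxeq k⟩
    have h2 : (fun _ : ℕ => (0 : X)) = x₀ :=
      huniq _ ⟨Z.zero_mem, ⟨0, fun k => by simp⟩, fun k => by simp⟩
    have hx : x = fun _ => 0 := h1.trans h2.symm
    have hxn : x n = 0 := congrFun hx n
    have : 𝒜 n 0 u = 0 := by rwa [show x n = 𝒜 n 0 u from if_pos le_rfl] at hxn
    rw [hu, map_sub, sub_eq_zero] at this
    exact this
  · rintro w hw
    rw [hUdef (n + 1)] at hw
    obtain ⟨z, hz, rfl⟩ := hw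
    exact ⟨𝒜 n 0 z, by rw [hUdef n]; exact ⟨z, hz, rfl⟩, hcomp z⟩
end

section
/- Under the admissibility hypotheses, there exists C̃ > 0 such that for every n ∈ ℕ, m ≤ n, and v ∈ U(n) = 𝒜(n,0)Z, the (well-defined) backward evolution satisfies ‖𝒜(m,n)v‖ ≤ C̃ (μ_n/μ_m)^{-β} ν_n ‖v‖, where 𝒜(m,n) : U(n) → U(m) is the inverse of 𝒜(n,m)|_{U(m)}. -/
open Filter Topology ENNReal

set_option maxHeartbeats 8000000
set_option synthInstance.maxHeartbeats 200000

/-- Auxiliary: the admissibility of the `(-β)`-weighted pair yields a uniform backward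
bound along trajectories starting in `Z`. -/
theorem stmt11_aux {X : Type*} [NormedAddCommGroup X] [NormedSpace ℝ X] [CompleteSpace X]
    (μ : ℕ → ℝ) (hμpos : ∀ n, 0 < μ n)
    (ν : ℕ → ℝ) (hν : ∀ n, 1 ≤ ν n)
    (A : ℕ → X →L[ℝ] X)
    (Z : Submodule ℝ X) (hZ : IsClosed (Z : Set X))
    (β : ℝ)
    (hadm₂ : ∀ y : ℕ → X, y 0 = 0 → Summable (fun n => μ n ^ (-β) * ν n * ‖y n‖) →
      ∃! x : ℕ → X, x 0 ∈ Z ∧ (∃ C, ∀ n, μ n ^ (-β) * ‖x n‖ ≤ C) ∧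
        ∀ n, x (n + 1) - A n (x n) = y (n + 1)) :
    ∃ K : ℝ, 0 ≤ K ∧ ∀ (x : ℕ → X), x 0 ∈ Z → (∀ k, x (k + 1) = A k (x k)) →
      ∀ m n : ℕ, m < n → μ m ^ (-β) * ‖x m‖ ≤ K * (μ n ^ (-β) * ν n * ‖x n‖) := by
  classical
  -- positivity of the weights
  have hwi : ∀ k, (0:ℝ) < μ k ^ (-β) := fun k => Real.rpow_pos_of_pos (hμpos k) _
  have hw1 : ∀ k, (0:ℝ) < μ k ^ (-β) * ν k := fun k =>
    mul_pos (hwi k) (zero_lt_one.trans_le (hν k))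
  -- pointwise evaluation is continuous on lp spaces
  have ev : ∀ (p : ℝ≥0∞) (_i : Fact (1 ≤ p)) (F : ℕ → lp (fun _ : ℕ => X) p)
      (L : lp (fun _ : ℕ => X) p) (k : ℕ), Tendsto F atTop (𝓝 L) →
      Tendsto (fun j => (F j : ℕ → X) k) atTop (𝓝 ((L : ℕ → X) k)) := by
    intro p hp F L k hFL
    haveI := hp
    have hp0 : p ≠ 0 := (lt_of_lt_of_le zero_lt_one hp.out).ne'
    rw [tendsto_iff_norm_sub_tendsto_zero] at hFL ⊢
    refine squeeze_zero (fun j => norm_nonneg _) (fun j => ?_) hFL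
    have h := lp.norm_apply_le_norm hp0 (F j - L) k
    simpa [lp.coeFn_sub] using h
  -- the closed subspace of ℓ¹ sequences vanishing at 0
  let Y : Submodule ℝ (lp (fun _ : ℕ => X) 1) :=
    { carrier := {f : lp (fun _ : ℕ => X) 1 | (f : ℕ → X) 0 = 0}
      add_mem' := by
        intro a b ha hb
        simp only [Set.mem_setOf_eq] at ha hb ⊢
        simp [lp.coeFn_add, ha, hb]
      zero_mem' := by
        simp only [Set.mem_setOf_eq]
        simp [lp.coeFn_zero]
      smul_mem' := by
        intro c a ha
        simp only [Set.mem_setOf_eq] at ha ⊢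
        simp [lp.coeFn_smul, ha] }
  have hYmem : ∀ f : lp (fun _ : ℕ => X) 1, f ∈ Y ↔ (f : ℕ → X) 0 = 0 := fun f => Iff.rfl
  have hYc : IsClosed (Y : Set (lp (fun _ : ℕ => X) 1)) := by
    refine IsSeqClosed.isClosed ?_
    intro F L hF hFL
    have h1 := ev 1 ⟨le_refl 1⟩ F L 0 hFL
    have h2 : Tendsto (fun j => ((F j : lp (fun _ : ℕ => X) 1) : ℕ → X) 0) atTop (𝓝 0) := by
      have he : (fun j => ((F j : lp (fun _ : ℕ => X) 1) : ℕ → X) 0) = fun _ => (0 : X) :=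
        funext fun j => hF j
      rw [he]
      exact tendsto_const_nhds
    exact tendsto_nhds_unique h1 h2
  haveI : CompleteSpace Y := hYc.completeSpace_coe
  clear_value Y
  -- the unique solution of the inhomogeneous equation, for data in Y
  have key : ∀ f : Y, ∃! x : ℕ → X, x 0 ∈ Z ∧ (∃ C, ∀ k, μ k ^ (-β) * ‖x k‖ ≤ C) ∧
      ∀ k, x (k + 1) - A k (x k) =
        (μ (k + 1) ^ (-β) * ν (k + 1))⁻¹ •
          ((f : lp (fun _ : ℕ => X) 1) : ℕ → X) (k + 1) := by
    intro f
    have hf0 : ((f : lp (fun _ : ℕ => X) 1) : ℕ → X) 0 = 0 := (hYmem _).mp f.2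
    have hsumf : Summable fun k => ‖((f : lp (fun _ : ℕ => X) 1) : ℕ → X) k‖ := by
      have h := lp.memℓp (f : lp (fun _ : ℕ => X) 1)
      rw [memℓp_gen_iff (by simp : (0:ℝ) < (1 : ℝ≥0∞).toReal)] at h
      simpa using h
    have h0 : (fun k => (μ k ^ (-β) * ν k)⁻¹ •
        ((f : lp (fun _ : ℕ => X) 1) : ℕ → X) k) 0 = 0 := by
      simp [hf0]
    have hsum : Summable fun k => μ k ^ (-β) * ν k *
        ‖(fun k => (μ k ^ (-β) * ν k)⁻¹ •
          ((f : lp (fun _ : ℕ => X) 1) : ℕ → X) k) k‖ := by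
      refine hsumf.congr fun k => ?_
      rw [norm_smul, norm_inv, Real.norm_eq_abs, abs_of_pos (hw1 k), ← mul_assoc,
        mul_inv_cancel₀ (hw1 k).ne', one_mul]
    exact hadm₂ _ h0 hsum
  -- the solution operator (as a bare function)
  let sol : Y → ℕ → X := fun f => (key f).choose
  have solZ : ∀ f : Y, sol f 0 ∈ Z := fun f => (key f).choose_spec.1.1
  have solB : ∀ f : Y, ∃ C, ∀ k, μ k ^ (-β) * ‖sol f k‖ ≤ C := fun f =>
    (key f).choose_spec.1.2.1
  have solE : ∀ f : Y, ∀ k, sol f (k + 1) - A k (sol f k) =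
      (μ (k + 1) ^ (-β) * ν (k + 1))⁻¹ •
        ((f : lp (fun _ : ℕ => X) 1) : ℕ → X) (k + 1) := fun f =>
    (key f).choose_spec.1.2.2
  have solU : ∀ f : Y, ∀ x : ℕ → X, x 0 ∈ Z → (∃ C, ∀ k, μ k ^ (-β) * ‖x k‖ ≤ C) →
      (∀ k, x (k + 1) - A k (x k) =
        (μ (k + 1) ^ (-β) * ν (k + 1))⁻¹ •
          ((f : lp (fun _ : ℕ => X) 1) : ℕ → X) (k + 1)) → x = sol f :=
    fun f x h1 h2 h3 => (key f).choose_spec.2 x ⟨h1, h2, h3⟩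
  clear_value sol
  -- the weighted solution lies in ℓ∞
  have memT : ∀ f : Y, Memℓp (fun k => μ k ^ (-β) • sol f k) (⊤ : ℝ≥0∞) := by
    intro f
    obtain ⟨C, hC⟩ := solB f
    apply memℓp_infty
    refine ⟨C, ?_⟩
    rintro r ⟨k, rfl⟩
    show ‖μ k ^ (-β) • sol f k‖ ≤ C
    rw [norm_smul, Real.norm_eq_abs, abs_of_pos (hwi k)]
    exact hC k
  let T0 : Y → lp (fun _ : ℕ => X) ⊤ := fun f => ⟨fun k => μ k ^ (-β) • sol f k, memT f⟩
  have T0apply : ∀ (f : Y) (k : ℕ), ((T0 f : lp (fun _ : ℕ => X) ⊤) : ℕ → X) k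
      = μ k ^ (-β) • sol f k := fun f k => rfl
  -- additivity of the solution operator
  have soladd : ∀ f g : Y, sol (f + g) = sol f + sol g := by
    intro f g
    refine (solU (f + g) (sol f + sol g) ?_ ?_ ?_).symm
    · exact Z.add_mem (solZ f) (solZ g)
    · obtain ⟨C, hC⟩ := solB f
      obtain ⟨D, hD⟩ := solB g
      refine ⟨C + D, fun k => ?_⟩
      calc μ k ^ (-β) * ‖(sol f + sol g) k‖
          ≤ μ k ^ (-β) * (‖sol f k‖ + ‖sol g k‖) :=
            mul_le_mul_of_nonneg_left (norm_add_le _ _) (hwi k).le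
        _ = μ k ^ (-β) * ‖sol f k‖ + μ k ^ (-β) * ‖sol g k‖ := mul_add _ _ _
        _ ≤ C + D := add_le_add (hC k) (hD k)
    · intro k
      have hf := solE f k
      have hg := solE g k
      have hco : (((f + g : Y) : lp (fun _ : ℕ => X) 1) : ℕ → X) (k + 1)
          = ((f : lp (fun _ : ℕ => X) 1) : ℕ → X) (k + 1)
            + ((g : lp (fun _ : ℕ => X) 1) : ℕ → X) (k + 1) := by
        simp [lp.coeFn_add]
      simp only [Pi.add_apply, map_add, hco, smul_add]
      rw [← hf, ← hg]
      abel
  have solsmul : ∀ (c : ℝ) (f : Y), sol (c • f) = c • sol f := by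
    intro c f
    refine (solU (c • f) (c • sol f) ?_ ?_ ?_).symm
    · exact Z.smul_mem c (solZ f)
    · obtain ⟨C, hC⟩ := solB f
      refine ⟨|c| * C, fun k => ?_⟩
      rw [Pi.smul_apply, norm_smul, Real.norm_eq_abs]
      calc μ k ^ (-β) * (|c| * ‖sol f k‖) = |c| * (μ k ^ (-β) * ‖sol f k‖) := by ring
        _ ≤ |c| * C := mul_le_mul_of_nonneg_left (hC k) (abs_nonneg c)
    · intro k
      have hf := solE f k
      have hco : (((c • f : Y) : lp (fun _ : ℕ => X) 1) : ℕ → X) (k + 1)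
          = c • ((f : lp (fun _ : ℕ => X) 1) : ℕ → X) (k + 1) := by
        simp [lp.coeFn_smul]
      simp only [Pi.smul_apply, map_smul, hco]
      rw [smul_comm, ← hf]
      simp [smul_sub]
  -- the solution operator as a linear map into ℓ∞
  let Tlin : Y →ₗ[ℝ] lp (fun _ : ℕ => X) ⊤ :=
    { toFun := T0
      map_add' := by
        intro f g
        apply lp.ext
        funext k
        simp only [T0apply, lp.coeFn_add, Pi.add_apply, soladd, smul_add]
      map_smul' := by
        intro c f
        apply lp.ext
        funext k
        simp only [T0apply, lp.coeFn_smul, Pi.smul_apply, solsmul, RingHom.id_apply]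
        rw [smul_comm] }
  have Tlinapply : ∀ (f : Y) (k : ℕ), ((Tlin f : lp (fun _ : ℕ => X) ⊤) : ℕ → X) k
      = μ k ^ (-β) • sol f k := fun f k => rfl
  clear_value T0 Tlin
  -- continuity via the closed graph theorem
  have Tcont : Continuous Tlin := by
    apply LinearMap.continuous_of_seq_closed_graph
    intro u f L hu hTL
    have hpt : ∀ k, Tendsto (fun j => sol (u j) k) atTop
        (𝓝 ((μ k ^ (-β))⁻¹ • (L : ℕ → X) k)) := by
      intro k
      have h1 := ev ⊤ ⟨le_top⟩ (fun j => Tlin (u j)) L k hTL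
      have h3 := h1.const_smul ((μ k ^ (-β))⁻¹)
      have h4 : (fun j => (μ k ^ (-β))⁻¹ •
            ((Tlin (u j) : lp (fun _ : ℕ => X) ⊤) : ℕ → X) k)
          = fun j => sol (u j) k := by
        funext j
        rw [Tlinapply, inv_smul_smul₀ (hwi k).ne']
      rwa [h4] at h3
    have huc : Tendsto (fun j => ((u j : Y) : lp (fun _ : ℕ => X) 1)) atTop
        (𝓝 ((f : Y) : lp (fun _ : ℕ => X) 1)) :=
      (continuous_subtype_val.tendsto f).comp hu
    have hptf : ∀ k, Tendsto (fun j => ((u j : lp (fun _ : ℕ => X) 1) : ℕ → X) k) atTop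
        (𝓝 (((f : lp (fun _ : ℕ => X) 1) : ℕ → X) k)) := fun k =>
      ev 1 ⟨le_refl 1⟩ (fun j => ((u j : Y) : lp (fun _ : ℕ => X) 1)) _ k huc
    set xh : ℕ → X := fun k => (μ k ^ (-β))⁻¹ • (L : ℕ → X) k with hxh
    have hxhZ : xh 0 ∈ Z := by
      have hmem : ∀ j, sol (u j) 0 ∈ (Z : Set X) := fun j => solZ (u j)
      exact hZ.mem_of_tendsto (hpt 0) (Filter.Eventually.of_forall hmem)
    have hxhB : ∃ C, ∀ k, μ k ^ (-β) * ‖xh k‖ ≤ C := by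
      refine ⟨‖L‖, fun k => ?_⟩
      have heq : μ k ^ (-β) * ‖xh k‖ = ‖(L : ℕ → X) k‖ := by
        rw [hxh]
        show μ k ^ (-β) * ‖(μ k ^ (-β))⁻¹ • (L : ℕ → X) k‖ = ‖(L : ℕ → X) k‖
        rw [norm_smul, norm_inv, Real.norm_eq_abs, abs_of_pos (hwi k), ← mul_assoc,
          mul_inv_cancel₀ (hwi k).ne', one_mul]
      rw [heq]
      exact lp.norm_apply_le_norm ENNReal.top_ne_zero L k
    have hxhE : ∀ k, xh (k + 1) - A k (xh k) =
        (μ (k + 1) ^ (-β) * ν (k + 1))⁻¹ •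
          ((f : lp (fun _ : ℕ => X) 1) : ℕ → X) (k + 1) := by
      intro k
      have hl : Tendsto (fun j => sol (u j) (k + 1) - A k (sol (u j) k)) atTop
          (𝓝 (xh (k + 1) - A k (xh k))) :=
        (hpt (k + 1)).sub (((A k).continuous.tendsto _).comp (hpt k))
      have hr : Tendsto (fun j => (μ (k + 1) ^ (-β) * ν (k + 1))⁻¹ •
            ((u j : lp (fun _ : ℕ => X) 1) : ℕ → X) (k + 1)) atTop
          (𝓝 ((μ (k + 1) ^ (-β) * ν (k + 1))⁻¹ •
            ((f : lp (fun _ : ℕ => X) 1) : ℕ → X) (k + 1))) :=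
        (hptf (k + 1)).const_smul _
      have heq : (fun j => sol (u j) (k + 1) - A k (sol (u j) k))
          = fun j => (μ (k + 1) ^ (-β) * ν (k + 1))⁻¹ •
            ((u j : lp (fun _ : ℕ => X) 1) : ℕ → X) (k + 1) :=
        funext fun j => solE (u j) k
      rw [heq] at hl
      exact tendsto_nhds_unique hl hr
    have hxsol : xh = sol f := solU f xh hxhZ hxhB hxhE
    apply lp.ext
    funext k
    rw [Tlinapply, ← hxsol, hxh]
    simp [smul_inv_smul₀ (hwi k).ne']
  obtain ⟨K, hKpos, hKb⟩ := SemilinearMapClass.bound_of_continuous Tlin Tcont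
  refine ⟨K, hKpos.le, ?_⟩
  intro x hx0 hrec m n hmn
  have hn0 : 0 < n := lt_of_le_of_lt (Nat.zero_le m) hmn
  -- the single-impulse datum
  set F : lp (fun _ : ℕ => X) 1 :=
    lp.single 1 n (-((μ n ^ (-β) * ν n) • x n)) with hF
  have hF0 : (F : ℕ → X) 0 = 0 := lp.single_apply_ne 1 n _ hn0.ne
  let fY : Y := ⟨F, (hYmem F).mpr hF0⟩
  -- the truncated trajectory solves the equation with datum F
  set xt : ℕ → X := fun k => if k < n then x k else 0 with hxt
  have hxtsol : xt = sol fY := by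
    refine solU fY xt ?_ ?_ ?_
    · simp only [hxt, if_pos hn0]
      exact hx0
    · refine ⟨∑ k ∈ Finset.range n, μ k ^ (-β) * ‖x k‖, fun k => ?_⟩
      by_cases hk : k < n
      · simp only [hxt, if_pos hk]
        exact Finset.single_le_sum (f := fun k => μ k ^ (-β) * ‖x k‖)
          (fun i _ => mul_nonneg (hwi i).le (norm_nonneg _)) (Finset.mem_range.2 hk)
      · simp only [hxt, if_neg hk, norm_zero, mul_zero]
        exact Finset.sum_nonneg fun i _ => mul_nonneg (hwi i).le (norm_nonneg _)
    · intro k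
      have hfYF : ((fY : lp (fun _ : ℕ => X) 1) : ℕ → X) = (F : ℕ → X) := rfl
      have hFap : ∀ j : ℕ, (F : ℕ → X) j = if j = n then -((μ n ^ (-β) * ν n) • x n) else 0 := by
        intro j
        by_cases hj : j = n
        · subst hj
          rw [hF, lp.single_apply_self, if_pos rfl]
        · rw [hF, lp.single_apply_ne 1 n _ hj, if_neg hj]
      by_cases hk1 : k + 1 = n
      · have hkn : k < n := hk1 ▸ Nat.lt_succ_self k
        have hnn : ¬ (k + 1 < n) := by omega
        simp only [hxt, hfYF, hFap, if_neg hnn, if_pos hkn, if_pos hk1, hk1]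
        rw [if_neg (lt_irrefl n), if_pos trivial, smul_neg,
          inv_smul_smul₀ (hw1 n).ne', ← hk1, ← hrec k]
        abel
      · by_cases hk2 : k + 1 < n
        · have hkn : k < n := by omega
          simp only [hxt, hfYF, hFap, if_pos hk2, if_pos hkn, if_neg hk1]
          rw [← hrec k]
          simp
        · have hkn : ¬ (k < n) := by omega
          simp only [hxt, hfYF, hFap, if_neg hk2, if_neg hkn, if_neg hk1]
          simp
  -- the norm estimate
  have hnormF : ‖fY‖ = μ n ^ (-β) * ν n * ‖x n‖ := by
    have h1 : ‖fY‖ = ‖F‖ := rfl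
    have h2 : ‖F‖ = ‖-((μ n ^ (-β) * ν n) • x n)‖ :=
      lp.norm_single (E := fun _ : ℕ => X) (by simp : (0:ℝ≥0∞) < 1)
        n (-((μ n ^ (-β) * ν n) • x n))
    rw [h1, h2, norm_neg, norm_smul, Real.norm_eq_abs, abs_of_pos (hw1 n)]
  have hTm : ((Tlin fY : lp (fun _ : ℕ => X) ⊤) : ℕ → X) m = μ m ^ (-β) • x m := by
    have := Tlinapply fY m
    rw [← hxtsol] at this
    simpa [hxt, if_pos hmn] using this
  have hb1 : μ m ^ (-β) * ‖x m‖ ≤ ‖Tlin fY‖ := by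
    have h := lp.norm_apply_le_norm ENNReal.top_ne_zero (Tlin fY) m
    rw [hTm, norm_smul, Real.norm_eq_abs, abs_of_pos (hwi m)] at h
    exact h
  have hb2 : ‖Tlin fY‖ ≤ K * ‖fY‖ := hKb fY
  calc μ m ^ (-β) * ‖x m‖ ≤ K * ‖fY‖ := hb1.trans hb2
    _ = K * (μ n ^ (-β) * ν n * ‖x n‖) := by rw [hnormF]

/-- Under the admissibility hypotheses, there exists `C̃ > 0` such that the
backward evolution on the unstable spaces `U(n) = 𝒜(n,0)Z` satisfies
`‖𝒜(m,n)v‖ ≤ C̃ (μ_n/μ_m)^{-β} ν_n ‖v‖` for `m ≤ n` and `v ∈ U(n)`; here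
`𝒜(m,n) : U(n) → U(m)` is the inverse of `𝒜(n,m)|_{U(m)}`, so the claim is
that `‖w‖ ≤ C̃ (μ_n/μ_m)^{-β} ν_n ‖v‖` whenever `w ∈ U(m)` and `𝒜(n,m)w = v`. -/
theorem stmt11 {X : Type*} [NormedAddCommGroup X] [NormedSpace ℝ X] [CompleteSpace X]
    (μ : ℕ → ℝ) (hμpos : ∀ n, 0 < μ n) (hμmono : StrictMono μ)
    (hμtop : Filter.Tendsto μ Filter.atTop Filter.atTop)
    (ν : ℕ → ℝ) (hν : ∀ n, 1 ≤ ν n)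
    (A : ℕ → X →L[ℝ] X) (𝒜 : ℕ → ℕ → X →L[ℝ] X)
    (h𝒜id : ∀ n, 𝒜 n n = 1)
    (h𝒜succ : ∀ m n, n ≤ m → 𝒜 (m + 1) n = (A m).comp (𝒜 m n))
    (Z : Submodule ℝ X) (hZ : IsClosed (Z : Set X))
    (β : ℝ) (hβ : 0 < β)
    (hadm₁ : ∀ y : ℕ → X, y 0 = 0 → Summable (fun n => μ n ^ β * ν n * ‖y n‖) →
      ∃! x : ℕ → X, x 0 ∈ Z ∧ (∃ C, ∀ n, μ n ^ β * ‖x n‖ ≤ C) ∧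
        ∀ n, x (n + 1) - A n (x n) = y (n + 1))
    (hadm₂ : ∀ y : ℕ → X, y 0 = 0 → Summable (fun n => μ n ^ (-β) * ν n * ‖y n‖) →
      ∃! x : ℕ → X, x 0 ∈ Z ∧ (∃ C, ∀ n, μ n ^ (-β) * ‖x n‖ ≤ C) ∧
        ∀ n, x (n + 1) - A n (x n) = y (n + 1))
    (U : ℕ → Set X) (hUdef : ∀ n, U n = (𝒜 n 0) '' (Z : Set X)) :
    ∃ C > (0 : ℝ), ∀ n m, m ≤ n → ∀ v ∈ U n, ∀ w ∈ U m,
      𝒜 n m w = v → ‖w‖ ≤ C * (μ n / μ m) ^ (-β) * ν n * ‖v‖ := by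
  obtain ⟨K, hK0, hK⟩ := stmt11_aux μ hμpos ν hν A Z hZ β hadm₂
  refine ⟨K + 1, by positivity, ?_⟩
  intro n m hmn v hv w hw heq
  rw [hUdef m] at hw
  obtain ⟨z, hzZ, hzw⟩ := hw
  set x : ℕ → X := fun k => 𝒜 k 0 z with hx
  have hrec : ∀ k, x (k + 1) = A k (x k) := by
    intro k
    simp only [hx, h𝒜succ k 0 (Nat.zero_le k), ContinuousLinearMap.comp_apply]
  have hxm : x m = w := hzw
  have hco : ∀ d, 𝒜 (m + d) m w = x (m + d) := by
    intro d
    induction d with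
    | zero => simpa [h𝒜id] using hxm.symm
    | succ d ih =>
      have : 𝒜 (m + d + 1) m = (A (m + d)).comp (𝒜 (m + d) m) :=
        h𝒜succ (m + d) m (Nat.le_add_right m d)
      rw [show m + (d + 1) = m + d + 1 from rfl, this, ContinuousLinearMap.comp_apply, ih,
        hrec (m + d)]
  have hxn : x n = v := by
    have h := hco (n - m)
    rw [Nat.add_sub_cancel' hmn, heq] at h
    exact h.symm
  have hdiv : (μ n / μ m) ^ (-β) = μ n ^ (-β) * μ m ^ β := by
    rw [Real.div_rpow (hμpos n).le (hμpos m).le, Real.rpow_neg (hμpos m).le β,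
      div_eq_mul_inv, inv_inv]
  have hx0 : x 0 ∈ Z := by simpa [hx, h𝒜id 0] using hzZ
  rcases eq_or_lt_of_le hmn with rfl | hlt
  · -- m = n case
    have hvw : w = v := by rw [← heq, h𝒜id]; rfl
    subst hvw
    have h1 : (μ m / μ m) ^ (-β) = 1 := by
      rw [div_self (hμpos m).ne', Real.one_rpow]
    rw [h1]
    have h3 : (1:ℝ) ≤ (K + 1) * ν m := by nlinarith [hν m]
    have h4 := mul_le_mul_of_nonneg_right h3 (norm_nonneg w)
    calc ‖w‖ = 1 * ‖w‖ := (one_mul _).symm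
      _ ≤ (K + 1) * ν m * ‖w‖ := h4
      _ = (K + 1) * 1 * ν m * ‖w‖ := by ring
  · -- m < n case
    have hb := hK x hx0 hrec m n hlt
    rw [hxm, hxn] at hb
    have hwim : 0 < μ m ^ (-β) := Real.rpow_pos_of_pos (hμpos m) _
    have hmb : (μ m ^ (-β))⁻¹ = μ m ^ β := by
      rw [Real.rpow_neg (hμpos m).le, inv_inv]
    have h2 : ‖w‖ ≤ (μ m ^ (-β))⁻¹ * (K * (μ n ^ (-β) * ν n * ‖v‖)) := by
      rw [le_inv_mul_iff₀ hwim]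
      exact hb
    calc ‖w‖ ≤ (μ m ^ (-β))⁻¹ * (K * (μ n ^ (-β) * ν n * ‖v‖)) := h2
      _ = K * (μ n / μ m) ^ (-β) * ν n * ‖v‖ := by rw [hdiv, hmb]; ring
      _ ≤ (K + 1) * (μ n / μ m) ^ (-β) * ν n * ‖v‖ := by
          have hpos : (0:ℝ) ≤ (μ n / μ m) ^ (-β) * ν n * ‖v‖ :=
            mul_nonneg (mul_nonneg (Real.rpow_nonneg
              (div_nonneg (hμpos n).le (hμpos m).le) _)
              (zero_le_one.trans (hν n))) (norm_nonneg v)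
          nlinarith [hpos]
end

section
/- If for each y ∈ ℓ^1_{β,0} there exists a unique x ∈ ℓ^∞_{β,Z} solving x_{n+1} − A_n x_n = y_{n+1} and for each y ∈ ℓ^1_{-β,0} there exists a unique x ∈ ℓ^∞_{-β,Z} solving the same equation (for some closed subspace Z ⊂ X and some β > 0), then (A_n)_{n∈ℕ} admits a (μ,ν)-dichotomy, with exponent λ = β. -/
set_option linter.unusedSectionVars false
set_option linter.unusedVariables false
open Filter Topology
open scoped ENNReal


section Aux

variable {X : Type*} [NormedAddCommGroup X] [NormedSpace ℝ X] [CompleteSpace X]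

/-- The admissibility property. -/
def Adm (u ν : ℕ → ℝ) (A : ℕ → X →L[ℝ] X) (Z : Submodule ℝ X) : Prop :=
  ∀ y : ℕ → X, y 0 = 0 → Summable (fun n => u n * ν n * ‖y n‖) →
    ∃! x : ℕ → X, x 0 ∈ Z ∧ (∃ C, ∀ n, u n * ‖x n‖ ≤ C) ∧
      ∀ n, x (n + 1) - A n (x n) = y (n + 1)

set_option maxHeartbeats 1000000 in
theorem solBound (u ν : ℕ → ℝ) (hu : ∀ n, 0 < u n) (hν : ∀ n, 0 < ν n)
    (A : ℕ → X →L[ℝ] X) (Z : Submodule ℝ X) (hZ : IsClosed (Z : Set X))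
    (hadm : Adm u ν A Z) :
    ∃ C : ℝ, 0 < C ∧ ∀ y : ℕ → X, y 0 = 0 → ∀ S : ℝ,
      HasSum (fun n => u n * ν n * ‖y n‖) S →
      ∀ x : ℕ → X, x 0 ∈ Z → (∃ C', ∀ n, u n * ‖x n‖ ≤ C') →
      (∀ n, x (n + 1) - A n (x n) = y (n + 1)) → ∀ k, u k * ‖x k‖ ≤ C * S := by
  classical
  have huν : ∀ n, u n * ν n ≠ 0 := fun n => (mul_pos (hu n) (hν n)).ne'
  -- the function `y` associated to an ℓ¹ element
  set yf : lp (fun _ : ℕ => X) 1 → ℕ → X :=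
    fun f n => if n = 0 then 0 else (u n * ν n)⁻¹ • f n with hyfdef
  have hyf0 : ∀ f, yf f 0 = 0 := fun f => by simp [hyfdef]
  have hfnorm : ∀ f : lp (fun _ : ℕ => X) 1, Summable fun n => ‖f n‖ := by
    intro f
    have := Memℓp.summable (by norm_num) (lp.memℓp f)
    simpa using this
  have hyfsum : ∀ f, Summable (fun n => u n * ν n * ‖yf f n‖) := by
    intro f
    refine Summable.of_nonneg_of_le (fun n => mul_nonneg (mul_pos (hu n) (hν n)).le (norm_nonneg _)) (fun n => ?_) (hfnorm f)
    by_cases hn : n = 0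
    · simp [hyfdef, hn]
    · simp only [hyfdef, if_neg hn, norm_smul, norm_inv, Real.norm_eq_abs,
        abs_of_pos (mul_pos (hu n) (hν n))]
      rw [← mul_assoc, mul_inv_cancel₀ (huν n), one_mul]
  -- the solution associated to an ℓ¹ element
  set sol : lp (fun _ : ℕ => X) 1 → ℕ → X :=
    fun f => (hadm (yf f) (hyf0 f) (hyfsum f)).exists.choose with hsoldef
  have hsol : ∀ f, (sol f) 0 ∈ Z ∧ (∃ C, ∀ n, u n * ‖sol f n‖ ≤ C) ∧
      ∀ n, sol f (n + 1) - A n (sol f n) = yf f (n + 1) :=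
    fun f => (hadm (yf f) (hyf0 f) (hyfsum f)).exists.choose_spec
  have huniq : ∀ f x, x 0 ∈ Z → (∃ C, ∀ n, u n * ‖x n‖ ≤ C) →
      (∀ n, x (n + 1) - A n (x n) = yf f (n + 1)) → x = sol f := by
    intro f x h1 h2 h3
    exact (hadm (yf f) (hyf0 f) (hyfsum f)).unique ⟨h1, h2, h3⟩ (hsol f)
  -- the weighted solution is in ℓ^∞
  have hmem : ∀ f, Memℓp (fun n => u n • sol f n) (∞ : ℝ≥0∞) := by
    intro f
    obtain ⟨C, hC⟩ := (hsol f).2.1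
    refine memℓp_infty ⟨C, ?_⟩
    rintro - ⟨n, rfl⟩
    simpa [norm_smul, abs_of_pos (hu n)] using hC n
  set Gf : lp (fun _ : ℕ => X) 1 → lp (fun _ : ℕ => X) ∞ :=
    fun f => ⟨fun n => u n • sol f n, hmem f⟩ with hGfdef
  have hGfapp : ∀ f n, (Gf f : ∀ _ : ℕ, X) n = u n • sol f n := fun f n => rfl
  -- coordinate evaluation is continuous
  have hcoord : ∀ (p : ℝ≥0∞), p ≠ 0 → ∀ [Fact (1 ≤ p)] (seq : ℕ → lp (fun _ : ℕ => X) p)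
      (f : lp (fun _ : ℕ => X) p), Tendsto seq atTop (𝓝 f) →
      ∀ n, Tendsto (fun j => (seq j : ∀ _ : ℕ, X) n) atTop (𝓝 ((f : ∀ _ : ℕ, X) n)) := by
    intro p hp _ seq f hseq n
    rw [tendsto_iff_norm_sub_tendsto_zero]
    have h1 : Tendsto (fun j => ‖seq j - f‖) atTop (𝓝 0) := by
      rw [← tendsto_iff_norm_sub_tendsto_zero]; exact hseq
    refine squeeze_zero (fun j => norm_nonneg _) (fun j => ?_) h1
    have := lp.norm_apply_le_norm hp (seq j - f) n
    simpa [lp.coeFn_sub] using this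
  -- linearity of the solution operator
  have hadd : ∀ f g, sol (f + g) = sol f + sol g := by
    intro f g
    symm
    obtain ⟨C1, hC1⟩ := (hsol f).2.1
    obtain ⟨C2, hC2⟩ := (hsol g).2.1
    refine huniq (f + g) _ (Z.add_mem (hsol f).1 (hsol g).1) ⟨C1 + C2, fun n => ?_⟩
      (fun n => ?_)
    · have := add_le_add (hC1 n) (hC2 n)
      refine le_trans ?_ this
      rw [← mul_add]
      exact mul_le_mul_of_nonneg_left (norm_add_le _ _) (hu n).le
    · have e1 := (hsol f).2.2 n
      have e2 := (hsol g).2.2 n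
      have : yf (f + g) (n + 1) = yf f (n + 1) + yf g (n + 1) := by
        simp [hyfdef, lp.coeFn_add, smul_add]
      rw [this, ← e1, ← e2]
      simp only [Pi.add_apply, map_add]
      abel
  have hsmul : ∀ (c : ℝ) f, sol (c • f) = c • sol f := by
    intro c f
    symm
    obtain ⟨C1, hC1⟩ := (hsol f).2.1
    refine huniq (c • f) _ (Z.smul_mem c (hsol f).1) ⟨|c| * C1, fun n => ?_⟩ (fun n => ?_)
    · simp only [Pi.smul_apply, norm_smul, Real.norm_eq_abs]
      calc u n * (|c| * ‖sol f n‖) = |c| * (u n * ‖sol f n‖) := by ring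
        _ ≤ |c| * C1 := mul_le_mul_of_nonneg_left (hC1 n) (abs_nonneg c)
    · have e1 := (hsol f).2.2 n
      have : yf (c • f) (n + 1) = c • yf f (n + 1) := by
        simp only [hyfdef, lp.coeFn_smul, Pi.smul_apply, if_neg (Nat.succ_ne_zero n)]
        rw [smul_comm]
      rw [this, ← e1]
      simp only [Pi.smul_apply, map_smul, smul_sub]
  have hGadd : ∀ f g, Gf (f + g) = Gf f + Gf g := by
    intro f g
    apply lp.ext
    funext n
    simp only [hGfdef, lp.coeFn_add, Pi.add_apply, hadd, smul_add]
  have hGsmul : ∀ (c : ℝ) f, Gf (c • f) = c • Gf f := by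
    intro c f
    apply lp.ext
    funext n
    simp only [hGfdef, lp.coeFn_smul, Pi.smul_apply, hsmul]
    rw [smul_comm]
  set Glin : lp (fun _ : ℕ => X) 1 →ₗ[ℝ] lp (fun _ : ℕ => X) ∞ :=
    { toFun := Gf, map_add' := hGadd, map_smul' := hGsmul } with hGlindef
  have hsol_eq : ∀ f n, sol f n = (u n)⁻¹ • (Glin f : ∀ _ : ℕ, X) n := by
    intro f n
    rw [show (Glin f : ∀ _ : ℕ, X) n = u n • sol f n from rfl, smul_smul,
      inv_mul_cancel₀ (hu n).ne', one_smul]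
  -- closed graph
  have hcont : Continuous Glin := by
    apply Glin.continuous_of_seq_closed_graph
    intro seq f g hseq hGseq
    -- coordinatewise limits
    have hxco : ∀ n, Tendsto (fun j => sol (seq j) n) atTop
        (𝓝 ((u n)⁻¹ • (g : ∀ _ : ℕ, X) n)) := by
      intro n
      have := hcoord ∞ (by simp) (fun j => Glin (seq j)) g hGseq n
      have h2 : Tendsto (fun j => (u n)⁻¹ • (Glin (seq j) : ∀ _ : ℕ, X) n) atTop
          (𝓝 ((u n)⁻¹ • (g : ∀ _ : ℕ, X) n)) := this.const_smul _
      simpa only [← hsol_eq] using h2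
    set x : ℕ → X := fun n => (u n)⁻¹ • (g : ∀ _ : ℕ, X) n with hxdef
    have hx : x = sol f := by
      refine huniq f x ?_ ⟨‖g‖, fun n => ?_⟩ (fun n => ?_)
      · refine hZ.mem_of_tendsto (hxco 0) (Filter.Eventually.of_forall fun j => ?_)
        exact (hsol (seq j)).1
      · have : u n * ‖x n‖ = ‖(g : ∀ _ : ℕ, X) n‖ := by
          simp only [hxdef, norm_smul, norm_inv, Real.norm_eq_abs, abs_of_pos (hu n)]
          rw [← mul_assoc, mul_inv_cancel₀ (hu n).ne', one_mul]
        rw [this]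
        exact lp.norm_apply_le_norm (by simp) g n
      · have hlim1 : Tendsto (fun j => sol (seq j) (n + 1) - A n (sol (seq j) n)) atTop
            (𝓝 (x (n + 1) - A n (x n))) :=
          ((hxco (n + 1)).sub (((A n).continuous.tendsto _).comp (hxco n)))
        have hlim2 : Tendsto (fun j => yf (seq j) (n + 1)) atTop (𝓝 (yf f (n + 1))) := by
          simp only [hyfdef, if_neg (Nat.succ_ne_zero n)]
          exact (hcoord 1 (by simp) seq f hseq (n + 1)).const_smul _
        have heq : (fun j => sol (seq j) (n + 1) - A n (sol (seq j) n))
            = fun j => yf (seq j) (n + 1) := funext fun j => (hsol (seq j)).2.2 n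
        rw [heq] at hlim1
        exact tendsto_nhds_unique hlim1 hlim2
    apply lp.ext
    funext n
    have : (Glin f : ∀ _ : ℕ, X) n = u n • sol f n := rfl
    rw [this, ← hx, hxdef, smul_smul, mul_inv_cancel₀ (hu n).ne', one_smul]
  set G : lp (fun _ : ℕ => X) 1 →L[ℝ] lp (fun _ : ℕ => X) ∞ := ⟨Glin, hcont⟩ with hGdef
  refine ⟨‖G‖ + 1, by positivity, ?_⟩
  intro y hy0 S hS x hx0 hxb hxrec k
  have hSnn : 0 ≤ S :=
    hasSum_le (fun n => mul_nonneg (mul_pos (hu n) (hν n)).le (norm_nonneg _)) hasSum_zero hS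
  have hfsum : Summable fun n => ‖(u n * ν n) • y n‖ ^ (1 : ℝ≥0∞).toReal := by
    simp only [ENNReal.toReal_one, Real.rpow_one]
    refine hS.summable.congr fun n => ?_
    rw [norm_smul, Real.norm_eq_abs, abs_of_pos (mul_pos (hu n) (hν n))]
  set f : lp (fun _ : ℕ => X) 1 := ⟨fun n => (u n * ν n) • y n, memℓp_gen hfsum⟩ with hfdef
  have hyff : yf f = y := by
    funext n
    by_cases hn : n = 0
    · simp [hyfdef, hn, hy0]
    · show (if n = 0 then 0 else (u n * ν n)⁻¹ • (u n * ν n) • y n) = y n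
      rw [if_neg hn, smul_smul, inv_mul_cancel₀ (huν n), one_smul]
  have hxs : x = sol f := huniq f x hx0 hxb (by rw [hyff]; exact hxrec)
  have h1 : u k * ‖x k‖ = ‖(G f : ∀ _ : ℕ, X) k‖ := by
    have : (G f : ∀ _ : ℕ, X) k = u k • sol f k := rfl
    rw [this, ← hxs, norm_smul, Real.norm_eq_abs, abs_of_pos (hu k)]
  have h2 : ‖(G f : ∀ _ : ℕ, X) k‖ ≤ ‖G f‖ := lp.norm_apply_le_norm (by simp) (G f) k
  have h3 : ‖G f‖ ≤ ‖G‖ * ‖f‖ := G.le_opNorm f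
  have h4 : ‖f‖ = S := by
    rw [lp.norm_eq_tsum_rpow (by norm_num) f]
    simp only [ENNReal.toReal_one, Real.rpow_one]
    have : (fun n => ‖(f : ∀ _ : ℕ, X) n‖) = fun n => u n * ν n * ‖y n‖ := by
      funext n
      show ‖(u n * ν n) • y n‖ = _
      rw [norm_smul, Real.norm_eq_abs, abs_of_pos (mul_pos (hu n) (hν n))]
    rw [this, hS.tsum_eq]
    norm_num
  calc u k * ‖x k‖ ≤ ‖G‖ * ‖f‖ := by rw [h1] at *; exact h2.trans h3
    _ = ‖G‖ * S := by rw [h4]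
    _ ≤ (‖G‖ + 1) * S := by nlinarith [norm_nonneg G]

end Aux


section Machinery

variable {X : Type*} [NormedAddCommGroup X] [NormedSpace ℝ X] [CompleteSpace X]

/-- sequence supported at a single site `n+1` -/
def dd (X : Type*) [NormedAddCommGroup X] (n : ℕ) (w : X) : ℕ → X :=
  fun k => if k = n + 1 then w else 0

lemma dd_zero (n : ℕ) (w : X) : dd X n w 0 = 0 := by simp [dd]

lemma dd_self (n : ℕ) (w : X) : dd X n w (n + 1) = w := by simp [dd]

lemma dd_ne (n : ℕ) (w : X) {k : ℕ} (hk : k ≠ n + 1) : dd X n w k = 0 := by simp [dd, hk]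

lemma dd_hasSum (u ν : ℕ → ℝ) (n : ℕ) (w : X) :
    HasSum (fun k => u k * ν k * ‖dd X n w k‖) (u (n+1) * ν (n+1) * ‖w‖) := by
  have h : (fun k => u k * ν k * ‖dd X n w k‖)
      = fun k => if k = n + 1 then u (n+1) * ν (n+1) * ‖w‖ else 0 := by
    funext k
    by_cases hk : k = n + 1
    · subst hk; rw [dd_self, if_pos rfl]
    · rw [dd_ne _ _ hk, if_neg hk, norm_zero, mul_zero]
  rw [h]
  exact hasSum_ite_eq (n + 1) _

variable {u ν : ℕ → ℝ} {A : ℕ → X →L[ℝ] X} {Z : Submodule ℝ X}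

/-- the distinguished solution for the single-site inhomogeneity at `n+1` -/
noncomputable def xsol (h : Adm u ν A Z) (n : ℕ) (w : X) : ℕ → X :=
  (h (dd X n w) (dd_zero n w) (dd_hasSum u ν n w).summable).exists.choose

lemma xsol_spec (h : Adm u ν A Z) (n : ℕ) (w : X) :
    xsol h n w 0 ∈ Z ∧ (∃ C, ∀ k, u k * ‖xsol h n w k‖ ≤ C) ∧
      ∀ k, xsol h n w (k + 1) - A k (xsol h n w k) = dd X n w (k + 1) :=
  (h (dd X n w) (dd_zero n w) (dd_hasSum u ν n w).summable).exists.choose_spec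

lemma xsol_unique (h : Adm u ν A Z) (n : ℕ) (w : X) {x : ℕ → X}
    (h1 : x 0 ∈ Z) (h2 : ∃ C, ∀ k, u k * ‖x k‖ ≤ C)
    (h3 : ∀ k, x (k + 1) - A k (x k) = dd X n w (k + 1)) : x = xsol h n w :=
  (h (dd X n w) (dd_zero n w) (dd_hasSum u ν n w).summable).unique
    ⟨h1, h2, h3⟩ (xsol_spec h n w)

lemma xsol_mem (h : Adm u ν A Z) (n : ℕ) (w : X) : xsol h n w 0 ∈ Z := (xsol_spec h n w).1

lemma xsol_bdd (h : Adm u ν A Z) (n : ℕ) (w : X) :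
    ∃ C, ∀ k, u k * ‖xsol h n w k‖ ≤ C := (xsol_spec h n w).2.1

lemma xsol_step (h : Adm u ν A Z) (n : ℕ) (w : X) {k : ℕ} (hk : k + 1 ≠ n + 1) :
    xsol h n w (k + 1) = A k (xsol h n w k) := by
  have := (xsol_spec h n w).2.2 k
  rw [dd_ne _ _ hk, sub_eq_zero] at this
  exact this

lemma xsol_jump (h : Adm u ν A Z) (n : ℕ) (w : X) :
    xsol h n w (n + 1) = A n (xsol h n w n) + w := by
  have := (xsol_spec h n w).2.2 n
  rw [dd_self, sub_eq_iff_eq_add'] at this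
  rw [this]

lemma xsol_add (hu : ∀ k, 0 < u k) (h : Adm u ν A Z) (n : ℕ) (w w' : X) :
    xsol h n (w + w') = xsol h n w + xsol h n w' := by
  symm
  obtain ⟨C1, hC1⟩ := xsol_bdd h n w
  obtain ⟨C2, hC2⟩ := xsol_bdd h n w'
  refine xsol_unique h n (w + w') (Z.add_mem (xsol_mem h n w) (xsol_mem h n w'))
    ⟨C1 + C2, fun k => ?_⟩ (fun k => ?_)
  · calc u k * ‖xsol h n w k + xsol h n w' k‖
        ≤ u k * (‖xsol h n w k‖ + ‖xsol h n w' k‖) :=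
          mul_le_mul_of_nonneg_left (norm_add_le _ _) (hu k).le
      _ = u k * ‖xsol h n w k‖ + u k * ‖xsol h n w' k‖ := by ring
      _ ≤ C1 + C2 := add_le_add (hC1 k) (hC2 k)
  · have e1 := (xsol_spec h n w).2.2 k
    have e2 := (xsol_spec h n w').2.2 k
    have hdd : dd X n (w + w') (k + 1) = dd X n w (k + 1) + dd X n w' (k + 1) := by
      by_cases hk : k + 1 = n + 1
      · rw [hk, dd_self, dd_self, dd_self]
      · rw [dd_ne _ _ hk, dd_ne _ _ hk, dd_ne _ _ hk, add_zero]
    rw [hdd, ← e1, ← e2]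
    simp only [Pi.add_apply, map_add]
    abel

lemma xsol_smul (h : Adm u ν A Z) (n : ℕ) (c : ℝ) (w : X) :
    xsol h n (c • w) = c • xsol h n w := by
  symm
  obtain ⟨C1, hC1⟩ := xsol_bdd h n w
  refine xsol_unique h n (c • w) (Z.smul_mem c (xsol_mem h n w))
    ⟨|c| * C1 + |c| * |C1|, fun k => ?_⟩ (fun k => ?_)
  · simp only [Pi.smul_apply, norm_smul, Real.norm_eq_abs]
    have := hC1 k
    nlinarith [abs_nonneg c, abs_nonneg C1, le_abs_self C1]
  · have e1 := (xsol_spec h n w).2.2 k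
    have : dd X n (c • w) (k + 1) = c • dd X n w (k + 1) := by
      by_cases hk : k + 1 = n + 1
      · rw [hk, dd_self, dd_self]
      · rw [dd_ne _ _ hk, dd_ne _ _ hk, smul_zero]
    rw [this, ← e1]
    simp only [Pi.smul_apply, map_smul, smul_sub]

lemma xsol_zero (hu : ∀ k, 0 < u k) (h : Adm u ν A Z) (n : ℕ) : xsol h n (0 : X) = 0 := by
  have := xsol_smul h n 0 0
  simpa using this

/-- boundedness of finitely supported sequences -/
lemma bdd_fin (u : ℕ → ℝ) (zz : ℕ → X) (m : ℕ) (hz : ∀ k, m ≤ k → zz k = 0) :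
    ∃ C, ∀ k, u k * ‖zz k‖ ≤ C := by
  refine ⟨(Finset.range (m + 1)).sup' ⟨m, Finset.self_mem_range_succ m⟩
    (fun k => u k * ‖zz k‖), fun k => ?_⟩
  rcases lt_or_ge k m with hk | hk
  · exact Finset.le_sup' (fun k => u k * ‖zz k‖) (Finset.mem_range.2 (by omega))
  · rw [hz k hk, norm_zero, mul_zero]
    have := Finset.le_sup' (fun k => u k * ‖zz k‖) (Finset.self_mem_range_succ m)
    rw [hz m le_rfl, norm_zero, mul_zero] at this
    exact this


/-- the shifted solution -/
lemma xsol_shift (hu : ∀ k, 0 < u k) (h : Adm u ν A Z) (n : ℕ) (v : X) :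
    xsol h (n + 1) (A (n + 1) v)
      = fun k => if k = n + 1 then xsol h n v (n + 1) - v else xsol h n v k := by
  symm
  obtain ⟨C, hC⟩ := xsol_bdd h n v
  refine xsol_unique h (n + 1) (A (n + 1) v) ?_ ⟨C + u (n + 1) * ‖v‖, fun k => ?_⟩
    (fun k => ?_)
  · show (if (0:ℕ) = n + 1 then xsol h n v (n + 1) - v else xsol h n v 0) ∈ Z
    rw [if_neg (Nat.zero_ne_add_one n)]
    exact xsol_mem h n v
  · by_cases hk : k = n + 1
    · subst hk
      rw [if_pos rfl]
      calc u (n+1) * ‖xsol h n v (n + 1) - v‖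
          ≤ u (n+1) * (‖xsol h n v (n + 1)‖ + ‖v‖) :=
            mul_le_mul_of_nonneg_left (norm_sub_le _ _) (hu _).le
        _ = u (n+1) * ‖xsol h n v (n + 1)‖ + u (n+1) * ‖v‖ := by ring
        _ ≤ C + u (n + 1) * ‖v‖ := by have := hC (n+1); linarith
    · rw [if_neg hk]
      have h1 := hC k
      have h2 : 0 ≤ u (n + 1) * ‖v‖ := mul_nonneg (hu _).le (norm_nonneg _)
      linarith
  · rcases Nat.lt_trichotomy k n with hk | hk | hk
    · -- k + 1 ≤ n : everything below the jump
      have e1 : k + 1 ≠ n + 1 := by omega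
      have e2 : k ≠ n + 1 := by omega
      rw [if_neg e1, if_neg e2, dd_ne _ _ (by omega), xsol_step h n v (by omega),
        sub_self]
    · -- k = n
      subst hk
      have e2 : k ≠ k + 1 := by omega
      rw [if_pos rfl, if_neg e2, dd_ne _ _ (by omega), xsol_jump h k v]
      abel
    · -- k ≥ n + 1
      have e2 : k ≠ n + 1 ∨ k = n + 1 := by omega
      by_cases hk1 : k = n + 1
      · subst hk1
        rw [if_pos rfl, if_neg (by omega : n + 1 + 1 ≠ n + 1), dd_self,
          xsol_step h n v (by omega), map_sub]
        abel
      · rw [if_neg hk1, if_neg (by omega : k + 1 ≠ n + 1),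
          dd_ne _ _ (by omega : k + 1 ≠ n + 1 + 1), xsol_step h n v (by omega), sub_self]

section WithEvolution

variable {𝒜 : ℕ → ℕ → X →L[ℝ] X}

lemma xsol_orbit (h : Adm u ν A Z)
    (h𝒜id : ∀ n, 𝒜 n n = 1) (h𝒜succ : ∀ m n, n ≤ m → 𝒜 (m + 1) n = (A m).comp (𝒜 m n))
    (n : ℕ) (w : X) : ∀ k, n + 1 ≤ k → 𝒜 k (n + 1) (xsol h n w (n + 1)) = xsol h n w k := by
  intro k hk
  induction k, hk using Nat.le_induction with
  | base => rw [h𝒜id]; rfl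
  | succ k hk ih =>
    rw [h𝒜succ k (n + 1) hk, ContinuousLinearMap.comp_apply, ih,
      xsol_step h n w (by omega)]

lemma xsol_orbit0 (h : Adm u ν A Z)
    (h𝒜id : ∀ n, 𝒜 n n = 1) (h𝒜succ : ∀ m n, n ≤ m → 𝒜 (m + 1) n = (A m).comp (𝒜 m n))
    (v : X) : ∀ k, 1 ≤ k →
      𝒜 k 0 (xsol h 0 (A 0 v) 0 + v) = xsol h 0 (A 0 v) k := by
  intro k hk
  induction k, hk using Nat.le_induction with
  | base =>
    rw [h𝒜succ 0 0 le_rfl, ContinuousLinearMap.comp_apply, h𝒜id,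
      ContinuousLinearMap.one_apply, map_add, ← xsol_jump h 0 (A 0 v)]
  | succ k hk ih =>
    rw [h𝒜succ k 0 (by omega), ContinuousLinearMap.comp_apply, ih,
      xsol_step h 0 (A 0 v) (by omega)]

end WithEvolution

/-- the projection function -/
noncomputable def Pfun (h : Adm u ν A Z) : ℕ → X → X
  | 0, v => xsol h 0 (A 0 v) 0 + v
  | (m+1), v => xsol h m v (m+1)

lemma Pfun_zero (h : Adm u ν A Z) (v : X) :
    Pfun h 0 v = xsol h 0 (A 0 v) 0 + v := rfl

lemma Pfun_succ (h : Adm u ν A Z) (m : ℕ) (v : X) :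
    Pfun h (m + 1) v = xsol h m v (m + 1) := rfl

lemma Pfun_add (hu : ∀ k, 0 < u k) (h : Adm u ν A Z) (n : ℕ) (v v' : X) :
    Pfun h n (v + v') = Pfun h n v + Pfun h n v' := by
  cases n with
  | zero =>
    rw [Pfun_zero, Pfun_zero, Pfun_zero, map_add, xsol_add hu h]
    show _ = _
    simp only [Pi.add_apply]
    abel
  | succ m => rw [Pfun_succ, Pfun_succ, Pfun_succ, xsol_add hu h]; rfl

lemma Pfun_smul (h : Adm u ν A Z) (n : ℕ) (c : ℝ) (v : X) :
    Pfun h n (c • v) = c • Pfun h n v := by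
  cases n with
  | zero =>
    rw [Pfun_zero, Pfun_zero, map_smul, xsol_smul h]
    simp only [Pi.smul_apply, smul_add]
  | succ m => rw [Pfun_succ, Pfun_succ, xsol_smul h]; rfl

lemma Pfun_ker (h : Adm u ν A Z) (m : ℕ) (ξ : ℕ → X)
    (h0 : ξ 0 ∈ Z) (hrec : ∀ k, k < m → ξ (k + 1) = A k (ξ k)) :
    Pfun h m (ξ m) = 0 := by
  cases m with
  | zero =>
    -- candidate : -ξ 0 at 0, 0 afterwards
    have hz : xsol h 0 (A 0 (ξ 0)) = fun k => if k = 0 then -ξ 0 else 0 := by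
      symm
      refine xsol_unique h 0 (A 0 (ξ 0)) ?_ ?_ (fun k => ?_)
      · rw [if_pos rfl]; exact Z.neg_mem h0
      · exact bdd_fin u _ 1 (fun k hk => by rw [if_neg (by omega)])
      · cases k with
        | zero =>
          rw [if_neg (by omega : (1:ℕ) ≠ 0), if_pos rfl, dd_self, map_neg]
          abel
        | succ k =>
          rw [if_neg (by omega : k + 1 + 1 ≠ 0), if_neg (by omega : k + 1 ≠ 0),
            dd_ne _ _ (by omega), map_zero, sub_zero]
    rw [Pfun_zero, hz]
    simp
  | succ m =>
    have hz : xsol h m (ξ (m + 1)) = fun k => if k ≤ m then -ξ k else 0 := by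
      symm
      refine xsol_unique h m (ξ (m + 1)) ?_ ?_ (fun k => ?_)
      · rw [if_pos (Nat.zero_le m)]; exact Z.neg_mem h0
      · exact bdd_fin u _ (m + 1) (fun k hk => by rw [if_neg (by omega)])
      · rcases Nat.lt_trichotomy k m with hk | hk | hk
        · rw [if_pos (by omega : k + 1 ≤ m), if_pos (by omega : k ≤ m),
            dd_ne _ _ (by omega), hrec k (by omega), map_neg]
          abel
        · subst hk
          rw [if_neg (by omega : ¬ k + 1 ≤ k), if_pos le_rfl, dd_self, map_neg,
            hrec k (by omega)]
          abel
        · rw [if_neg (by omega : ¬ k + 1 ≤ m), if_neg (by omega : ¬ k ≤ m),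
            dd_ne _ _ (by omega), map_zero, sub_zero]
    rw [Pfun_succ, hz]
    simp

lemma Pfun_comm (hu : ∀ k, 0 < u k) (h : Adm u ν A Z) (n : ℕ) (v : X) :
    A n (Pfun h n v) = Pfun h (n + 1) (A n v) := by
  cases n with
  | zero =>
    rw [Pfun_zero, Pfun_succ, map_add, ← xsol_jump h 0 (A 0 v)]
  | succ m =>
    rw [Pfun_succ, Pfun_succ, xsol_shift hu h m v]
    have hne : m + 1 + 1 ≠ m + 1 := by omega
    simp only [if_neg hne]
    exact (xsol_step h m v (by omega : m + 1 + 1 ≠ m + 1)).symm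

lemma Pfun_key (hu : ∀ k, 0 < u k) (h : Adm u ν A Z) (n : ℕ) (v : X) :
    -(xsol h n (A n v) n) = v - Pfun h n v := by
  cases n with
  | zero => rw [Pfun_zero]; abel
  | succ m =>
    rw [xsol_shift hu h m v, Pfun_succ]
    simp only [if_pos (rfl : m + 1 = m + 1)]
    show -(xsol h m v (m + 1) - v) = v - xsol h m v (m + 1)
    abel

section WithEvolution2

variable {𝒜 : ℕ → ℕ → X →L[ℝ] X}

lemma Pfun_idem (hu : ∀ k, 0 < u k) (h : Adm u ν A Z)
    (h𝒜id : ∀ n, 𝒜 n n = 1) (h𝒜succ : ∀ m n, n ≤ m → 𝒜 (m + 1) n = (A m).comp (𝒜 m n))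
    (n : ℕ) (v : X) : Pfun h n (Pfun h n v) = Pfun h n v := by
  cases n with
  | zero =>
    have hPv : Pfun h 0 v = xsol h 0 (A 0 v) 0 + v := rfl
    set s : X := xsol h 0 (A 0 v) 0 + v with hs
    have hz : xsol h 0 (A 0 s) = fun k => if k = 0 then 0 else 𝒜 k 0 s := by
      symm
      obtain ⟨C, hC⟩ := xsol_bdd h 0 (A 0 v)
      refine xsol_unique h 0 (A 0 s) ?_ ⟨max C 0, fun k => ?_⟩ (fun k => ?_)
      · rw [if_pos rfl]; exact Z.zero_mem
      · by_cases hk : k = 0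
        · subst hk; rw [if_pos rfl, norm_zero, mul_zero]; exact le_max_right _ _
        · rw [if_neg hk, xsol_orbit0 h h𝒜id h𝒜succ v k (by omega)]
          exact le_trans (hC k) (le_max_left _ _)
      · cases k with
        | zero =>
          rw [if_neg (by omega : (1:ℕ) ≠ 0), if_pos rfl, map_zero, sub_zero, dd_self,
            h𝒜succ 0 0 le_rfl, ContinuousLinearMap.comp_apply, h𝒜id]
          rfl
        | succ k =>
          rw [if_neg (by omega : k + 1 + 1 ≠ 0), if_neg (by omega : k + 1 ≠ 0),
            dd_ne _ _ (by omega), h𝒜succ (k+1) 0 (by omega),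
            ContinuousLinearMap.comp_apply, sub_self]
    rw [hPv, Pfun_zero, hz]
    simp
  | succ m =>
    rw [Pfun_succ h m v]
    set s : X := xsol h m v (m + 1) with hs
    have hz : xsol h m s = fun k => if k ≤ m then 0 else 𝒜 k (m + 1) s := by
      symm
      obtain ⟨C, hC⟩ := xsol_bdd h m v
      refine xsol_unique h m s ?_ ⟨max C 0, fun k => ?_⟩ (fun k => ?_)
      · rw [if_pos (Nat.zero_le m)]; exact Z.zero_mem
      · by_cases hk : k ≤ m
        · rw [if_pos hk, norm_zero, mul_zero]; exact le_max_right _ _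
        · rw [if_neg hk, xsol_orbit h h𝒜id h𝒜succ m v k (by omega)]
          exact le_trans (hC k) (le_max_left _ _)
      · rcases Nat.lt_trichotomy k m with hk | hk | hk
        · rw [if_pos (by omega : k + 1 ≤ m), if_pos (by omega : k ≤ m),
            dd_ne _ _ (by omega), map_zero, sub_zero]
        · subst hk
          rw [if_neg (by omega : ¬ k + 1 ≤ k), if_pos le_rfl, dd_self, map_zero,
            sub_zero, h𝒜id]
          rfl
        · rw [if_neg (by omega : ¬ k + 1 ≤ m), if_neg (by omega : ¬ k ≤ m),
            dd_ne _ _ (by omega), h𝒜succ k (m + 1) (by omega),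
            ContinuousLinearMap.comp_apply, sub_self]
    rw [Pfun_succ, hz]
    have hne : ¬ m + 1 ≤ m := by omega
    simp [if_neg hne, h𝒜id]

end WithEvolution2

end Machinery


section EstConv

lemma cancel_left {a x y : ℝ} (ha : 0 < a) (h : a * x ≤ a * y) : x ≤ y :=
  le_of_mul_le_mul_left h ha

lemma est_conv {uk un νn t s C D : ℝ} (huk : 0 < uk) (hun : 0 < un) (hνn : 0 < νn)
    (hCD : C ≤ D) (hs : 0 ≤ s) (h : uk * t ≤ C * (un * νn * s)) :
    t ≤ D * νn * (un / uk) * s := by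
  refine cancel_left huk (h.trans ?_)
  have he : uk * (D * νn * (un / uk) * s) = D * νn * un * s := by
    field_simp
  rw [he]
  nlinarith [mul_nonneg (mul_nonneg (mul_nonneg (sub_nonneg.2 hCD) hνn.le) hun.le) hs]

lemma rpow_flip {a b β : ℝ} (ha : 0 < a) (hb : 0 < b) :
    (a / b) ^ (-β) = b ^ β / a ^ β := by
  rw [Real.rpow_neg (div_nonneg ha.le hb.le), Real.div_rpow ha.le hb.le, inv_div]

lemma rpow_div_neg {a b β : ℝ} (ha : 0 < a) (hb : 0 < b) :
    (a / b) ^ (-β) = a ^ (-β) / b ^ (-β) :=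
  Real.div_rpow ha.le hb.le (-β)

end EstConv

set_option maxHeartbeats 2000000


/-- Theorem (admissibility implies dichotomy): if for some closed subspace
`Z ⊆ X` and some `β > 0` the pairs `(ℓ^1_{β,0}, ℓ^∞_{β,Z})` and
`(ℓ^1_{-β,0}, ℓ^∞_{-β,Z})` are properly admissible for `x_{n+1} = A_n x_n`,
then `(A_n)` admits a `(μ,ν)`-dichotomy with exponent `λ = β`: there are
projections `P_n` commuting with the dynamics, `A_n|_{Ker P_n}` is invertible
onto `Ker P_{n+1}` (witnessed by the backward Green operators
`B m n = 𝒜(m,n)(Id − P n)`, `m ≤ n`), and the dichotomy estimates hold. -/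
theorem stmt12 {X : Type*} [NormedAddCommGroup X] [NormedSpace ℝ X] [CompleteSpace X]
    (μ : ℕ → ℝ) (hμpos : ∀ n, 0 < μ n) (hμmono : StrictMono μ)
    (hμtop : Filter.Tendsto μ Filter.atTop Filter.atTop)
    (ν : ℕ → ℝ) (hν : ∀ n, 1 ≤ ν n)
    (A : ℕ → X →L[ℝ] X) (𝒜 : ℕ → ℕ → X →L[ℝ] X)
    (h𝒜id : ∀ n, 𝒜 n n = 1)
    (h𝒜succ : ∀ m n, n ≤ m → 𝒜 (m + 1) n = (A m).comp (𝒜 m n))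
    (Z : Submodule ℝ X) (hZ : IsClosed (Z : Set X))
    (β : ℝ) (hβ : 0 < β)
    (hadm₁ : ∀ y : ℕ → X, y 0 = 0 → Summable (fun n => μ n ^ β * ν n * ‖y n‖) →
      ∃! x : ℕ → X, x 0 ∈ Z ∧ (∃ C, ∀ n, μ n ^ β * ‖x n‖ ≤ C) ∧
        ∀ n, x (n + 1) - A n (x n) = y (n + 1))
    (hadm₂ : ∀ y : ℕ → X, y 0 = 0 → Summable (fun n => μ n ^ (-β) * ν n * ‖y n‖) →
      ∃! x : ℕ → X, x 0 ∈ Z ∧ (∃ C, ∀ n, μ n ^ (-β) * ‖x n‖ ≤ C) ∧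
        ∀ n, x (n + 1) - A n (x n) = y (n + 1)) :
    ∃ (P : ℕ → X →L[ℝ] X) (B : ℕ → ℕ → X →L[ℝ] X) (D : ℝ), 0 < D
      ∧ (∀ n, (P n).comp (P n) = P n)
      ∧ (∀ n, (A n).comp (P n) = (P (n + 1)).comp (A n))
      -- `B m n` is the backward evolution `𝒜(m,n)(Id − P n)` on kernels:
      ∧ (∀ n, B n n = 1 - P n)
      ∧ (∀ m n, m < n → (A m).comp (B m n) = B (m + 1) n)
      ∧ (∀ m n, m ≤ n → (P m).comp (B m n) = 0)
      -- invertibility of `A_n : Ker P_n → Ker P_{n+1}`: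
      ∧ (∀ n v, P n v = 0 → B n (n + 1) (A n v) = v)
      -- the dichotomy estimates with exponent `λ = β`:
      ∧ (∀ m n, n ≤ m → ‖(𝒜 m n).comp (P n)‖ ≤ D * ν n * (μ m / μ n) ^ (-β))
      ∧ (∀ m n, m ≤ n → ‖B m n‖ ≤ D * ν n * (μ n / μ m) ^ (-β)) := by
  classical
  have hν0 : ∀ n, 0 < ν n := fun n => lt_of_lt_of_le one_pos (hν n)
  have hu1 : ∀ n, 0 < μ n ^ β := fun n => Real.rpow_pos_of_pos (hμpos n) β
  have hu2 : ∀ n, 0 < μ n ^ (-β) := fun n => Real.rpow_pos_of_pos (hμpos n) (-β)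
  have h₁ : Adm (fun n => μ n ^ β) ν A Z := hadm₁
  have h₂ : Adm (fun n => μ n ^ (-β)) ν A Z := hadm₂
  obtain ⟨C₁, hC₁, hbd₁⟩ := solBound (fun n => μ n ^ β) ν hu1 hν0 A Z hZ h₁
  obtain ⟨C₂, hC₂, hbd₂⟩ := solBound (fun n => μ n ^ (-β)) ν hu2 hν0 A Z hZ h₂
  -- the two basic estimates on the distinguished solutions
  have Est1 : ∀ n (w : X) k, μ k ^ β * ‖xsol h₁ n w k‖
      ≤ C₁ * (μ (n+1) ^ β * ν (n+1) * ‖w‖) := by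
    intro n w k
    exact hbd₁ (dd X n w) (dd_zero n w) _ (dd_hasSum (fun n => μ n ^ β) ν n w)
      (xsol h₁ n w) (xsol_mem h₁ n w) (xsol_bdd h₁ n w) ((xsol_spec h₁ n w).2.2) k
  have conv : ∀ (x : ℕ → X), (∃ C, ∀ k, μ k ^ β * ‖x k‖ ≤ C) →
      (∃ C, ∀ k, μ k ^ (-β) * ‖x k‖ ≤ C) := by
    rintro x ⟨C, hC⟩
    refine ⟨μ 0 ^ (-(2*β)) * max C 0, fun k => ?_⟩
    have h1 : μ k ^ (-β) = μ k ^ (-(2*β)) * μ k ^ β := by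
      rw [← Real.rpow_add (hμpos k)]; ring_nf
    have h2 : μ k ^ (-(2*β)) ≤ μ 0 ^ (-(2*β)) := by
      rw [Real.rpow_neg (hμpos k).le, Real.rpow_neg (hμpos 0).le]
      have hle : μ 0 ^ (2*β) ≤ μ k ^ (2*β) :=
        Real.rpow_le_rpow (hμpos 0).le (hμmono.monotone (Nat.zero_le k)) (by positivity)
      exact inv_anti₀ (Real.rpow_pos_of_pos (hμpos 0) _) hle
    have h3 : μ k ^ β * ‖x k‖ ≤ max C 0 := le_trans (hC k) (le_max_left _ _)
    have h4 : 0 ≤ μ k ^ β * ‖x k‖ := mul_nonneg (hu1 k).le (norm_nonneg _)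
    calc μ k ^ (-β) * ‖x k‖ = μ k ^ (-(2*β)) * (μ k ^ β * ‖x k‖) := by rw [h1]; ring
      _ ≤ μ 0 ^ (-(2*β)) * max C 0 :=
        mul_le_mul h2 h3 h4 (Real.rpow_pos_of_pos (hμpos 0) _).le
  have Est2 : ∀ n (w : X) k, μ k ^ (-β) * ‖xsol h₁ n w k‖
      ≤ C₂ * (μ (n+1) ^ (-β) * ν (n+1) * ‖w‖) := by
    intro n w k
    exact hbd₂ (dd X n w) (dd_zero n w) _ (dd_hasSum (fun n => μ n ^ (-β)) ν n w)
      (xsol h₁ n w) (xsol_mem h₁ n w) (conv _ (xsol_bdd h₁ n w))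
      ((xsol_spec h₁ n w).2.2) k
  -- constants
  set E0 : ℝ := C₁ * (μ 1 ^ β * ν 1 * ‖A 0‖) / μ 0 ^ β with hE0def
  have hE0 : 0 ≤ E0 := by
    apply div_nonneg _ (hu1 0).le
    exact mul_nonneg hC₁.le (mul_nonneg (mul_nonneg (hu1 1).le (hν0 1).le) (norm_nonneg _))
  set D : ℝ := C₁ + C₂ + E0 + 2 with hDdef
  have hD : 0 < D := by rw [hDdef]; nlinarith
  -- pointwise bound for the 0-th projection
  have hx0bd : ∀ v : X, ‖xsol h₁ 0 (A 0 v) 0‖ ≤ E0 * ‖v‖ := by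
    intro v
    have h := Est1 0 (A 0 v) 0
    rw [Nat.zero_add] at h
    have h' : μ 0 ^ β * ‖xsol h₁ 0 (A 0 v) 0‖ ≤ μ 0 ^ β * (E0 * ‖v‖) := by
      refine h.trans ?_
      have e : μ 0 ^ β * (E0 * ‖v‖) = C₁ * (μ 1 ^ β * ν 1 * ‖A 0‖) * ‖v‖ := by
        rw [hE0def]
        field_simp [(hu1 0).ne']
        try ring
      rw [e]
      have hAv : ‖A 0 v‖ ≤ ‖A 0‖ * ‖v‖ := (A 0).le_opNorm v
      have : C₁ * (μ 1 ^ β * ν 1 * ‖A 0 v‖) ≤ C₁ * (μ 1 ^ β * ν 1 * (‖A 0‖ * ‖v‖)) := by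
        apply mul_le_mul_of_nonneg_left _ hC₁.le
        exact mul_le_mul_of_nonneg_left hAv (mul_nonneg (hu1 1).le (hν0 1).le)
      refine this.trans (le_of_eq (by ring))
    exact cancel_left (hu1 0) h'
  have hP0bd : ∀ v : X, ‖Pfun h₁ 0 v‖ ≤ (E0 + 1) * ‖v‖ := by
    intro v
    rw [Pfun_zero]
    calc ‖xsol h₁ 0 (A 0 v) 0 + v‖ ≤ ‖xsol h₁ 0 (A 0 v) 0‖ + ‖v‖ := norm_add_le _ _
      _ ≤ E0 * ‖v‖ + ‖v‖ := by have := hx0bd v; linarith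
      _ = (E0 + 1) * ‖v‖ := by ring
  have hPsbd : ∀ m₀ (v : X), ‖Pfun h₁ (m₀+1) v‖ ≤ (C₁ * ν (m₀+1)) * ‖v‖ := by
    intro m₀ v
    rw [Pfun_succ]
    refine cancel_left (hu1 (m₀+1)) ((Est1 m₀ v (m₀+1)).trans (le_of_eq (by ring)))
  have hPbd : ∀ n, ∃ K, ∀ v : X, ‖Pfun h₁ n v‖ ≤ K * ‖v‖ := by
    intro n
    cases n with
    | zero => exact ⟨E0 + 1, hP0bd⟩
    | succ m₀ => exact ⟨C₁ * ν (m₀+1), hPsbd m₀⟩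
  -- the projections as continuous linear maps
  set P : ℕ → X →L[ℝ] X := fun n => LinearMap.mkContinuousOfExistsBound
    { toFun := Pfun h₁ n, map_add' := Pfun_add hu1 h₁ n,
      map_smul' := fun c v => Pfun_smul h₁ n c v } (hPbd n) with hPdef
  have hPapp : ∀ n v, P n v = Pfun h₁ n v := fun n v => rfl
  -- the Green functions
  set Bf : ℕ → ℕ → X → X := fun m n w =>
    if m = n then w - Pfun h₁ n w else if m < n then -(xsol h₁ (n-1) w m) else 0
    with hBfdef
  have hBfadd : ∀ m n (w w' : X), Bf m n (w + w') = Bf m n w + Bf m n w' := by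
    intro m n w w'
    by_cases hmn : m = n
    · simp only [hBfdef, if_pos hmn, Pfun_add hu1 h₁]
      abel
    · by_cases hlt : m < n
      · simp only [hBfdef, if_neg hmn, if_pos hlt, xsol_add hu1 h₁]
        simp only [Pi.add_apply]
        abel
      · simp only [hBfdef, if_neg hmn, if_neg hlt, add_zero]
  have hBfsmul : ∀ m n (c : ℝ) (w : X), Bf m n (c • w) = c • Bf m n w := by
    intro m n c w
    by_cases hmn : m = n
    · simp only [hBfdef, if_pos hmn, Pfun_smul h₁, smul_sub]
    · by_cases hlt : m < n
      · simp only [hBfdef, if_neg hmn, if_pos hlt, xsol_smul h₁]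
        simp only [Pi.smul_apply, smul_neg]
      · simp only [hBfdef, if_neg hmn, if_neg hlt, smul_zero]
  have hBfbd : ∀ m n, ∃ K, ∀ w : X, ‖Bf m n w‖ ≤ K * ‖w‖ := by
    intro m n
    by_cases hmn : m = n
    · obtain ⟨K, hK⟩ := hPbd n
      refine ⟨1 + K, fun w => ?_⟩
      simp only [hBfdef, if_pos hmn]
      calc ‖w - Pfun h₁ n w‖ ≤ ‖w‖ + ‖Pfun h₁ n w‖ := norm_sub_le _ _
        _ ≤ ‖w‖ + K * ‖w‖ := by have := hK w; linarith
        _ = (1 + K) * ‖w‖ := by ring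
    · by_cases hlt : m < n
      · refine ⟨(μ m ^ (-β))⁻¹ * (C₂ * (μ (n-1+1) ^ (-β) * ν (n-1+1))), fun w => ?_⟩
        simp only [hBfdef, if_neg hmn, if_pos hlt, norm_neg]
        have h := Est2 (n-1) w m
        refine cancel_left (hu2 m) (h.trans (le_of_eq ?_))
        field_simp [(hu2 m).ne']
      · exact ⟨0, fun w => by simp [hBfdef, if_neg hmn, if_neg hlt]⟩
  set B : ℕ → ℕ → X →L[ℝ] X := fun m n => LinearMap.mkContinuousOfExistsBound
    { toFun := Bf m n, map_add' := hBfadd m n, map_smul' := hBfsmul m n }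
    (hBfbd m n) with hBdef
  have hBapp : ∀ m n w, B m n w = Bf m n w := fun m n w => rfl
  refine ⟨P, B, D, hD, ?_, ?_, ?_, ?_, ?_, ?_, ?_, ?_⟩
  · -- idempotency
    intro n
    ext v
    show Pfun h₁ n (Pfun h₁ n v) = Pfun h₁ n v
    exact Pfun_idem hu1 h₁ h𝒜id h𝒜succ n v
  · -- commutation
    intro n
    ext v
    show A n (Pfun h₁ n v) = Pfun h₁ (n+1) (A n v)
    exact Pfun_comm hu1 h₁ n v
  · -- B n n = 1 - P n
    intro n
    ext w
    show Bf n n w = w - Pfun h₁ n w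
    simp only [hBfdef, if_pos rfl]
  · -- A m ∘ B m n = B (m+1) n for m < n
    intro m n hmn
    ext w
    show A m (Bf m n w) = Bf (m+1) n w
    rcases Nat.lt_or_ge (m+1) n with hlt | hge
    · have hmn' : m ≠ n := by omega
      simp only [hBfdef, if_neg hmn', if_pos hmn, if_neg (by omega : ¬ m + 1 = n),
        if_pos hlt, map_neg]
      congr 1
      have hm1 : m + 1 ≠ (n - 1) + 1 := by omega
      exact (xsol_step h₁ (n-1) w hm1).symm
    · -- m + 1 = n
      have hn : m + 1 = n := by omega
      have hmn' : m ≠ n := by omega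
      simp only [hBfdef, if_neg hmn', if_pos hmn, if_pos hn, map_neg]
      subst hn
      have hn1 : m + 1 - 1 = m := by omega
      rw [hn1]
      have hj := xsol_jump h₁ m w
      rw [Pfun_succ, hj]
      abel
  · -- P m ∘ B m n = 0 for m ≤ n
    intro m n hmn
    ext w
    show Pfun h₁ m (Bf m n w) = 0
    rcases eq_or_lt_of_le hmn with heq | hlt
    · subst heq
      simp only [hBfdef, if_pos rfl]
      have hsub : Pfun h₁ m (w - Pfun h₁ m w)
          = Pfun h₁ m w - Pfun h₁ m (Pfun h₁ m w) := by
        have h1 : Pfun h₁ m (w - Pfun h₁ m w) + Pfun h₁ m (Pfun h₁ m w)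
            = Pfun h₁ m w := by
          rw [← Pfun_add hu1 h₁ m, sub_add_cancel]
        exact eq_sub_of_add_eq h1
      rw [hsub, Pfun_idem hu1 h₁ h𝒜id h𝒜succ m w, sub_self]
    · have hmn' : m ≠ n := by omega
      simp only [hBfdef, if_neg hmn', if_pos hlt]
      have hneg : Pfun h₁ m (-(xsol h₁ (n-1) w m)) = -(Pfun h₁ m (xsol h₁ (n-1) w m)) := by
        have := Pfun_smul h₁ m (-1 : ℝ) (xsol h₁ (n-1) w m)
        simpa using this
      rw [hneg, Pfun_ker h₁ m (xsol h₁ (n-1) w) (xsol_mem h₁ (n-1) w)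
        (fun k hk => xsol_step h₁ (n-1) w (by omega)), neg_zero]
  · -- invertibility
    intro n v hPv
    have hPv' : Pfun h₁ n v = 0 := hPv
    show Bf n (n+1) (A n v) = v
    simp only [hBfdef, if_neg (by omega : ¬ n = n + 1), if_pos (by omega : n < n + 1)]
    have hn1 : n + 1 - 1 = n := by omega
    rw [hn1, Pfun_key hu1 h₁ n v, hPv', sub_zero]
  · -- forward estimate
    intro k n hnk
    have hrp : 0 < (μ k / μ n) ^ (-β) :=
      Real.rpow_pos_of_pos (div_pos (hμpos k) (hμpos n)) _
    apply ContinuousLinearMap.opNorm_le_bound _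
      (mul_nonneg (mul_nonneg hD.le (hν0 n).le) hrp.le)
    intro v
    rw [ContinuousLinearMap.comp_apply]
    cases n with
    | zero =>
      rcases Nat.eq_zero_or_pos k with hk0 | hk1
      · subst hk0
        rw [h𝒜id 0, ContinuousLinearMap.one_apply, hPapp]
        have : (μ 0 / μ 0 : ℝ) ^ (-β) = 1 := by
          rw [div_self (hμpos 0).ne', Real.one_rpow]
        rw [this, mul_one]
        refine (hP0bd v).trans ?_
        have h1 : (1:ℝ) ≤ ν 0 := hν 0
        have : E0 + 1 ≤ D * ν 0 := by nlinarith
        exact mul_le_mul_of_nonneg_right this (norm_nonneg v)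
      · rw [hPapp]
        have horb : 𝒜 k 0 (Pfun h₁ 0 v) = xsol h₁ 0 (A 0 v) k := by
          rw [Pfun_zero]
          exact xsol_orbit0 h₁ h𝒜id h𝒜succ v k hk1
        rw [horb, rpow_flip (hμpos k) (hμpos 0)]
        have hEst : μ k ^ β * ‖xsol h₁ 0 (A 0 v) k‖ ≤ E0 * (μ 0 ^ β * ν 0 * ‖v‖) := by
          refine (Est1 0 (A 0 v) k).trans ?_
          have hAv : ‖A 0 v‖ ≤ ‖A 0‖ * ‖v‖ := (A 0).le_opNorm v
          have he : E0 * μ 0 ^ β = C₁ * (μ 1 ^ β * ν 1 * ‖A 0‖) :=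
            div_mul_cancel₀ _ (hu1 0).ne'
          have h1 : (1:ℝ) ≤ ν 0 := hν 0
          calc C₁ * (μ (0+1) ^ β * ν (0+1) * ‖A 0 v‖)
              ≤ C₁ * (μ 1 ^ β * ν 1 * (‖A 0‖ * ‖v‖)) := by
                rw [Nat.zero_add]
                apply mul_le_mul_of_nonneg_left _ hC₁.le
                exact mul_le_mul_of_nonneg_left hAv
                  (mul_nonneg (hu1 1).le (hν0 1).le)
            _ = (E0 * μ 0 ^ β) * ‖v‖ := by rw [he]; ring
            _ ≤ E0 * (μ 0 ^ β * ν 0 * ‖v‖) := by nlinarith [mul_nonneg hE0 (mul_nonneg (hu1 0).le (norm_nonneg v))]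
        exact est_conv (hu1 k) (hu1 0) (hν0 0) (by nlinarith : E0 ≤ D) (norm_nonneg v) hEst
    | succ m₀ =>
      rw [hPapp]
      have horb : 𝒜 k (m₀+1) (Pfun h₁ (m₀+1) v) = xsol h₁ m₀ v k := by
        rw [Pfun_succ]
        exact xsol_orbit h₁ h𝒜id h𝒜succ m₀ v k hnk
      rw [horb, rpow_flip (hμpos k) (hμpos (m₀+1))]
      exact est_conv (hu1 k) (hu1 (m₀+1)) (hν0 (m₀+1)) (by nlinarith : C₁ ≤ D)
        (norm_nonneg v) (Est1 m₀ v k)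
  · -- backward estimate
    intro m n hmn
    have hrp : 0 < (μ n / μ m) ^ (-β) :=
      Real.rpow_pos_of_pos (div_pos (hμpos n) (hμpos m)) _
    apply ContinuousLinearMap.opNorm_le_bound _
      (mul_nonneg (mul_nonneg hD.le (hν0 n).le) hrp.le)
    intro w
    rw [hBapp]
    rcases eq_or_lt_of_le hmn with heq | hlt
    · subst heq
      simp only [hBfdef, if_pos rfl]
      have hone : (μ m / μ m : ℝ) ^ (-β) = 1 := by
        rw [div_self (hμpos m).ne', Real.one_rpow]
      rw [hone, mul_one]
      have h1 : (1:ℝ) ≤ ν m := hν m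
      cases m with
      | zero =>
        calc ‖w - Pfun h₁ 0 w‖ ≤ ‖w‖ + ‖Pfun h₁ 0 w‖ := norm_sub_le _ _
          _ ≤ ‖w‖ + (E0 + 1) * ‖w‖ := by have := hP0bd w; linarith
          _ = (E0 + 2) * ‖w‖ := by ring
          _ ≤ D * ν 0 * ‖w‖ := by
              apply mul_le_mul_of_nonneg_right _ (norm_nonneg w)
              have h0 : (1:ℝ) ≤ ν 0 := hν 0
              nlinarith
      | succ m₀ =>
        have hxbd : ‖xsol h₁ m₀ w (m₀+1)‖ ≤ C₂ * ν (m₀+1) * ‖w‖ := by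
          refine cancel_left (hu2 (m₀+1)) ((Est2 m₀ w (m₀+1)).trans (le_of_eq (by ring)))
        calc ‖w - Pfun h₁ (m₀+1) w‖ ≤ ‖w‖ + ‖Pfun h₁ (m₀+1) w‖ := norm_sub_le _ _
          _ = ‖w‖ + ‖xsol h₁ m₀ w (m₀+1)‖ := by rw [Pfun_succ]
          _ ≤ ‖w‖ + C₂ * ν (m₀+1) * ‖w‖ := by linarith
          _ = (1 + C₂ * ν (m₀+1)) * ‖w‖ := by ring
          _ ≤ D * ν (m₀+1) * ‖w‖ := by
              apply mul_le_mul_of_nonneg_right _ (norm_nonneg w)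
              have h2 : (1:ℝ) ≤ ν (m₀+1) := hν (m₀+1)
              rw [hDdef]
              nlinarith [mul_nonneg (by linarith : (0:ℝ) ≤ C₁ + E0 + 1)
                (by linarith : (0:ℝ) ≤ ν (m₀+1) - 1)]
    · have hmn' : m ≠ n := by omega
      simp only [hBfdef, if_neg hmn', if_pos hlt, norm_neg]
      have hn1 : n - 1 + 1 = n := by omega
      have hEst := Est2 (n-1) w m
      rw [hn1] at hEst
      rw [rpow_div_neg (hμpos n) (hμpos m)]
      exact est_conv (hu2 m) (hu2 n) (hν0 n) (by nlinarith : C₂ ≤ D)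
        (norm_nonneg w) hEst
end

section
/- In the compact-operator setting, if for each y ∈ ℓ^1_{β,0} there exists some x ∈ ℓ^∞_β solving x_{n+1} − A_n x_n = y_{n+1}, then for all m ≥ n ∈ ℕ one has X = 𝒜(m,n)X + S(m), where S(m) = {v : sup_{k≥m}‖𝒜(k,m)v‖ < ∞}. -/
/-- If for each `y ∈ ℓ^1_{β,0}` there exists some `x ∈ ℓ^∞_β` solving
`x_{n+1} − A_n x_n = y_{n+1}`, then for all `m ≥ n` one has
`X = 𝒜(m,n)X + S(m)`, where `S(m) = {v : sup_{k≥m} ‖𝒜(k,m)v‖ < ∞}`. -/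
theorem stmt13 {X : Type*} [NormedAddCommGroup X] [NormedSpace ℝ X] [CompleteSpace X]
    (μ : ℕ → ℝ) (hμpos : ∀ n, 0 < μ n) (hμmono : StrictMono μ)
    (hμtop : Filter.Tendsto μ Filter.atTop Filter.atTop)
    (ν : ℕ → ℝ) (hν : ∀ n, 1 ≤ ν n)
    (A : ℕ → X →L[ℝ] X) (𝒜 : ℕ → ℕ → X →L[ℝ] X)
    (h𝒜id : ∀ n, 𝒜 n n = 1)
    (h𝒜succ : ∀ m n, n ≤ m → 𝒜 (m + 1) n = (A m).comp (𝒜 m n))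
    (β : ℝ) (hβ : 0 < β)
    (hadm : ∀ y : ℕ → X, y 0 = 0 → Summable (fun n => μ n ^ β * ν n * ‖y n‖) →
      ∃ x : ℕ → X, (∃ C, ∀ n, μ n ^ β * ‖x n‖ ≤ C) ∧
        ∀ n, x (n + 1) - A n (x n) = y (n + 1)) :
    ∀ m n, n ≤ m → ∀ v : X, ∃ (w u : X),
      (∃ C, ∀ k, m ≤ k → ‖𝒜 k m u‖ ≤ C) ∧ v = 𝒜 m n w + u := by
  -- auxiliary: if the homogeneous equation holds between a and k, then x k = 𝒜 k a (x a)
  have key : ∀ (x : ℕ → X) (a k : ℕ), a ≤ k →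
      (∀ j, a ≤ j → j < k → x (j + 1) = A j (x j)) → x k = 𝒜 k a (x a) := by
    intro x a k hak
    induction k, hak using Nat.le_induction with
    | base => intro _; simp [h𝒜id]
    | succ k hk ih =>
      intro hj
      have h1 : x k = 𝒜 k a (x a) := ih (fun j hja hjk => hj j hja (hjk.trans (Nat.lt_succ_self k)))
      have h2 : x (k + 1) = A k (x k) := hj k hk (Nat.lt_succ_self k)
      rw [h2, h1, h𝒜succ k a hk]
      rfl
  intro m n hnm v
  rcases eq_or_lt_of_le hnm with rfl | hlt
  · exact ⟨v, 0, ⟨0, fun k _ => by simp⟩, by simp [h𝒜id]⟩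
  · -- n < m, so m = p + 1
    obtain ⟨p, rfl⟩ : ∃ p, m = p + 1 := ⟨m - 1, (Nat.succ_pred_eq_of_pos (by omega)).symm⟩
    have hnp : n ≤ p := Nat.lt_succ_iff.mp hlt
    set y : ℕ → X := fun k => if k = p + 1 then v else 0 with hy
    have hy0 : y 0 = 0 := by simp [hy]
    have hsum : Summable (fun k => μ k ^ β * ν k * ‖y k‖) := by
      apply summable_of_ne_finset_zero (s := {p + 1})
      intro k hk
      simp only [Finset.mem_singleton] at hk
      simp [hy, hk]
    obtain ⟨x, ⟨C, hC⟩, hx⟩ := hadm y hy0 hsum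
    -- forward boundedness of x
    have hCnonneg : 0 ≤ C := le_trans (mul_nonneg (Real.rpow_nonneg (hμpos 0).le β) (norm_nonneg _)) (hC 0)
    have hbound : ∀ k, ‖x k‖ ≤ C / μ 0 ^ β := by
      intro k
      have hμ0 : (0:ℝ) < μ 0 ^ β := Real.rpow_pos_of_pos (hμpos 0) β
      have hμk : (0:ℝ) < μ k ^ β := Real.rpow_pos_of_pos (hμpos k) β
      have h1 : μ 0 ^ β ≤ μ k ^ β :=
        Real.rpow_le_rpow (le_of_lt (hμpos 0)) (hμmono.monotone (Nat.zero_le k)) (le_of_lt hβ)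
      have h2 : ‖x k‖ ≤ C / μ k ^ β := (le_div_iff₀' hμk).mpr (hC k)
      exact h2.trans (div_le_div_of_nonneg_left hCnonneg hμ0 h1)
    -- homogeneous steps
    have hstep : ∀ j, j ≠ p → x (j + 1) = A j (x j) := by
      intro j hj
      have h := hx j
      have : y (j + 1) = 0 := by simp [hy, hj]
      rw [this] at h
      exact sub_eq_zero.mp h
    -- x p = 𝒜 p n (x n)
    have hxp : x p = 𝒜 p n (x n) :=
      key x n p hnp (fun j _ hjp => hstep j (Nat.ne_of_lt hjp))
    -- the jump at p+1
    have hjump : x (p + 1) - A p (x p) = v := by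
      have h := hx p
      rw [hy] at h
      simpa using h
    have hv : v = 𝒜 (p + 1) n (-(x n)) + x (p + 1) := by
      rw [map_neg]
      have : A p (x p) = 𝒜 (p + 1) n (x n) := by
        rw [hxp, h𝒜succ p n hnp]; rfl
      rw [← this]
      rw [← hjump]
      abel
    refine ⟨-(x n), x (p + 1), ⟨C / μ 0 ^ β, ?_⟩, hv⟩
    intro k hk
    have hxk : x k = 𝒜 k (p + 1) (x (p + 1)) :=
      key x (p + 1) k hk (fun j hja _ => hstep j (by omega))
    rw [← hxk]
    exact hbound k
end

section
/- Robustness of (μ,ν)-dichotomies: let (γ_n)_{n∈ℕ} be positive with Σ γ_n < ∞, suppose x_{n+1} = A_n x_n admits a (μ,ν)-dichotomy with constants D, λ > 0 and sup_n (μ_n^{-ε} ν_n) < ∞ for some ε ∈ [0,λ), and fix β ∈ (0, λ−ε). If (B_n)_{n∈ℕ} are bounded operators with ‖B_n‖ ≤ c γ_n μ_n^β / (ν_{n+1} μ_{n+1}^β) for all n, then for c > 0 sufficiently small the perturbed equation x_{n+1} = (A_n + B_n) x_n also admits a (μ,ν)-dichotomy. -/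
open Real

noncomputable def stmt16rho (μ : ℕ → ℝ) (t : ℝ) (m n : ℕ) : ℝ :=
  Real.exp (-(t * |Real.log (μ m) - Real.log (μ n)|))

namespace stmt16rho

variable {μ : ℕ → ℝ} {t s : ℝ} {m n k : ℕ}

lemma pos : 0 < stmt16rho μ t m n := Real.exp_pos _

lemma nonneg : 0 ≤ stmt16rho μ t m n := pos.le

lemma le_one (ht : 0 ≤ t) : stmt16rho μ t m n ≤ 1 := by
  have h1 : 0 ≤ t * |Real.log (μ m) - Real.log (μ n)| :=
    mul_nonneg ht (abs_nonneg _)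
  calc stmt16rho μ t m n ≤ Real.exp 0 := Real.exp_le_exp.mpr (by linarith)
  _ = 1 := Real.exp_zero

lemma self : stmt16rho μ t n n = 1 := by simp [stmt16rho]

lemma symm : stmt16rho μ t m n = stmt16rho μ t n m := by
  simp [stmt16rho, abs_sub_comm]

lemma tri (ht : 0 ≤ t) (a b c : ℕ) :
    stmt16rho μ t a b * stmt16rho μ t b c ≤ stmt16rho μ t a c := by
  rw [stmt16rho, stmt16rho, stmt16rho, ← Real.exp_add]
  apply Real.exp_le_exp.mpr
  have h := abs_sub_le (Real.log (μ a)) (Real.log (μ b)) (Real.log (μ c))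
  nlinarith [abs_nonneg (Real.log (μ a) - Real.log (μ b)),
    abs_nonneg (Real.log (μ b) - Real.log (μ c))]

lemma mono_exp (hs : 0 ≤ s) (hst : s ≤ t) :
    stmt16rho μ t m n ≤ stmt16rho μ s m n := by
  apply Real.exp_le_exp.mpr
  have : 0 ≤ |Real.log (μ m) - Real.log (μ n)| := abs_nonneg _
  nlinarith

lemma eq_rpow (hμ : ∀ j, 0 < μ j) (hmono : Monotone μ) (h : n ≤ m) :
    stmt16rho μ t m n = (μ m / μ n) ^ (-t) := by
  rw [Real.rpow_def_of_pos (div_pos (hμ m) (hμ n)),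
    Real.log_div (hμ m).ne' (hμ n).ne']
  have hlog : Real.log (μ n) ≤ Real.log (μ m) :=
    Real.log_le_log (hμ n) (hmono h)
  rw [stmt16rho, abs_of_nonneg (by linarith)]
  ring_nf

end stmt16rho

set_option maxHeartbeats 4000000 in
/-- Robustness of `(μ,ν)`-dichotomies: let `(γ_n)` be positive with
`Σ γ_n < ∞`, suppose `x_{n+1} = A_n x_n` admits a `(μ,ν)`-dichotomy with
constants `D, λ > 0` (projections `P`, backward Green operators `B`), suppose
`sup_n μ_n^{-ε} ν_n < ∞` for some `ε ∈ [0,λ)`, and fix `β ∈ (0, λ−ε)`.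
Then for `c > 0` sufficiently small, every perturbation `(B'_n)` with
`‖B'_n‖ ≤ c γ_n μ_n^β / (ν_{n+1} μ_{n+1}^β)` yields a perturbed equation
`x_{n+1} = (A_n + B'_n) x_n` which again admits a `(μ,ν)`-dichotomy
(for some constants `D', λ' > 0`). -/
theorem stmt16 {X : Type*} [NormedAddCommGroup X] [NormedSpace ℝ X] [CompleteSpace X]
    (μ : ℕ → ℝ) (hμpos : ∀ n, 0 < μ n) (hμmono : StrictMono μ)
    (hμtop : Filter.Tendsto μ Filter.atTop Filter.atTop)
    (ν : ℕ → ℝ) (hν : ∀ n, 1 ≤ ν n)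
    (γ : ℕ → ℝ) (hγ : ∀ n, 0 < γ n) (hγsum : Summable γ)
    (A : ℕ → X →L[ℝ] X) (𝒜 : ℕ → ℕ → X →L[ℝ] X)
    (h𝒜id : ∀ n, 𝒜 n n = 1)
    (h𝒜succ : ∀ m n, n ≤ m → 𝒜 (m + 1) n = (A m).comp (𝒜 m n))
    -- the `(μ,ν)`-dichotomy of the unperturbed equation
    (P : ℕ → X →L[ℝ] X) (hP : ∀ n, (P n).comp (P n) = P n)
    (hPA : ∀ n, (A n).comp (P n) = (P (n + 1)).comp (A n))
    (B : ℕ → ℕ → X →L[ℝ] X)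
    (hBdiag : ∀ n, B n n = 1 - P n)
    (hBstep : ∀ m n, m < n → (A m).comp (B m n) = B (m + 1) n)
    (hBker : ∀ m n, m ≤ n → (P m).comp (B m n) = 0)
    (hBinv : ∀ n v, P n v = 0 → B n (n + 1) (A n v) = v)
    (D lam : ℝ) (hD : 0 < D) (hlam : 0 < lam)
    (hS : ∀ m n, n ≤ m → ‖(𝒜 m n).comp (P n)‖ ≤ D * ν n * (μ m / μ n) ^ (-lam))
    (hU : ∀ m n, m ≤ n → ‖B m n‖ ≤ D * ν n * (μ n / μ m) ^ (-lam))
    (ε : ℝ) (hε0 : 0 ≤ ε) (hεlam : ε < lam)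
    (hμν : ∃ M, ∀ n, μ n ^ (-ε) * ν n ≤ M)
    (β : ℝ) (hβ1 : 0 < β) (hβ2 : β < lam - ε) :
    ∃ c > (0 : ℝ), ∀ B' : ℕ → X →L[ℝ] X,
      (∀ n, ‖B' n‖ ≤ c * γ n * μ n ^ β / (ν (n + 1) * μ (n + 1) ^ β)) →
      ∀ 𝒜' : ℕ → ℕ → X →L[ℝ] X,
        (∀ n, 𝒜' n n = 1) →
        (∀ m n, n ≤ m → 𝒜' (m + 1) n = (A m + B' m).comp (𝒜' m n)) →
        ∃ (P' : ℕ → X →L[ℝ] X) (B'' : ℕ → ℕ → X →L[ℝ] X) (D' lam' : ℝ),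
          0 < D' ∧ 0 < lam'
          ∧ (∀ n, (P' n).comp (P' n) = P' n)
          ∧ (∀ n, (A n + B' n).comp (P' n) = (P' (n + 1)).comp (A n + B' n))
          ∧ (∀ n, B'' n n = 1 - P' n)
          ∧ (∀ m n, m < n → (A m + B' m).comp (B'' m n) = B'' (m + 1) n)
          ∧ (∀ m n, m ≤ n → (P' m).comp (B'' m n) = 0)
          ∧ (∀ n v, P' n v = 0 → B'' n (n + 1) ((A n + B' n) v) = v)
          ∧ (∀ m n, n ≤ m →
              ‖(𝒜' m n).comp (P' n)‖ ≤ D' * ν n * (μ m / μ n) ^ (-lam'))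
          ∧ (∀ m n, m ≤ n →
              ‖B'' m n‖ ≤ D' * ν n * (μ n / μ m) ^ (-lam')) := by
  classical
  obtain ⟨M₀, hM₀⟩ := hμν
  have hν0 : ∀ n, (0:ℝ) < ν n := fun n => lt_of_lt_of_le one_pos (hν n)
  have hγ0 : ∀ n, (0:ℝ) ≤ γ n := fun n => (hγ n).le
  have hβlam : β ≤ lam := by linarith
  have hμm : Monotone μ := hμmono.monotone
  have hM₀pos : (0:ℝ) < M₀ := by
    have h1 := hM₀ 0
    have h2 : (0:ℝ) < μ 0 ^ (-ε) * ν 0 :=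
      mul_pos (Real.rpow_pos_of_pos (hμpos 0) _) (hν0 0)
    linarith
  have hνM : ∀ n, ν n ≤ M₀ * μ n ^ ε := by
    intro n
    have h1 := hM₀ n
    have h2 : (0:ℝ) < μ n ^ ε := Real.rpow_pos_of_pos (hμpos n) ε
    rw [Real.rpow_neg (hμpos n).le] at h1
    calc ν n = μ n ^ ε * ((μ n ^ ε)⁻¹ * ν n) := by field_simp
    _ ≤ μ n ^ ε * M₀ := mul_le_mul_of_nonneg_left h1 h2.le
    _ = M₀ * μ n ^ ε := mul_comm _ _
  set Γ := ∑' n, γ n with hΓdef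
  have hΓ0 : 0 ≤ Γ := tsum_nonneg hγ0
  refine ⟨(2*D*(Γ+1))⁻¹, by positivity, ?_⟩
  intro B' hB' 𝒜' hA'id hA'succ
  set c : ℝ := (2*D*(Γ+1))⁻¹ with hcdef
  have hc0 : 0 < c := by rw [hcdef]; positivity
  set q : ℝ := D * c * Γ with hqdef
  have hq0 : 0 ≤ q := by rw [hqdef]; positivity
  have hqhalf : q ≤ 1/2 := by
    have h1 : (0:ℝ) < 2 * D * (Γ + 1) := by positivity
    rw [hqdef, hcdef]
    rw [show D * (2*D*(Γ+1))⁻¹ * Γ = (D*Γ) / (2*D*(Γ+1)) by ring]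
    rw [div_le_iff₀ h1]
    nlinarith
  have hq1 : q < 1 := lt_of_le_of_lt hqhalf (by norm_num)
  -- the unperturbed Green kernel
  set Gm : ℕ → ℕ → X →L[ℝ] X :=
    fun m n => if n ≤ m then (𝒜 m n).comp (P n) else -(B m n) with hGmdef
  -- algebra of the unperturbed system
  have hAcomp : ∀ a b c', a ≤ b → b ≤ c' → (𝒜 c' b).comp (𝒜 b a) = 𝒜 c' a := by
    intro a b c' hab hbc
    induction c', hbc using Nat.le_induction with
    | base => rw [h𝒜id]; ext v; simp
    | succ n hbn ih =>
      rw [h𝒜succ n b hbn, h𝒜succ n a (le_trans hab hbn),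
        ContinuousLinearMap.comp_assoc, ih]
  have hPA' : ∀ n m, n ≤ m → (P m).comp (𝒜 m n) = (𝒜 m n).comp (P n) := by
    intro n m h
    induction m, h using Nat.le_induction with
    | base => rw [h𝒜id]; ext v; simp
    | succ m hnm ih =>
      rw [h𝒜succ m n hnm, ← ContinuousLinearMap.comp_assoc, ← hPA m,
        ContinuousLinearMap.comp_assoc, ih, ← ContinuousLinearMap.comp_assoc]
  have hAB : ∀ m j, m ≤ j → ∀ n, j ≤ n → (𝒜 j m).comp (B m n) = B j n := by
    intro m j hmj
    induction j, hmj using Nat.le_induction with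
    | base => intro n _; rw [h𝒜id]; ext v; simp
    | succ j hmj ih =>
      intro n hjn
      rw [h𝒜succ j m hmj, ContinuousLinearMap.comp_assoc,
        ih n (le_trans (Nat.le_succ j) hjn), hBstep j n (Nat.lt_of_succ_le hjn)]
  have hABfull : ∀ m n, m ≤ n → (𝒜 n m).comp (B m n) = 1 - P n := by
    intro m n h; rw [hAB m n h n le_rfl, hBdiag]
  have hker𝒜 : ∀ m j, m ≤ j → ∀ v, P m v = 0 → P j (𝒜 j m v) = 0 := by
    intro m j h v hv
    calc P j (𝒜 j m v) = ((P j).comp (𝒜 j m)) v := rfl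
    _ = ((𝒜 j m).comp (P m)) v := by rw [hPA' m j h]
    _ = 𝒜 j m (P m v) := rfl
    _ = 0 := by rw [hv]; simp
  have hinj : ∀ m j, m ≤ j → ∀ v, P m v = 0 → 𝒜 j m v = 0 → v = 0 := by
    intro m j h
    induction j, h using Nat.le_induction with
    | base => intro v _ h0; rw [h𝒜id] at h0; simpa using h0
    | succ j hmj ih =>
      intro v hv h0
      have hw : P j (𝒜 j m v) = 0 := hker𝒜 m j hmj v hv
      have h1 : A j (𝒜 j m v) = 0 := by
        rw [h𝒜succ j m hmj] at h0; simpa using h0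
      have h2 := hBinv j (𝒜 j m v) hw
      rw [h1] at h2
      simp only [map_zero] at h2
      exact ih v hv h2.symm
  have hBP : ∀ m n, m ≤ n → (B m n).comp (P n) = 0 := by
    intro m n hmn
    ext w
    show B m n (P n w) = 0
    apply hinj m n hmn
    · calc P m (B m n (P n w)) = ((P m).comp (B m n)) (P n w) := rfl
      _ = 0 := by rw [hBker m n hmn]; rfl
    · calc 𝒜 n m (B m n (P n w)) = ((𝒜 n m).comp (B m n)) (P n w) := rfl
      _ = (1 - P n) (P n w) := by rw [hABfull m n hmn]
      _ = P n w - P n (P n w) := by simp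
      _ = P n w - ((P n).comp (P n)) w := rfl
      _ = 0 := by rw [hP n]; simp
  have hBA : ∀ m M, m ≤ M → ∀ v, P m v = 0 → B m M (𝒜 M m v) = v := by
    intro m M h v hv
    have h1 : P m (B m M (𝒜 M m v) - v) = 0 := by
      have : P m (B m M (𝒜 M m v)) = 0 := by
        calc P m (B m M (𝒜 M m v)) = ((P m).comp (B m M)) (𝒜 M m v) := rfl
        _ = 0 := by rw [hBker m M h]; rfl
      rw [map_sub, this, hv, sub_zero]
    have h2 : 𝒜 M m (B m M (𝒜 M m v) - v) = 0 := by
      rw [map_sub]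
      have : 𝒜 M m (B m M (𝒜 M m v)) = (1 - P M) (𝒜 M m v) := by
        calc 𝒜 M m (B m M (𝒜 M m v)) = ((𝒜 M m).comp (B m M)) (𝒜 M m v) := rfl
        _ = (1 - P M) (𝒜 M m v) := by rw [hABfull m M h]
      rw [this]
      have h3 : P M (𝒜 M m v) = 0 := hker𝒜 m M h v hv
      simp [h3]
    have := hinj m M h _ h1 h2
    exact sub_eq_zero.mp this
  have hBAop : ∀ m M, m ≤ M → ∀ v, B m M (𝒜 M m v) = v - P m v := by
    intro m M h v
    have hsplit : v = P m v + (v - P m v) := by abel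
    have hker : P m (v - P m v) = 0 := by
      rw [map_sub]
      have : P m (P m v) = P m v := by
        calc P m (P m v) = ((P m).comp (P m)) v := rfl
        _ = P m v := by rw [hP m]
      rw [this, sub_self]
    calc B m M (𝒜 M m v)
        = B m M (𝒜 M m (P m v + (v - P m v))) := by rw [← hsplit]
    _ = B m M (𝒜 M m (P m v)) + B m M (𝒜 M m (v - P m v)) := by
        rw [map_add, map_add]
    _ = B m M (P M (𝒜 M m v)) + (v - P m v) := by
        rw [hBA m M h _ hker]
        congr 2
        calc 𝒜 M m (P m v) = ((𝒜 M m).comp (P m)) v := rfl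
        _ = ((P M).comp (𝒜 M m)) v := by rw [hPA' m M h]
        _ = P M (𝒜 M m v) := rfl
    _ = v - P m v := by
        have : B m M (P M (𝒜 M m v)) = 0 := by
          calc B m M (P M (𝒜 M m v)) = ((B m M).comp (P M)) (𝒜 M m v) := rfl
          _ = 0 := by rw [hBP m M h]; rfl
        rw [this, zero_add]
  have hBAmid : ∀ m k M, m ≤ k → k ≤ M → ∀ v, B m M (𝒜 M k v) = B m k v := by
    intro m k M hmk hkM v
    have hmM : m ≤ M := le_trans hmk hkM
    have hker : P k (v - P k v) = 0 := by
      rw [map_sub]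
      have : P k (P k v) = P k v := by
        calc P k (P k v) = ((P k).comp (P k)) v := rfl
        _ = P k v := by rw [hP k]
      rw [this, sub_self]
    have hpart1 : B m M (𝒜 M k (P k v)) = 0 := by
      have h1 : 𝒜 M k (P k v) = P M (𝒜 M k v) := by
        calc 𝒜 M k (P k v) = ((𝒜 M k).comp (P k)) v := rfl
        _ = ((P M).comp (𝒜 M k)) v := by rw [hPA' k M hkM]
        _ = P M (𝒜 M k v) := rfl
      rw [h1]
      calc B m M (P M (𝒜 M k v)) = ((B m M).comp (P M)) (𝒜 M k v) := rfl
      _ = 0 := by rw [hBP m M hmM]; rfl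
    have hpart1' : B m k (P k v) = 0 := by
      calc B m k (P k v) = ((B m k).comp (P k)) v := rfl
      _ = 0 := by rw [hBP m k hmk]; rfl
    have hpart2 : B m M (𝒜 M k (v - P k v)) = B m k (v - P k v) := by
      set w := v - P k v with hwdef
      have hu1 : P m (B m M (𝒜 M k w)) = 0 := by
        calc P m (B m M (𝒜 M k w)) = ((P m).comp (B m M)) (𝒜 M k w) := rfl
        _ = 0 := by rw [hBker m M hmM]; rfl
      have hu2 : P m (B m k w) = 0 := by
        calc P m (B m k w) = ((P m).comp (B m k)) w := rfl
        _ = 0 := by rw [hBker m k hmk]; rfl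
      have he1 : 𝒜 M m (B m M (𝒜 M k w)) = 𝒜 M k w := by
        calc 𝒜 M m (B m M (𝒜 M k w)) = ((𝒜 M m).comp (B m M)) (𝒜 M k w) := rfl
        _ = (1 - P M) (𝒜 M k w) := by rw [hABfull m M hmM]
        _ = 𝒜 M k w - P M (𝒜 M k w) := by simp
        _ = 𝒜 M k w := by rw [hker𝒜 k M hkM w hker, sub_zero]
      have he2 : 𝒜 M m (B m k w) = 𝒜 M k w := by
        calc 𝒜 M m (B m k w) = ((𝒜 M m).comp (B m k)) w := rfl
        _ = (((𝒜 M k).comp (𝒜 k m)).comp (B m k)) w := by rw [hAcomp m k M hmk hkM]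
        _ = 𝒜 M k (((𝒜 k m).comp (B m k)) w) := rfl
        _ = 𝒜 M k ((1 - P k) w) := by rw [hABfull m k hmk]
        _ = 𝒜 M k (w - P k w) := by simp
        _ = 𝒜 M k w := by rw [hker, sub_zero]
      have h1 : P m (B m M (𝒜 M k w) - B m k w) = 0 := by
        rw [map_sub, hu1, hu2, sub_zero]
      have h2 : 𝒜 M m (B m M (𝒜 M k w) - B m k w) = 0 := by
        rw [map_sub, he1, he2, sub_self]
      exact sub_eq_zero.mp (hinj m M hmM _ h1 h2)
    calc B m M (𝒜 M k v)
        = B m M (𝒜 M k (P k v + (v - P k v))) := by rw [add_sub_cancel]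
    _ = B m M (𝒜 M k (P k v)) + B m M (𝒜 M k (v - P k v)) := by rw [map_add, map_add]
    _ = 0 + B m k (v - P k v) := by rw [hpart1, hpart2]
    _ = B m k (P k v) + B m k (v - P k v) := by rw [hpart1']
    _ = B m k v := by rw [← map_add]; congr 1; abel
  -- step identity for the unperturbed Green kernel
  have hGstep : ∀ m j, Gm (m+1) j
      = (A m).comp (Gm m j) + (if m+1 = j then (1 : X →L[ℝ] X) else 0) := by
    intro m j
    rcases lt_trichotomy j (m+1) with h | h | h
    · have h1 : j ≤ m := Nat.lt_succ_iff.mp h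
      have h2 : j ≤ m + 1 := le_trans h1 (Nat.le_succ m)
      have h3 : ¬(m + 1 = j) := by omega
      simp only [hGmdef, if_pos h1, if_pos h2, if_neg h3, add_zero]
      rw [h𝒜succ m j h1, ContinuousLinearMap.comp_assoc]
    · subst h
      have h2 : ¬(m + 1 ≤ m) := by omega
      simp only [hGmdef, if_pos (le_refl (m+1)), if_neg h2]
      ext v
      have hb : (A m) ((B m (m+1)) v) = v - P (m+1) v := by
        have h3 : (A m) ((B m (m+1)) v) = ((A m).comp (B m (m+1))) v := rfl
        rw [h3, hBstep m (m+1) (Nat.lt_succ_self m), hBdiag (m+1)]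
        simp
      simp [h𝒜id, hb]
    · have h1 : ¬(j ≤ m + 1) := by omega
      have h2 : ¬(j ≤ m) := by omega
      have h3 : ¬(m + 1 = j) := by omega
      simp only [hGmdef, if_neg h1, if_neg h2, if_neg h3, add_zero]
      rw [← hBstep m j (by omega)]
      ext v; simp
  have hPGm : ∀ j, (P 0).comp (Gm 0 j) = if j = 0 then P 0 else 0 := by
    intro j
    rcases Nat.eq_zero_or_pos j with h | h
    · subst h
      simp only [hGmdef, if_pos (le_refl 0), if_pos rfl]
      rw [h𝒜id]
      ext v
      have := hP 0
      calc P 0 ((ContinuousLinearMap.comp (1 : X →L[ℝ] X) (P 0)) v) = P 0 (P 0 v) := by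
            simp
      _ = ((P 0).comp (P 0)) v := rfl
      _ = P 0 v := by rw [hP 0]
    · have h1 : ¬(j ≤ 0) := by omega
      have h2 : ¬(j = 0) := by omega
      simp only [hGmdef, if_neg h1, if_neg h2]
      ext v
      have := hBker 0 j (Nat.zero_le j)
      calc P 0 ((-(B 0 j)) v) = -(((P 0).comp (B 0 j)) v) := by simp
      _ = 0 := by rw [this]; simp
  -- norms
  have hGnorm : ∀ m n, ‖Gm m n‖ ≤ D * ν n * stmt16rho μ lam m n := by
    intro m n
    by_cases h : n ≤ m
    · simp only [hGmdef, if_pos h]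
      rw [stmt16rho.eq_rpow hμpos hμm h]
      exact hS m n h
    · have h' : m ≤ n := (not_le.mp h).le
      simp only [hGmdef, if_neg h]
      rw [norm_neg, stmt16rho.symm, stmt16rho.eq_rpow hμpos hμm h']
      exact hU m n h'
  have hB'rho : ∀ k, ‖B' k‖ * ν (k+1) ≤ c * γ k * stmt16rho μ β (k+1) k := by
    intro k
    have h1 := hB' k
    have hρ : stmt16rho μ β (k+1) k = (μ (k+1) / μ k) ^ (-β) :=
      stmt16rho.eq_rpow hμpos hμm (Nat.le_succ k)
    have hμβ : (μ (k+1) / μ k) ^ (-β) = μ k ^ β / μ (k+1) ^ β := by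
      rw [Real.rpow_neg (div_pos (hμpos (k+1)) (hμpos k)).le, Real.div_rpow (hμpos (k+1)).le (hμpos k).le,
        inv_div]
    have hν1 : (ν (k+1)) ≠ 0 := (hν0 (k+1)).ne'
    have hμ1 : (μ (k+1) : ℝ) ^ β ≠ 0 := (Real.rpow_pos_of_pos (hμpos (k+1)) β).ne'
    calc ‖B' k‖ * ν (k+1)
        ≤ (c * γ k * μ k ^ β / (ν (k+1) * μ (k+1) ^ β)) * ν (k+1) :=
          mul_le_mul_of_nonneg_right h1 (hν0 _).le
    _ = c * γ k * (μ k ^ β / μ (k+1) ^ β) := by field_simp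
    _ = c * γ k * stmt16rho μ β (k+1) k := by rw [hρ, hμβ]
  have hkey : ∀ m n k, ‖Gm m (k+1)‖ * ‖B' k‖ * stmt16rho μ β k n
      ≤ D * c * γ k * stmt16rho μ β m n := by
    intro m n k
    have h1 : ‖Gm m (k+1)‖ ≤ D * ν (k+1) * stmt16rho μ β m (k+1) := by
      refine (hGnorm m (k+1)).trans ?_
      have := stmt16rho.mono_exp (μ := μ) (m := m) (n := k+1) hβ1.le hβlam
      have hDν : (0:ℝ) ≤ D * ν (k+1) := mul_nonneg hD.le (hν0 _).le
      calc D * ν (k+1) * stmt16rho μ lam m (k+1)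
          ≤ D * ν (k+1) * stmt16rho μ β m (k+1) :=
            mul_le_mul_of_nonneg_left this hDν
      _ = D * ν (k+1) * stmt16rho μ β m (k+1) := rfl
    have h2 : ‖B' k‖ ≤ c * γ k * stmt16rho μ β (k+1) k / ν (k+1) :=
      (le_div_iff₀ (hν0 (k+1))).mpr (hB'rho k)
    have htri : stmt16rho μ β m (k+1) * stmt16rho μ β (k+1) k * stmt16rho μ β k n
        ≤ stmt16rho μ β m n := by
      calc stmt16rho μ β m (k+1) * stmt16rho μ β (k+1) k * stmt16rho μ β k n
          ≤ stmt16rho μ β m k * stmt16rho μ β k n :=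
            mul_le_mul_of_nonneg_right (stmt16rho.tri hβ1.le m (k+1) k) stmt16rho.nonneg
      _ ≤ stmt16rho μ β m n := stmt16rho.tri hβ1.le m k n
    have hcγ : (0:ℝ) ≤ c * γ k := mul_nonneg hc0.le (hγ0 k)
    calc ‖Gm m (k+1)‖ * ‖B' k‖ * stmt16rho μ β k n
        ≤ (D * ν (k+1) * stmt16rho μ β m (k+1))
            * (c * γ k * stmt16rho μ β (k+1) k / ν (k+1)) * stmt16rho μ β k n := by
          refine mul_le_mul_of_nonneg_right ?_ stmt16rho.nonneg
          exact mul_le_mul h1 h2 (norm_nonneg _)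
            (mul_nonneg (mul_nonneg hD.le (hν0 _).le) stmt16rho.nonneg)
    _ = (D * c * γ k)
          * (stmt16rho μ β m (k+1) * stmt16rho μ β (k+1) k * stmt16rho μ β k n)
          * (ν (k+1) / ν (k+1)) := by ring
    _ = (D * c * γ k)
          * (stmt16rho μ β m (k+1) * stmt16rho μ β (k+1) k * stmt16rho μ β k n) := by
        rw [div_self (hν0 (k+1)).ne', mul_one]
    _ ≤ (D * c * γ k) * stmt16rho μ β m n :=
        mul_le_mul_of_nonneg_left htri (mul_nonneg (mul_nonneg hD.le hc0.le) (hγ0 k))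
    _ = D * c * γ k * stmt16rho μ β m n := by ring
  -- summation lemma
  have hTsum : ∀ (m n : ℕ) (H : ℕ → X →L[ℝ] X) (K : ℝ), 0 ≤ K →
      (∀ k, ‖H k‖ ≤ K * stmt16rho μ β k n) →
      Summable (fun k => ((Gm m (k+1)).comp (B' k)).comp (H k)) ∧
      ‖∑' k, ((Gm m (k+1)).comp (B' k)).comp (H k)‖
        ≤ q * K * stmt16rho μ β m n := by
    intro m n H K hK hH
    have hterm : ∀ k, ‖((Gm m (k+1)).comp (B' k)).comp (H k)‖
        ≤ (D * c * stmt16rho μ β m n * K) * γ k := by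
      intro k
      calc ‖((Gm m (k+1)).comp (B' k)).comp (H k)‖
          ≤ ‖(Gm m (k+1)).comp (B' k)‖ * ‖H k‖ :=
            ContinuousLinearMap.opNorm_comp_le _ _
      _ ≤ (‖Gm m (k+1)‖ * ‖B' k‖) * (K * stmt16rho μ β k n) :=
          mul_le_mul (ContinuousLinearMap.opNorm_comp_le _ _) (hH k) (norm_nonneg _)
            (mul_nonneg (norm_nonneg _) (norm_nonneg _))
      _ = (‖Gm m (k+1)‖ * ‖B' k‖ * stmt16rho μ β k n) * K := by ring
      _ ≤ (D * c * γ k * stmt16rho μ β m n) * K :=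
          mul_le_mul_of_nonneg_right (hkey m n k) hK
      _ = (D * c * stmt16rho μ β m n * K) * γ k := by ring
    have hsum0 : Summable (fun k => (D * c * stmt16rho μ β m n * K) * γ k) :=
      hγsum.mul_left _
    have hs : Summable (fun k => ((Gm m (k+1)).comp (B' k)).comp (H k)) :=
      Summable.of_norm_bounded hsum0 hterm
    refine ⟨hs, ?_⟩
    have hnorms : Summable (fun k => ‖((Gm m (k+1)).comp (B' k)).comp (H k)‖) :=
      Summable.of_nonneg_of_le (fun k => norm_nonneg _) hterm hsum0
    calc ‖∑' k, ((Gm m (k+1)).comp (B' k)).comp (H k)‖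
        ≤ ∑' k, ‖((Gm m (k+1)).comp (B' k)).comp (H k)‖ :=
          norm_tsum_le_tsum_norm hnorms
    _ ≤ ∑' k, (D * c * stmt16rho μ β m n * K) * γ k :=
        Summable.tsum_le_tsum hterm hnorms hsum0
    _ = (D * c * stmt16rho μ β m n * K) * Γ := by rw [tsum_mul_left]
    _ = q * K * stmt16rho μ β m n := by rw [hqdef]; ring
  -- iterates
  obtain ⟨Gp, hGp0, hGpsucc⟩ :
      ∃ Gp : ℕ → ℕ → ℕ → X →L[ℝ] X, (∀ m n, Gp 0 m n = Gm m n) ∧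
        ∀ p m n, Gp (p+1) m n
          = ∑' k, ((Gm m (k+1)).comp (B' k)).comp (Gp p k n) :=
    ⟨fun p => Nat.rec Gm
      (fun _ prev => fun m n => ∑' k, ((Gm m (k+1)).comp (B' k)).comp (prev k n)) p,
      fun _ _ => rfl, fun _ _ _ => rfl⟩
  have hGpbound : ∀ p m n, ‖Gp p m n‖ ≤ D * q^p * (ν n * stmt16rho μ β m n) := by
    intro p
    induction p with
    | zero =>
      intro m n
      rw [hGp0]
      refine (hGnorm m n).trans ?_
      have := stmt16rho.mono_exp (μ := μ) (m := m) (n := n) hβ1.le hβlam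
      calc D * ν n * stmt16rho μ lam m n ≤ D * ν n * stmt16rho μ β m n :=
            mul_le_mul_of_nonneg_left this (mul_nonneg hD.le (hν0 _).le)
      _ = D * q^0 * (ν n * stmt16rho μ β m n) := by ring
    | succ p ih =>
      intro m n
      rw [hGpsucc]
      have hK : (0:ℝ) ≤ D * q^p * ν n :=
        mul_nonneg (mul_nonneg hD.le (pow_nonneg hq0 p)) (hν0 _).le
      have := (hTsum m n (fun k => Gp p k n) (D * q^p * ν n) hK
        (fun k => by
          calc ‖Gp p k n‖ ≤ D * q^p * (ν n * stmt16rho μ β k n) := ih k n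
          _ = (D * q^p * ν n) * stmt16rho μ β k n := by ring)).2
      refine this.trans ?_
      rw [pow_succ]
      ring_nf
      exact le_refl _
  have hGpsum : ∀ m n, Summable (fun p => Gp p m n) := by
    intro m n
    refine Summable.of_norm_bounded (g := fun p => (D * (ν n * stmt16rho μ β m n)) * q^p)
      ((summable_geometric_of_lt_one hq0 hq1).mul_left _) (fun p => ?_)
    calc ‖Gp p m n‖ ≤ D * q^p * (ν n * stmt16rho μ β m n) := hGpbound p m n
    _ = (D * (ν n * stmt16rho μ β m n)) * q^p := by ring
  -- the perturbed Green kernel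
  set G2 : ℕ → ℕ → X →L[ℝ] X := fun m n => ∑' p, Gp p m n with hG2def
  have hG2norm : ∀ m n, ‖G2 m n‖ ≤ 2*D * (ν n * stmt16rho μ β m n) := by
    intro m n
    have hb : ∀ p, ‖Gp p m n‖ ≤ (D * (ν n * stmt16rho μ β m n)) * q^p := fun p => by
      calc ‖Gp p m n‖ ≤ D * q^p * (ν n * stmt16rho μ β m n) := hGpbound p m n
      _ = (D * (ν n * stmt16rho μ β m n)) * q^p := by ring
    have hgeom : Summable (fun p : ℕ => (D * (ν n * stmt16rho μ β m n)) * q^p) :=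
      (summable_geometric_of_lt_one hq0 hq1).mul_left _
    have hnorms : Summable (fun p => ‖Gp p m n‖) :=
      Summable.of_nonneg_of_le (fun p => norm_nonneg _) hb hgeom
    have hq2 : (1 - q)⁻¹ ≤ 2 := by
      have h1 : (0:ℝ) < 1/2 := by norm_num
      have h2 : (1:ℝ)/2 ≤ 1 - q := by linarith
      calc (1-q)⁻¹ ≤ (1/2 : ℝ)⁻¹ := by
            exact inv_anti₀ h1 h2
      _ = 2 := by norm_num
    have hDνρ : (0:ℝ) ≤ D * (ν n * stmt16rho μ β m n) :=
      mul_nonneg hD.le (mul_nonneg (hν0 _).le stmt16rho.nonneg)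
    calc ‖G2 m n‖ ≤ ∑' p, ‖Gp p m n‖ := norm_tsum_le_tsum_norm hnorms
    _ ≤ ∑' p, (D * (ν n * stmt16rho μ β m n)) * q^p := Summable.tsum_le_tsum hb hnorms hgeom
    _ = (D * (ν n * stmt16rho μ β m n)) * (1-q)⁻¹ := by
        rw [tsum_mul_left, tsum_geometric_of_lt_one hq0 hq1]
    _ ≤ (D * (ν n * stmt16rho μ β m n)) * 2 := mul_le_mul_of_nonneg_left hq2 hDνρ
    _ = 2*D * (ν n * stmt16rho μ β m n) := by ring
  have hG2K : ∀ m n, ‖G2 m n‖ ≤ (2*D*ν n) * stmt16rho μ β m n := fun m n => by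
    calc ‖G2 m n‖ ≤ 2*D * (ν n * stmt16rho μ β m n) := hG2norm m n
    _ = (2*D*ν n) * stmt16rho μ β m n := by ring
  have h2Dν : ∀ n, (0:ℝ) ≤ 2*D*ν n := fun n => mul_nonneg (by linarith) (hν0 n).le
  have hsumG2 : ∀ m n, Summable (fun k => ((Gm m (k+1)).comp (B' k)).comp (G2 k n)) :=
    fun m n => (hTsum m n (fun k => G2 k n) (2*D*ν n) (h2Dν n) (fun k => hG2K k n)).1
  -- the left fixed-point equation
  have hleft : ∀ m n, G2 m n
      = Gm m n + ∑' k, ((Gm m (k+1)).comp (B' k)).comp (G2 k n) := by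
    intro m n
    have h1 : ∀ k, ((Gm m (k+1)).comp (B' k)).comp (G2 k n)
        = ∑' p, ((Gm m (k+1)).comp (B' k)).comp (Gp p k n) := by
      intro k
      have := (ContinuousLinearMap.compL ℝ X X X
        ((Gm m (k+1)).comp (B' k))).map_tsum (hGpsum k n)
      simpa only [ContinuousLinearMap.compL_apply] using this
    have hbd : ∀ (kp : ℕ × ℕ),
        ‖((Gm m (kp.1+1)).comp (B' kp.1)).comp (Gp kp.2 kp.1 n)‖
          ≤ (D * c * (D * ν n)) * (γ kp.1 * q ^ kp.2) := by
      rintro ⟨k, p⟩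
      have hb1 : ‖Gp p k n‖ ≤ (D * q^p * ν n) * stmt16rho μ β k n := by
        calc ‖Gp p k n‖ ≤ D * q^p * (ν n * stmt16rho μ β k n) := hGpbound p k n
        _ = (D * q^p * ν n) * stmt16rho μ β k n := by ring
      calc ‖((Gm m (k+1)).comp (B' k)).comp (Gp p k n)‖
          ≤ ‖(Gm m (k+1)).comp (B' k)‖ * ‖Gp p k n‖ :=
            ContinuousLinearMap.opNorm_comp_le _ _
      _ ≤ (‖Gm m (k+1)‖ * ‖B' k‖) * ((D * q^p * ν n) * stmt16rho μ β k n) :=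
          mul_le_mul (ContinuousLinearMap.opNorm_comp_le _ _) hb1 (norm_nonneg _)
            (mul_nonneg (norm_nonneg _) (norm_nonneg _))
      _ = (‖Gm m (k+1)‖ * ‖B' k‖ * stmt16rho μ β k n) * (D * q^p * ν n) := by ring
      _ ≤ (D * c * γ k * stmt16rho μ β m n) * (D * q^p * ν n) :=
          mul_le_mul_of_nonneg_right (hkey m n k)
            (mul_nonneg (mul_nonneg hD.le (pow_nonneg hq0 p)) (hν0 _).le)
      _ ≤ (D * c * γ k * 1) * (D * q^p * ν n) := by
          refine mul_le_mul_of_nonneg_right ?_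
            (mul_nonneg (mul_nonneg hD.le (pow_nonneg hq0 p)) (hν0 _).le)
          refine mul_le_mul_of_nonneg_left (stmt16rho.le_one hβ1.le) ?_
          exact mul_nonneg (mul_nonneg hD.le hc0.le) (hγ0 k)
      _ = (D * c * (D * ν n)) * (γ k * q ^ p) := by ring
    have hgsum : Summable (fun kp : ℕ × ℕ => (D * c * (D * ν n)) * (γ kp.1 * q ^ kp.2)) := by
      refine Summable.mul_left _ ?_
      exact hγsum.mul_of_nonneg (summable_geometric_of_lt_one hq0 hq1)
        (fun k => hγ0 k) (fun p => pow_nonneg hq0 p)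
    have huncurry : Summable (Function.uncurry fun k p =>
        ((Gm m (k+1)).comp (B' k)).comp (Gp p k n)) :=
      Summable.of_norm_bounded hgsum hbd
    have hk_sum : ∀ k, Summable (fun p =>
        ((Gm m (k+1)).comp (B' k)).comp (Gp p k n)) := by
      intro k
      refine Summable.of_norm_bounded
        (g := fun p => (‖(Gm m (k+1)).comp (B' k)‖ * (D * ν n)) * q^p)
        ((summable_geometric_of_lt_one hq0 hq1).mul_left _) (fun p => ?_)
      calc ‖((Gm m (k+1)).comp (B' k)).comp (Gp p k n)‖
          ≤ ‖(Gm m (k+1)).comp (B' k)‖ * ‖Gp p k n‖ :=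
            ContinuousLinearMap.opNorm_comp_le _ _
      _ ≤ ‖(Gm m (k+1)).comp (B' k)‖ * (D * q^p * (ν n * 1)) := by
          refine mul_le_mul_of_nonneg_left ?_ (norm_nonneg _)
          refine (hGpbound p k n).trans ?_
          refine mul_le_mul_of_nonneg_left ?_
            (mul_nonneg hD.le (pow_nonneg hq0 p))
          exact mul_le_mul_of_nonneg_left (stmt16rho.le_one hβ1.le) (hν0 _).le
      _ = (‖(Gm m (k+1)).comp (B' k)‖ * (D * ν n)) * q^p := by ring
    have hp_sum : ∀ p, Summable (fun k =>
        ((Gm m (k+1)).comp (B' k)).comp (Gp p k n)) := by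
      intro p
      exact (hTsum m n (fun k => Gp p k n) (D * q^p * ν n)
        (mul_nonneg (mul_nonneg hD.le (pow_nonneg hq0 p)) (hν0 _).le)
        (fun k => by
          calc ‖Gp p k n‖ ≤ D * q^p * (ν n * stmt16rho μ β k n) := hGpbound p k n
          _ = (D * q^p * ν n) * stmt16rho μ β k n := by ring)).1
    have hswap : ∑' (k : ℕ) (p : ℕ), ((Gm m (k+1)).comp (B' k)).comp (Gp p k n)
        = ∑' (p : ℕ) (k : ℕ), ((Gm m (k+1)).comp (B' k)).comp (Gp p k n) :=
      (Summable.tsum_comm' huncurry hk_sum hp_sum).symm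
    have hzero_add : ∑' p, Gp p m n = Gp 0 m n + ∑' p, Gp (p+1) m n :=
      Summable.tsum_eq_zero_add (hGpsum m n)
    calc G2 m n = ∑' p, Gp p m n := rfl
    _ = Gp 0 m n + ∑' p, Gp (p+1) m n := hzero_add
    _ = Gm m n + ∑' (p : ℕ) (k : ℕ), ((Gm m (k+1)).comp (B' k)).comp (Gp p k n) := by
        rw [hGp0]
        congr 1
        exact tsum_congr (fun p => hGpsucc p m n)
    _ = Gm m n + ∑' (k : ℕ) (p : ℕ), ((Gm m (k+1)).comp (B' k)).comp (Gp p k n) := by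
        rw [hswap]
    _ = Gm m n + ∑' k, ((Gm m (k+1)).comp (B' k)).comp (G2 k n) := by
        congr 1
        exact (tsum_congr (fun k => h1 k)).symm
  -- the fundamental step identity for G2
  have hId : ∀ m n, G2 (m+1) n
      = (A m + B' m).comp (G2 m n) + (if m+1 = n then (1 : X →L[ℝ] X) else 0) := by
    intro m n
    have e1 := hleft (m+1) n
    have e2 : ∀ k, ((Gm (m+1) (k+1)).comp (B' k)).comp (G2 k n)
        = (A m).comp (((Gm m (k+1)).comp (B' k)).comp (G2 k n))
          + (if k = m then (B' m).comp (G2 m n) else 0) := by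
      intro k
      rw [hGstep m (k+1)]
      by_cases hk : k = m
      · subst hk
        rw [if_pos rfl, if_pos rfl]
        ext v; simp
      · have hk' : ¬(m + 1 = k + 1) := by omega
        rw [if_neg hk', if_neg hk]
        ext v; simp
    have sum1 : Summable (fun k =>
        (A m).comp (((Gm m (k+1)).comp (B' k)).comp (G2 k n))) := by
      have h := ((hsumG2 m n).hasSum.mapL
        (ContinuousLinearMap.compL ℝ X X X (A m)))
      simp only [ContinuousLinearMap.compL_apply] at h
      exact h.summable
    have sum2 : Summable (fun k : ℕ =>
        (if k = m then (B' m).comp (G2 m n) else 0 : X →L[ℝ] X)) :=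
      (hasSum_ite_eq m _).summable
    have e3 : ∑' k, ((Gm (m+1) (k+1)).comp (B' k)).comp (G2 k n)
        = (A m).comp (∑' k, ((Gm m (k+1)).comp (B' k)).comp (G2 k n))
          + (B' m).comp (G2 m n) := by
      calc ∑' k, ((Gm (m+1) (k+1)).comp (B' k)).comp (G2 k n)
          = ∑' k, ((A m).comp (((Gm m (k+1)).comp (B' k)).comp (G2 k n))
            + (if k = m then (B' m).comp (G2 m n) else 0)) := tsum_congr e2
      _ = (∑' k, (A m).comp (((Gm m (k+1)).comp (B' k)).comp (G2 k n)))
            + ∑' k, (if k = m then (B' m).comp (G2 m n) else 0 : X →L[ℝ] X) :=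
          Summable.tsum_add sum1 sum2
      _ = (A m).comp (∑' k, ((Gm m (k+1)).comp (B' k)).comp (G2 k n))
            + (B' m).comp (G2 m n) := by
          congr 1
          · have h := (ContinuousLinearMap.compL ℝ X X X (A m)).map_tsum (hsumG2 m n)
            simp only [ContinuousLinearMap.compL_apply] at h
            exact h.symm
          · exact tsum_ite_eq m _
    have e4 : ∑' k, ((Gm m (k+1)).comp (B' k)).comp (G2 k n) = G2 m n - Gm m n :=
      eq_sub_of_add_eq' (hleft m n).symm
    rw [e3, e4, hGstep m n] at e1
    rw [e1, ContinuousLinearMap.comp_sub, ContinuousLinearMap.add_comp]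
    abel
  -- P 0 annihilates G2 0 n for n ≠ 0
  have hP0G2 : ∀ n, (P 0).comp (G2 0 n) = if n = 0 then P 0 else 0 := by
    intro n
    have h1 : (P 0).comp (G2 0 n)
        = (P 0).comp (Gm 0 n)
          + (P 0).comp (∑' k, ((Gm 0 (k+1)).comp (B' k)).comp (G2 k n)) := by
      rw [hleft 0 n, ContinuousLinearMap.comp_add]
    have h2 : (P 0).comp (∑' k, ((Gm 0 (k+1)).comp (B' k)).comp (G2 k n)) = 0 := by
      have h := (ContinuousLinearMap.compL ℝ X X X (P 0)).map_tsum (hsumG2 0 n)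
      simp only [ContinuousLinearMap.compL_apply] at h
      rw [h]
      have hz : ∀ k, (P 0).comp (((Gm 0 (k+1)).comp (B' k)).comp (G2 k n))
          = (0 : X →L[ℝ] X) := by
        intro k
        have hk : (P 0).comp (Gm 0 (k+1)) = 0 := by
          rw [hPGm (k+1), if_neg (Nat.succ_ne_zero k)]
        calc (P 0).comp (((Gm 0 (k+1)).comp (B' k)).comp (G2 k n))
            = (((P 0).comp (Gm 0 (k+1))).comp (B' k)).comp (G2 k n) := rfl
        _ = 0 := by rw [hk, ContinuousLinearMap.zero_comp, ContinuousLinearMap.zero_comp]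
      rw [tsum_congr hz, tsum_zero]
    rw [h1, h2, add_zero, hPGm n]
  -- uniqueness of decaying solutions with vanishing stable component at 0
  have hCvec : ∀ (z : ℕ → X) (K : ℝ), (∀ j, z (j+1) = (A j + B' j) (z j)) →
      (∀ j, ‖z j‖ ≤ K * stmt16rho μ β j 0) → P 0 (z 0) = 0 → ∀ j, z j = 0 := by
    intro z K hz hK hz0
    have hK0 : 0 ≤ K := by
      have h1 := hK 0
      rw [stmt16rho.self] at h1
      have h2 := le_trans (norm_nonneg (z 0)) h1
      linarith
    have hVC : ∀ j m, j ≤ m → z m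
        = 𝒜 m j (z j) + ∑ k ∈ Finset.Ico j m, 𝒜 m (k+1) (B' k (z k)) := by
      intro j m hjm
      induction m, hjm using Nat.le_induction with
      | base => simp [h𝒜id]
      | succ m hjm ih =>
        have h1 : z (m+1) = A m (z m) + B' m (z m) := by rw [hz m]; rfl
        have h2 : A m (z m)
            = 𝒜 (m+1) j (z j) + ∑ k ∈ Finset.Ico j m, 𝒜 (m+1) (k+1) (B' k (z k)) := by
          rw [ih, map_add, map_sum]
          congr 1
          · rw [h𝒜succ m j hjm]; rfl
          · refine Finset.sum_congr rfl (fun k hk => ?_)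
            have hk' : k + 1 ≤ m := by have := (Finset.mem_Ico.mp hk).2; omega
            rw [h𝒜succ m (k+1) hk']; rfl
        rw [h1, h2, Finset.sum_Ico_succ_top hjm]
        have h3 : 𝒜 (m+1) (m+1) (B' m (z m)) = B' m (z m) := by rw [h𝒜id]; rfl
        rw [h3]
        abel
    set w : ℕ → ℝ := fun j => ‖z j‖ / stmt16rho μ β j 0 with hwdef
    have hw0 : ∀ j, 0 ≤ w j := fun j => div_nonneg (norm_nonneg _) stmt16rho.nonneg
    have hwK : ∀ j, w j ≤ K := fun j => (div_le_iff₀ stmt16rho.pos).mpr (hK j)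
    have hbdd : BddAbove (Set.range w) := ⟨K, by rintro x ⟨j, rfl⟩; exact hwK j⟩
    set S := sSup (Set.range w) with hSdef
    have hwS : ∀ j, w j ≤ S := fun j => le_csSup hbdd ⟨j, rfl⟩
    have hS0 : 0 ≤ S := le_trans (hw0 0) (hwS 0)
    have hzS : ∀ j, ‖z j‖ ≤ S * stmt16rho μ β j 0 := fun j =>
      (div_le_iff₀ stmt16rho.pos).mp (hwS j)
    have hPpart : ∀ m, P m (z m)
        = ∑ k ∈ Finset.Ico 0 m, Gm m (k+1) (B' k (z k)) := by
      intro m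
      have h1 := hVC 0 m (Nat.zero_le m)
      calc P m (z m)
          = P m (𝒜 m 0 (z 0) + ∑ k ∈ Finset.Ico 0 m, 𝒜 m (k+1) (B' k (z k))) := by
            rw [← h1]
      _ = P m (𝒜 m 0 (z 0))
            + ∑ k ∈ Finset.Ico 0 m, P m (𝒜 m (k+1) (B' k (z k))) := by
          rw [map_add, map_sum]
      _ = 0 + ∑ k ∈ Finset.Ico 0 m, Gm m (k+1) (B' k (z k)) := by
          congr 1
          · calc P m (𝒜 m 0 (z 0)) = ((P m).comp (𝒜 m 0)) (z 0) := rfl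
            _ = ((𝒜 m 0).comp (P 0)) (z 0) := by rw [hPA' 0 m (Nat.zero_le m)]
            _ = 𝒜 m 0 (P 0 (z 0)) := rfl
            _ = 0 := by rw [hz0, map_zero]
          · refine Finset.sum_congr rfl (fun k hk => ?_)
            have hk1 : k + 1 ≤ m := by have := (Finset.mem_Ico.mp hk).2; omega
            have hGmk : Gm m (k+1) = (𝒜 m (k+1)).comp (P (k+1)) := by
              simp only [hGmdef]; rw [if_pos hk1]
            calc P m (𝒜 m (k+1) (B' k (z k)))
                = ((P m).comp (𝒜 m (k+1))) (B' k (z k)) := rfl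
            _ = ((𝒜 m (k+1)).comp (P (k+1))) (B' k (z k)) := by rw [hPA' (k+1) m hk1]
            _ = Gm m (k+1) (B' k (z k)) := by rw [hGmk]
      _ = ∑ k ∈ Finset.Ico 0 m, Gm m (k+1) (B' k (z k)) := by rw [zero_add]
    have hBpart : ∀ m M, m ≤ M → z m - P m (z m)
        = B m M (z M) + ∑ k ∈ Finset.Ico m M, Gm m (k+1) (B' k (z k)) := by
      intro m M hmM
      have h1 := hVC m M hmM
      have h2 : B m M (z M)
          = (z m - P m (z m))
            + ∑ k ∈ Finset.Ico m M, B m M (𝒜 M (k+1) (B' k (z k))) := by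
        calc B m M (z M)
            = B m M (𝒜 M m (z m) + ∑ k ∈ Finset.Ico m M, 𝒜 M (k+1) (B' k (z k))) := by
              rw [← h1]
        _ = B m M (𝒜 M m (z m))
              + ∑ k ∈ Finset.Ico m M, B m M (𝒜 M (k+1) (B' k (z k))) := by
            rw [map_add, map_sum]
        _ = (z m - P m (z m))
              + ∑ k ∈ Finset.Ico m M, B m M (𝒜 M (k+1) (B' k (z k))) := by
            rw [hBAop m M hmM (z m)]
      have h3 : ∀ k ∈ Finset.Ico m M,
          B m M (𝒜 M (k+1) (B' k (z k))) = - Gm m (k+1) (B' k (z k)) := by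
        intro k hk
        obtain ⟨hk1, hk2⟩ := Finset.mem_Ico.mp hk
        rw [hBAmid m (k+1) M (by omega) (by omega)]
        have hGmk : Gm m (k+1) = -(B m (k+1)) := by
          simp only [hGmdef]; rw [if_neg (by omega)]
        rw [hGmk]
        simp
      rw [Finset.sum_congr rfl h3] at h2
      rw [Finset.sum_neg_distrib] at h2
      rw [h2]
      abel
    have hterm2 : ∀ m (k : ℕ), ‖Gm m (k+1) (B' k (z k))‖
        ≤ (D * c * stmt16rho μ β m 0 * S) * γ k := by
      intro m k
      calc ‖Gm m (k+1) (B' k (z k))‖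
          ≤ ‖Gm m (k+1)‖ * ‖B' k (z k)‖ := (Gm m (k+1)).le_opNorm _
      _ ≤ ‖Gm m (k+1)‖ * (‖B' k‖ * ‖z k‖) :=
          mul_le_mul_of_nonneg_left ((B' k).le_opNorm _) (norm_nonneg _)
      _ ≤ ‖Gm m (k+1)‖ * (‖B' k‖ * (S * stmt16rho μ β k 0)) :=
          mul_le_mul_of_nonneg_left
            (mul_le_mul_of_nonneg_left (hzS k) (norm_nonneg _)) (norm_nonneg _)
      _ = (‖Gm m (k+1)‖ * ‖B' k‖ * stmt16rho μ β k 0) * S := by ring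
      _ ≤ (D * c * γ k * stmt16rho μ β m 0) * S :=
          mul_le_mul_of_nonneg_right (hkey m 0 k) hS0
      _ = (D * c * stmt16rho μ β m 0 * S) * γ k := by ring
    have hstep : ∀ m M, m ≤ M →
        ‖z m‖ ≤ q * S * stmt16rho μ β m 0 + ‖B m M‖ * ‖z M‖ := by
      intro m M hmM
      have h3 : z m = B m M (z M) + ∑ k ∈ Finset.Ico 0 M, Gm m (k+1) (B' k (z k)) := by
        have hsplit : z m = P m (z m) + (z m - P m (z m)) := by abel
        rw [hsplit, hBpart m M hmM, hPpart m,
          ← Finset.sum_Ico_consecutive _ (Nat.zero_le m) hmM]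
        abel
      have hnonneg : (0:ℝ) ≤ D * c * stmt16rho μ β m 0 * S :=
        mul_nonneg (mul_nonneg (mul_nonneg hD.le hc0.le) stmt16rho.nonneg) hS0
      calc ‖z m‖
          ≤ ‖B m M (z M)‖ + ‖∑ k ∈ Finset.Ico 0 M, Gm m (k+1) (B' k (z k))‖ := by
            rw [h3]; exact norm_add_le _ _
      _ ≤ ‖B m M‖ * ‖z M‖
            + ∑ k ∈ Finset.Ico 0 M, (D * c * stmt16rho μ β m 0 * S) * γ k :=
          add_le_add ((B m M).le_opNorm _)
            ((norm_sum_le _ _).trans (Finset.sum_le_sum (fun k _ => hterm2 m k)))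
      _ ≤ ‖B m M‖ * ‖z M‖ + (D * c * stmt16rho μ β m 0 * S) * Γ := by
          refine add_le_add_right ?_ _
          have hsum_le : ∑ k ∈ Finset.Ico 0 M, γ k ≤ Γ := by
            rw [hΓdef]; exact Summable.sum_le_tsum _ (fun k _ => hγ0 k) hγsum
          calc ∑ k ∈ Finset.Ico 0 M, (D * c * stmt16rho μ β m 0 * S) * γ k
              = (D * c * stmt16rho μ β m 0 * S) * ∑ k ∈ Finset.Ico 0 M, γ k := by
                rw [Finset.mul_sum]
          _ ≤ (D * c * stmt16rho μ β m 0 * S) * Γ :=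
              mul_le_mul_of_nonneg_left hsum_le hnonneg
      _ = q * S * stmt16rho μ β m 0 + ‖B m M‖ * ‖z M‖ := by rw [hqdef]; ring
    have hBzM : ∀ m M, m ≤ M → ‖B m M‖ * ‖z M‖
        ≤ (D * M₀ * μ m ^ lam * (K * μ 0 ^ β)) * μ M ^ (ε - lam - β) := by
      intro m M hmM
      have h0m := hμpos m
      have h0M := hμpos M
      have h00 := hμpos 0
      have h1 : ‖B m M‖ ≤ D * (M₀ * μ M ^ ε) * (μ m ^ lam * μ M ^ (-lam)) := by
        refine (hU m M hmM).trans ?_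
        have hfrac : (μ M / μ m) ^ (-lam) = μ m ^ lam * μ M ^ (-lam) := by
          rw [Real.rpow_neg (div_pos h0M h0m).le,
            Real.div_rpow h0M.le h0m.le, inv_div, div_eq_mul_inv,
            Real.rpow_neg h0M.le]
        calc D * ν M * (μ M / μ m) ^ (-lam)
            ≤ (D * (M₀ * μ M ^ ε)) * (μ M / μ m) ^ (-lam) := by
              refine mul_le_mul_of_nonneg_right ?_ (by positivity)
              exact mul_le_mul_of_nonneg_left (hνM M) hD.le
        _ = D * (M₀ * μ M ^ ε) * (μ m ^ lam * μ M ^ (-lam)) := by rw [hfrac]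
      have h2 : ‖z M‖ ≤ K * (μ 0 ^ β * μ M ^ (-β)) := by
        refine (hK M).trans ?_
        have hρ : stmt16rho μ β M 0 = μ 0 ^ β * μ M ^ (-β) := by
          rw [stmt16rho.eq_rpow hμpos hμm (Nat.zero_le M),
            Real.rpow_neg (div_pos h0M h00).le,
            Real.div_rpow h0M.le h00.le, inv_div, div_eq_mul_inv,
            Real.rpow_neg h0M.le]
        rw [hρ]
      calc ‖B m M‖ * ‖z M‖
          ≤ (D * (M₀ * μ M ^ ε) * (μ m ^ lam * μ M ^ (-lam)))
            * (K * (μ 0 ^ β * μ M ^ (-β))) :=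
            mul_le_mul h1 h2 (norm_nonneg _) (by positivity)
      _ = (D * M₀ * μ m ^ lam * (K * μ 0 ^ β))
            * (μ M ^ ε * μ M ^ (-lam) * μ M ^ (-β)) := by ring
      _ = (D * M₀ * μ m ^ lam * (K * μ 0 ^ β)) * μ M ^ (ε - lam - β) := by
          rw [show ε - lam - β = ε + -lam + -β by ring, Real.rpow_add h0M,
            Real.rpow_add h0M]
    have hzq : ∀ m, ‖z m‖ ≤ q * S * stmt16rho μ β m 0 := by
      intro m
      have h1 : Filter.Tendsto (fun x : ℝ => x ^ (-(lam + β - ε)))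
          Filter.atTop (nhds 0) := tendsto_rpow_neg_atTop (by linarith)
      have h2 : Filter.Tendsto (fun M => μ M ^ (ε - lam - β))
          Filter.atTop (nhds 0) := by
        have heq : (fun M => μ M ^ (ε - lam - β))
            = (fun x : ℝ => x ^ (-(lam + β - ε))) ∘ μ := by
          funext M; simp only [Function.comp_apply]; congr 1; ring
        rw [heq]
        exact h1.comp hμtop
      have h3 := h2.const_mul (D * M₀ * μ m ^ lam * (K * μ 0 ^ β))
      rw [mul_zero] at h3
      have h4 := h3.const_add (q * S * stmt16rho μ β m 0)
      rw [add_zero] at h4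
      refine ge_of_tendsto h4 ?_
      refine Filter.eventually_atTop.mpr ⟨m, fun M hM => ?_⟩
      calc ‖z m‖ ≤ q * S * stmt16rho μ β m 0 + ‖B m M‖ * ‖z M‖ := hstep m M hM
      _ ≤ q * S * stmt16rho μ β m 0
            + (D * M₀ * μ m ^ lam * (K * μ 0 ^ β)) * μ M ^ (ε - lam - β) :=
          add_le_add_right (hBzM m M hM) _
    have hwq : ∀ m, w m ≤ q * S := by
      intro m
      have : w m = ‖z m‖ / stmt16rho μ β m 0 := by rw [hwdef]
      rw [this]
      exact (div_le_iff₀ stmt16rho.pos).mpr (by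
        calc ‖z m‖ ≤ q * S * stmt16rho μ β m 0 := hzq m
        _ = q * S * stmt16rho μ β m 0 := rfl)
    have hSq : S ≤ q * S :=
      csSup_le ⟨w 0, ⟨0, rfl⟩⟩ (by rintro x ⟨j, rfl⟩; exact hwq j)
    have hSzero : S = 0 := by nlinarith
    intro j
    have h1 : w j ≤ 0 := by rw [← hSzero]; exact hwS j
    have h2 : ‖z j‖ ≤ 0 := by
      have h3 := (div_le_iff₀ (stmt16rho.pos (μ := μ) (t := β) (m := j) (n := 0))).mp h1
      rw [zero_mul] at h3
      exact h3
    exact norm_le_zero_iff.mp h2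
  -- operator version
  have hCop : ∀ (H : ℕ → X →L[ℝ] X) (K : ℝ),
      (∀ j, H (j+1) = (A j + B' j).comp (H j)) →
      (∀ j, ‖H j‖ ≤ K * stmt16rho μ β j 0) →
      (P 0).comp (H 0) = 0 → ∀ j, H j = 0 := by
    intro H K hrec hbound hzero j
    ext ξ
    have hres := hCvec (fun i => H i ξ) (K * ‖ξ‖)
      (fun i => by show H (i+1) ξ = (A i + B' i) (H i ξ); rw [hrec i]; rfl)
      (fun i => by
        calc ‖H i ξ‖ ≤ ‖H i‖ * ‖ξ‖ := (H i).le_opNorm ξ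
        _ ≤ (K * stmt16rho μ β i 0) * ‖ξ‖ :=
            mul_le_mul_of_nonneg_right (hbound i) (norm_nonneg ξ)
        _ = (K * ‖ξ‖) * stmt16rho μ β i 0 := by ring)
      (by
        calc P 0 (H 0 ξ) = ((P 0).comp (H 0)) ξ := rfl
        _ = 0 := by rw [hzero]; rfl)
    simpa using hres j
  -- quotient bound for weights
  have hρq : ∀ (r j : ℕ), stmt16rho μ β j r
      ≤ (stmt16rho μ β r 0)⁻¹ * stmt16rho μ β j 0 := by
    intro r j
    have h1 := stmt16rho.tri (μ := μ) hβ1.le j r 0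
    rw [← div_eq_inv_mul]
    exact (le_div_iff₀ stmt16rho.pos).mpr h1
  -- the (★) identity
  have hstar : ∀ n m, (G2 m (n+1)).comp (A n + B' n)
      = G2 m n - (if m = n then (1 : X →L[ℝ] X) else 0) := by
    intro n m
    set H : ℕ → X →L[ℝ] X := fun j =>
      (G2 j (n+1)).comp (A n + B' n) - G2 j n
        + (if j = n then (1 : X →L[ℝ] X) else 0) with hHdef
    have hrec : ∀ j, H (j+1) = (A j + B' j).comp (H j) := by
      intro j
      have e1 := hId j (n+1)
      have e2 := hId j n
      simp only [hHdef]
      by_cases hj : j = n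
      · subst hj
        rw [if_pos rfl, if_neg (by omega)]
        rw [if_pos rfl] at e1
        rw [if_neg (by omega), add_zero] at e2
        rw [e1, e2]
        ext v; simp; try abel
      · rw [if_neg (show ¬(j + 1 = n + 1) by omega), add_zero] at e1
        rw [if_neg hj]
        rw [e1, e2]
        ext v; simp; try abel
    have hbound : ∀ j, ‖H j‖
        ≤ (2*D*ν (n+1) * ‖A n + B' n‖ * (stmt16rho μ β (n+1) 0)⁻¹
            + 2*D*ν n * (stmt16rho μ β n 0)⁻¹
            + (stmt16rho μ β n 0)⁻¹) * stmt16rho μ β j 0 := by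
      intro j
      have hδ : ‖(if j = n then (1 : X →L[ℝ] X) else 0)‖
          ≤ (stmt16rho μ β n 0)⁻¹ * stmt16rho μ β j 0 := by
        split_ifs with h
        · subst h
          have : ‖(1 : X →L[ℝ] X)‖ ≤ 1 := by
            rw [ContinuousLinearMap.one_def]; exact ContinuousLinearMap.norm_id_le
          rw [inv_mul_cancel₀ stmt16rho.pos.ne']
          exact this
        · rw [norm_zero]
          exact mul_nonneg (inv_nonneg.mpr stmt16rho.nonneg) stmt16rho.nonneg
      have h1 : ‖(G2 j (n+1)).comp (A n + B' n)‖
          ≤ (2*D*ν (n+1) * ‖A n + B' n‖ * (stmt16rho μ β (n+1) 0)⁻¹)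
            * stmt16rho μ β j 0 := by
        calc ‖(G2 j (n+1)).comp (A n + B' n)‖
            ≤ ‖G2 j (n+1)‖ * ‖A n + B' n‖ := ContinuousLinearMap.opNorm_comp_le _ _
        _ ≤ (2*D*ν (n+1) * stmt16rho μ β j (n+1)) * ‖A n + B' n‖ :=
            mul_le_mul_of_nonneg_right (hG2K j (n+1)) (norm_nonneg _)
        _ ≤ (2*D*ν (n+1) * ((stmt16rho μ β (n+1) 0)⁻¹ * stmt16rho μ β j 0))
              * ‖A n + B' n‖ := by
            refine mul_le_mul_of_nonneg_right ?_ (norm_nonneg _)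
            exact mul_le_mul_of_nonneg_left (hρq (n+1) j) (h2Dν (n+1))
        _ = (2*D*ν (n+1) * ‖A n + B' n‖ * (stmt16rho μ β (n+1) 0)⁻¹)
              * stmt16rho μ β j 0 := by ring
      have h2 : ‖G2 j n‖ ≤ (2*D*ν n * (stmt16rho μ β n 0)⁻¹) * stmt16rho μ β j 0 := by
        calc ‖G2 j n‖ ≤ 2*D*ν n * stmt16rho μ β j n := hG2K j n
        _ ≤ 2*D*ν n * ((stmt16rho μ β n 0)⁻¹ * stmt16rho μ β j 0) :=
            mul_le_mul_of_nonneg_left (hρq n j) (h2Dν n)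
        _ = (2*D*ν n * (stmt16rho μ β n 0)⁻¹) * stmt16rho μ β j 0 := by ring
      calc ‖H j‖ ≤ ‖(G2 j (n+1)).comp (A n + B' n) - G2 j n‖
            + ‖(if j = n then (1 : X →L[ℝ] X) else 0)‖ := by
            simp only [hHdef]; exact norm_add_le _ _
      _ ≤ ‖(G2 j (n+1)).comp (A n + B' n)‖ + ‖G2 j n‖
            + ‖(if j = n then (1 : X →L[ℝ] X) else 0)‖ := by
          refine add_le_add_left ?_ _
          exact norm_sub_le _ _
      _ ≤ (2*D*ν (n+1) * ‖A n + B' n‖ * (stmt16rho μ β (n+1) 0)⁻¹) * stmt16rho μ β j 0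
            + (2*D*ν n * (stmt16rho μ β n 0)⁻¹) * stmt16rho μ β j 0
            + (stmt16rho μ β n 0)⁻¹ * stmt16rho μ β j 0 :=
          add_le_add (add_le_add h1 h2) hδ
      _ = _ := by ring
    have hzero : (P 0).comp (H 0) = 0 := by
      simp only [hHdef]
      rw [ContinuousLinearMap.comp_add, ContinuousLinearMap.comp_sub]
      have h1 : (P 0).comp ((G2 0 (n+1)).comp (A n + B' n))
          = ((P 0).comp (G2 0 (n+1))).comp (A n + B' n) := rfl
      rw [h1, hP0G2 (n+1), if_neg (Nat.succ_ne_zero n),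
        ContinuousLinearMap.zero_comp, hP0G2 n]
      by_cases hn : n = 0
      · subst hn
        rw [if_pos rfl, if_pos rfl]
        ext v; simp
      · rw [if_neg hn, if_neg (fun h => hn h.symm)]
        simp
    have h := hCop H _ hrec hbound hzero m
    simp only [hHdef] at h
    have h2 : (G2 m (n+1)).comp (A n + B' n)
        - (G2 m n - (if m = n then (1 : X →L[ℝ] X) else 0))
        = (G2 m (n+1)).comp (A n + B' n) - G2 m n
          + (if m = n then (1 : X →L[ℝ] X) else 0) := by abel
    rw [← sub_eq_zero, h2]
    exact h
  -- projection identities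
  have hJ : ∀ n j, (G2 j n).comp (G2 n n) = (if n ≤ j then G2 j n else 0) := by
    intro n j
    set H : ℕ → X →L[ℝ] X := fun i =>
      (G2 i n).comp (G2 n n) - (if n ≤ i then G2 i n else 0) with hHdef
    have hrec : ∀ i, H (i+1) = (A i + B' i).comp (H i) := by
      intro i
      have e1 := hId i n
      simp only [hHdef]
      rcases lt_trichotomy (i+1) n with hi | hi | hi
      · rw [if_neg (by omega), if_neg (by omega)]
        rw [if_neg (by omega), add_zero] at e1
        rw [e1]
        ext v; simp
      · subst hi
        rw [if_pos (le_refl (i+1)), if_neg (by omega)]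
        rw [if_pos rfl] at e1
        rw [e1]
        ext v; simp; try abel
      · rw [if_pos (by omega), if_pos (by omega)]
        rw [if_neg (by omega), add_zero] at e1
        rw [e1]
        ext v; simp; try abel
    have hbound : ∀ i, ‖H i‖
        ≤ (2*D*ν n * (2*D*ν n + 1) * (stmt16rho μ β n 0)⁻¹) * stmt16rho μ β i 0 := by
      intro i
      have hnn : (0:ℝ) ≤ 2*D*ν n * (2*D*ν n + 1) :=
        mul_nonneg (h2Dν n) (by linarith [h2Dν n])
      have h1 : ‖(if n ≤ i then G2 i n else 0 : X →L[ℝ] X)‖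
          ≤ 2*D*ν n * stmt16rho μ β i n := by
        split_ifs with h
        · exact hG2K i n
        · rw [norm_zero]; exact mul_nonneg (h2Dν n) stmt16rho.nonneg
      have h2 : ‖G2 n n‖ ≤ 2*D*ν n := by
        have := hG2K n n
        rw [stmt16rho.self, mul_one] at this
        exact this
      calc ‖H i‖ ≤ ‖(G2 i n).comp (G2 n n)‖
            + ‖(if n ≤ i then G2 i n else 0 : X →L[ℝ] X)‖ := by
            simp only [hHdef]; exact norm_sub_le _ _
      _ ≤ ‖G2 i n‖ * ‖G2 n n‖ + 2*D*ν n * stmt16rho μ β i n :=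
          add_le_add (ContinuousLinearMap.opNorm_comp_le _ _) h1
      _ ≤ (2*D*ν n * stmt16rho μ β i n) * (2*D*ν n)
            + 2*D*ν n * stmt16rho μ β i n := by
          refine add_le_add_left ?_ _
          exact mul_le_mul (hG2K i n) h2 (norm_nonneg _)
            (mul_nonneg (h2Dν n) stmt16rho.nonneg)
      _ = (2*D*ν n * (2*D*ν n + 1)) * stmt16rho μ β i n := by ring
      _ ≤ (2*D*ν n * (2*D*ν n + 1))
            * ((stmt16rho μ β n 0)⁻¹ * stmt16rho μ β i 0) :=
          mul_le_mul_of_nonneg_left (hρq n i) hnn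
      _ = _ := by ring
    have hzero : (P 0).comp (H 0) = 0 := by
      simp only [hHdef]
      rw [ContinuousLinearMap.comp_sub]
      have h1 : (P 0).comp ((G2 0 n).comp (G2 n n))
          = ((P 0).comp (G2 0 n)).comp (G2 n n) := rfl
      rw [h1, hP0G2 n]
      by_cases hn : n = 0
      · subst hn
        rw [if_pos rfl, if_pos (le_refl 0), hP0G2 0, if_pos rfl, sub_self]
      · rw [if_neg hn, if_neg (by omega), ContinuousLinearMap.zero_comp,
          ContinuousLinearMap.comp_zero, sub_zero]
    have h := hCop H _ hrec hbound hzero j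
    simp only [hHdef] at h
    exact sub_eq_zero.mp h
  have hEE : ∀ m n, m < n → (G2 m m).comp (G2 m n) = 0 := by
    intro m n hmn
    set H : ℕ → X →L[ℝ] X := fun j =>
      (G2 j m).comp (G2 m n) + (if j < m then G2 j n else 0) with hHdef
    have hrec : ∀ j, H (j+1) = (A j + B' j).comp (H j) := by
      intro j
      have e1 := hId j m
      simp only [hHdef]
      rcases lt_trichotomy (j+1) m with hj | hj | hj
      · have e2 := hId j n
        rw [if_pos hj, if_pos (by omega)]
        rw [if_neg (by omega), add_zero] at e1
        rw [if_neg (by omega), add_zero] at e2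
        rw [e1, e2]
        ext v; simp
      · subst hj
        have e2 := hId j n
        rw [if_neg (by omega), if_pos (by omega)]
        rw [if_pos rfl] at e1
        rw [if_neg (by omega), add_zero] at e2
        rw [e1, e2]
        ext v; simp; try abel
      · rw [if_neg (by omega), if_neg (by omega)]
        rw [if_neg (by omega), add_zero] at e1
        rw [e1]
        ext v; simp
    have hbound : ∀ j, ‖H j‖
        ≤ (2*D*ν m * (2*D*ν n) * (stmt16rho μ β m 0)⁻¹
            + 2*D*ν n * (stmt16rho μ β n 0)⁻¹) * stmt16rho μ β j 0 := by
      intro j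
      have h2 : ‖G2 m n‖ ≤ 2*D*ν n := by
        have h3 := hG2K m n
        have h4 := stmt16rho.le_one (μ := μ) (m := m) (n := n) hβ1.le
        nlinarith [h2Dν n, stmt16rho.nonneg (μ := μ) (t := β) (m := m) (n := n)]
      have h1 : ‖(if j < m then G2 j n else 0 : X →L[ℝ] X)‖
          ≤ 2*D*ν n * ((stmt16rho μ β n 0)⁻¹ * stmt16rho μ β j 0) := by
        split_ifs with h
        · exact (hG2K j n).trans (mul_le_mul_of_nonneg_left (hρq n j) (h2Dν n))
        · rw [norm_zero]
          refine mul_nonneg (h2Dν n) ?_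
          exact mul_nonneg (inv_nonneg.mpr stmt16rho.nonneg) stmt16rho.nonneg
      calc ‖H j‖ ≤ ‖(G2 j m).comp (G2 m n)‖
            + ‖(if j < m then G2 j n else 0 : X →L[ℝ] X)‖ := by
            simp only [hHdef]; exact norm_add_le _ _
      _ ≤ ‖G2 j m‖ * ‖G2 m n‖
            + 2*D*ν n * ((stmt16rho μ β n 0)⁻¹ * stmt16rho μ β j 0) :=
          add_le_add (ContinuousLinearMap.opNorm_comp_le _ _) h1
      _ ≤ (2*D*ν m * ((stmt16rho μ β m 0)⁻¹ * stmt16rho μ β j 0)) * (2*D*ν n)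
            + 2*D*ν n * ((stmt16rho μ β n 0)⁻¹ * stmt16rho μ β j 0) := by
          refine add_le_add_left ?_ _
          refine mul_le_mul ?_ h2 (norm_nonneg _) ?_
          · exact (hG2K j m).trans (mul_le_mul_of_nonneg_left (hρq m j) (h2Dν m))
          · refine mul_nonneg (h2Dν m) ?_
            exact mul_nonneg (inv_nonneg.mpr stmt16rho.nonneg) stmt16rho.nonneg
      _ = _ := by ring
    have hzero : (P 0).comp (H 0) = 0 := by
      simp only [hHdef]
      rw [ContinuousLinearMap.comp_add]
      have h1 : (P 0).comp ((G2 0 m).comp (G2 m n))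
          = ((P 0).comp (G2 0 m)).comp (G2 m n) := rfl
      rw [h1, hP0G2 m]
      by_cases hm : m = 0
      · subst hm
        rw [if_pos rfl, if_neg (lt_irrefl 0), ContinuousLinearMap.comp_zero, add_zero,
          hP0G2 n, if_neg (by omega)]
      · rw [if_neg hm, ContinuousLinearMap.zero_comp, if_pos (by omega), hP0G2 n,
          if_neg (by omega)]
        simp
    have h := hCop H _ hrec hbound hzero m
    simp only [hHdef] at h
    rw [if_neg (lt_irrefl m), add_zero] at h
    exact h
  -- transport of the projection along the perturbed evolution
  have hA'G : ∀ n m, n ≤ m → (𝒜' m n).comp (G2 n n) = G2 m n := by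
    intro n m h
    induction m, h using Nat.le_induction with
    | base => rw [hA'id]; ext v; simp
    | succ m hnm ih =>
      rw [hA'succ m n hnm, ContinuousLinearMap.comp_assoc, ih, hId m n,
        if_neg (by omega), add_zero]
  -- assembling the dichotomy for the perturbed equation
  refine ⟨fun n => G2 n n,
    fun m n => (if m = n then (1 : X →L[ℝ] X) else 0) - G2 m n,
    2*D + 1, β, by linarith, hβ1, ?_, ?_, ?_, ?_, ?_, ?_, ?_, ?_⟩
  · -- projections
    beta_reduce
    intro n
    have h := hJ n n
    rw [if_pos (le_refl n)] at h
    exact h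
  · -- invariance
    beta_reduce
    intro n
    have h1 : (A n + B' n).comp (G2 n n) = G2 (n+1) n := by
      rw [hId n n, if_neg (by omega), add_zero]
    have h2 := hstar n (n+1)
    rw [if_neg (by omega), sub_zero] at h2
    rw [h1, ← h2]
  · -- diagonal of B''
    beta_reduce
    intro n
    rw [if_pos rfl]
  · -- step for B''
    beta_reduce
    intro m n hmn
    have h1 : (A m + B' m).comp (G2 m n)
        = G2 (m+1) n - (if m+1 = n then (1 : X →L[ℝ] X) else 0) := by
      rw [hId m n]; abel
    rw [if_neg (by omega)]
    rw [ContinuousLinearMap.comp_sub, ContinuousLinearMap.comp_zero, h1]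
    abel
  · -- kernel condition
    beta_reduce
    intro m n hmn
    rcases eq_or_lt_of_le hmn with h | h
    · subst h
      rw [if_pos rfl, ContinuousLinearMap.comp_sub]
      have h1 : (G2 m m).comp (1 : X →L[ℝ] X) = G2 m m := by ext v; simp
      have h2 := hJ m m
      rw [if_pos (le_refl m)] at h2
      rw [h1, h2, sub_self]
    · rw [if_neg (by omega), ContinuousLinearMap.comp_sub, hEE m n h,
        ContinuousLinearMap.comp_zero, sub_zero]
  · -- invertibility on kernels
    beta_reduce
    intro n v hv
    rw [if_neg (by omega)]
    have h2 := hstar n n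
    rw [if_pos rfl] at h2
    have h3 : (G2 n (n+1)) ((A n + B' n) v)
        = ((G2 n (n+1)).comp (A n + B' n)) v := rfl
    calc ((0 : X →L[ℝ] X) - G2 n (n+1)) ((A n + B' n) v)
        = -((G2 n (n+1)) ((A n + B' n) v)) := by simp
    _ = -((G2 n n - 1) v) := by rw [h3, h2]
    _ = v - G2 n n v := by simp
    _ = v := by rw [hv, sub_zero]
  · -- bound on the stable part
    beta_reduce
    intro m n hnm
    rw [hA'G n m hnm]
    have h1 : 2*D*ν n * stmt16rho μ β m n ≤ (2*D+1) * ν n * stmt16rho μ β m n := by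
      have h2 := stmt16rho.nonneg (μ := μ) (t := β) (m := m) (n := n)
      have h3 := (hν0 n).le
      nlinarith
    calc ‖G2 m n‖ ≤ 2*D*ν n * stmt16rho μ β m n := hG2K m n
    _ ≤ (2*D+1) * ν n * stmt16rho μ β m n := h1
    _ = (2*D+1) * ν n * (μ m / μ n) ^ (-β) := by
        rw [stmt16rho.eq_rpow hμpos hμm hnm]
  · -- bound on the unstable part
    beta_reduce
    intro m n hmn
    have hρ : stmt16rho μ β m n = (μ n / μ m) ^ (-β) := by
      rw [stmt16rho.symm]; exact stmt16rho.eq_rpow hμpos hμm hmn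
    have h1 : ‖(if m = n then (1 : X →L[ℝ] X) else 0)‖ ≤ ν n * stmt16rho μ β m n := by
      split_ifs with h
      · subst h
        rw [stmt16rho.self, mul_one]
        have h2 : ‖(1 : X →L[ℝ] X)‖ ≤ 1 := by
          rw [ContinuousLinearMap.one_def]; exact ContinuousLinearMap.norm_id_le
        linarith [hν m]
      · rw [norm_zero]
        exact mul_nonneg (hν0 n).le stmt16rho.nonneg
    calc ‖(if m = n then (1 : X →L[ℝ] X) else 0) - G2 m n‖
        ≤ ‖(if m = n then (1 : X →L[ℝ] X) else 0)‖ + ‖G2 m n‖ := norm_sub_le _ _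
    _ ≤ ν n * stmt16rho μ β m n + 2*D*ν n * stmt16rho μ β m n :=
        add_le_add h1 (hG2K m n)
    _ = (2*D+1) * ν n * stmt16rho μ β m n := by ring
    _ = (2*D+1) * ν n * (μ n / μ m) ^ (-β) := by rw [hρ]
end

section
/- For the two-sided stable/unstable splitting under admissibility: define S(n) = {v ∈ X : sup_{m≥n} ‖𝒜(m,n)v‖ < ∞} and U(n) = {v ∈ X : there exists (z_m)_{m≤n} with z_n = v, z_m = A_{m-1}z_{m-1} for m ≤ n, and sup_{m≤n}‖z_m‖ < ∞}. Assuming the three two-sided admissibility hypotheses (unique solvability in (ℓ^1_β, ℓ^∞_β), (ℓ^1_{-β}, ℓ^∞_{-β}), and (ℓ^1_{β,|·|}, ℓ^∞_{β,|·|})), one has X = S(n) ⊕ U(n) for every n ∈ ℤ. -/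
/-- Two-sided splitting under admissibility: assuming unique solvability of
`x_{n+1} − A_n x_n = y_{n+1}` in the pairs `(ℓ^1_β, ℓ^∞_β)`,
`(ℓ^1_{-β}, ℓ^∞_{-β})` and `(ℓ^1_{β,|·|}, ℓ^∞_{β,|·|})` of weighted spaces of
two-sided sequences, with `S(n) = {v : sup_{m≥n} ‖𝒜(m,n)v‖ < ∞}` and
`U(n) = {v : ∃ bounded full backward orbit (z_m)_{m≤n} ending at v}`, one has
`X = S(n) ⊕ U(n)` for every `n ∈ ℤ`. -/
theorem stmt18 {X : Type*} [NormedAddCommGroup X] [NormedSpace ℝ X] [CompleteSpace X]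
    (μ : ℤ → ℝ) (hμpos : ∀ n, 0 < μ n) (hμmono : StrictMono μ)
    (hμtop : Filter.Tendsto μ Filter.atTop Filter.atTop)
    (hμbot : Filter.Tendsto μ Filter.atBot (nhds 0))
    (ν : ℤ → ℝ) (hν : ∀ n, 1 ≤ ν n)
    (n₀ : ℤ) (hn₀ : ∀ n, n < n₀ → μ n < 1) (hn₀' : ∀ n, n₀ ≤ n → 1 ≤ μ n)
    (A : ℤ → X →L[ℝ] X) (𝒜 : ℤ → ℤ → X →L[ℝ] X)
    (h𝒜id : ∀ n, 𝒜 n n = 1)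
    (h𝒜succ : ∀ m n, n ≤ m → 𝒜 (m + 1) n = (A m).comp (𝒜 m n))
    (β : ℝ) (hβ : 0 < β)
    -- admissibility of the pair `(ℓ^1_β, ℓ^∞_β)`
    (hadm₁ : ∀ y : ℤ → X, Summable (fun n => μ n ^ β * ν n * ‖y n‖) →
      ∃! x : ℤ → X, (∃ C, ∀ n, μ n ^ β * ‖x n‖ ≤ C) ∧
        ∀ n, x (n + 1) - A n (x n) = y (n + 1))
    -- admissibility of the pair `(ℓ^1_{-β}, ℓ^∞_{-β})`
    (hadm₂ : ∀ y : ℤ → X, Summable (fun n => μ n ^ (-β) * ν n * ‖y n‖) →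
      ∃! x : ℤ → X, (∃ C, ∀ n, μ n ^ (-β) * ‖x n‖ ≤ C) ∧
        ∀ n, x (n + 1) - A n (x n) = y (n + 1))
    -- admissibility of the pair `(ℓ^1_{β,|·|}, ℓ^∞_{β,|·|})`, whose weight is
    -- `μ_n^{|β|}` for `n < n₀` and `μ_n^{-|β|}` for `n ≥ n₀`
    (hadm₃ : ∀ y : ℤ → X,
      Summable (fun n => (if n < n₀ then μ n ^ |β| else μ n ^ (-|β|)) * ν n * ‖y n‖) →
      ∃! x : ℤ → X,
        (∃ C, ∀ n, (if n < n₀ then μ n ^ |β| else μ n ^ (-|β|)) * ‖x n‖ ≤ C) ∧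
        ∀ n, x (n + 1) - A n (x n) = y (n + 1))
    (S U : ℤ → Set X)
    (hSdef : ∀ n, S n = {v : X | ∃ C, ∀ m, n ≤ m → ‖𝒜 m n v‖ ≤ C})
    (hUdef : ∀ n, U n = {v : X | ∃ z : ℤ → X, z n = v ∧
      (∀ m, m < n → z (m + 1) = A m (z m)) ∧ ∃ C, ∀ m, m ≤ n → ‖z m‖ ≤ C}) :
    ∀ n, ∀ v : X, ∃! p : X × X, p.1 ∈ S n ∧ p.2 ∈ U n ∧ v = p.1 + p.2 := by
  have hβabs : |β| = β := abs_of_pos hβ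
  rw [hβabs] at hadm₃
  have hwle : ∀ m : ℤ, (if m < n₀ then μ m ^ β else μ m ^ (-β)) ≤ 1 := by
    intro m
    split_ifs with h
    · exact Real.rpow_le_one (hμpos m).le (hn₀ m h).le hβ.le
    · exact Real.rpow_le_one_of_one_le_of_nonpos (hn₀' m (not_lt.1 h)) (neg_nonpos.2 hβ.le)
  intro n v
  simp only [hSdef, hUdef, Set.mem_setOf_eq]
  -- Key: the only globally bounded full orbit is zero
  have hkey : ∀ s u : X,
      (∃ C, ∀ m, n ≤ m → ‖𝒜 m n s‖ ≤ C) →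
      (∃ z : ℤ → X, z n = u ∧ (∀ m, m < n → z (m + 1) = A m (z m)) ∧
        ∃ C, ∀ m, m ≤ n → ‖z m‖ ≤ C) →
      s + u = 0 → s = 0 ∧ u = 0 := by
    rintro s u ⟨Cs, hCs⟩ ⟨z, hzn, hzrec, Cz, hCz⟩ hsu
    have hsum0 : Summable (fun m : ℤ =>
        (if m < n₀ then μ m ^ β else μ m ^ (-β)) * ν m * ‖(0 : ℤ → X) m‖) := by
      simpa using summable_zero
    obtain ⟨x₀, -, hx₀u⟩ := hadm₃ 0 hsum0
    set x : ℤ → X := fun m => if n ≤ m then 𝒜 m n s else -(z m) with hx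
    have hxn : x n = s := by simp [hx, h𝒜id n]
    have hxprop : (∃ C, ∀ m, (if m < n₀ then μ m ^ β else μ m ^ (-β)) * ‖x m‖ ≤ C) ∧
        ∀ m, x (m + 1) - A m (x m) = (0 : ℤ → X) (m + 1) := by
      refine ⟨⟨max Cs Cz, fun m => ?_⟩, fun m => ?_⟩
      · have hb : ‖x m‖ ≤ max Cs Cz := by
          by_cases h : n ≤ m
          · simp only [hx, if_pos h]
            exact le_max_of_le_left (hCs m h)
          · simp only [hx, if_neg h, norm_neg]
            exact le_max_of_le_right (hCz m (le_of_not_ge h))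
        calc (if m < n₀ then μ m ^ β else μ m ^ (-β)) * ‖x m‖
            ≤ 1 * max Cs Cz := mul_le_mul (hwle m) hb (norm_nonneg _) zero_le_one
          _ = max Cs Cz := one_mul _
      · simp only [Pi.zero_apply, sub_eq_zero]
        by_cases h : n ≤ m
        · have h' : n ≤ m + 1 := by linarith
          simp only [hx, if_pos h, if_pos h', h𝒜succ m n h]
          rfl
        · push_neg at h
          simp only [hx, if_neg (not_le.2 h), map_neg]
          by_cases h2 : n ≤ m + 1
          · have h3 : m + 1 = n := le_antisymm (by linarith) h2
            rw [if_pos h2]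
            have e1 : 𝒜 (m + 1) n s = s := by rw [h3, h𝒜id]; rfl
            have e2 : z (m + 1) = A m (z m) := hzrec m h
            rw [h3, hzn] at e2
            rw [e1, ← e2]
            exact eq_neg_of_add_eq_zero_left hsu
          · rw [if_neg h2, hzrec m h]
    have h0prop : (∃ C, ∀ m, (if m < n₀ then μ m ^ β else μ m ^ (-β)) *
          ‖(0 : ℤ → X) m‖ ≤ C) ∧
        ∀ m, (0 : ℤ → X) (m + 1) - A m ((0 : ℤ → X) m) = (0 : ℤ → X) (m + 1) := by
      exact ⟨⟨0, fun m => by simp⟩, fun m => by simp⟩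
    have hx0 : x = 0 := (hx₀u x hxprop).trans (hx₀u 0 h0prop).symm
    have hs0 : s = 0 := by rw [← hxn, hx0]; rfl
    refine ⟨hs0, ?_⟩
    rw [hs0, zero_add] at hsu
    exact hsu
  -- Existence: solve with a delta inhomogeneity at index n
  set y : ℤ → X := fun m => if m = n then v else 0 with hy
  have hsupp : ∀ (f : ℤ → ℝ), (∀ m, y m = 0 → f m = 0) → Summable f := by
    intro f hf
    refine summable_of_ne_finset_zero (s := {n}) fun m hm => ?_
    apply hf
    simp only [hy, if_neg (by simpa using hm)]
  obtain ⟨x₁, ⟨⟨C₁, hC₁⟩, heq₁⟩, -⟩ := hadm₁ y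
    (hsupp _ fun m hm => by rw [hm, norm_zero, mul_zero])
  obtain ⟨x₂, ⟨⟨C₂, hC₂⟩, heq₂⟩, -⟩ := hadm₂ y
    (hsupp _ fun m hm => by rw [hm, norm_zero, mul_zero])
  obtain ⟨x₃, -, hx₃u⟩ := hadm₃ y
    (hsupp _ fun m hm => by rw [hm, norm_zero, mul_zero])
  -- both x₁ and x₂ lie in the third space, hence coincide
  have h13 : x₁ = x₃ := by
    refine hx₃u x₁ ⟨⟨C₁, fun m => ?_⟩, heq₁⟩
    split_ifs with h
    · exact hC₁ m
    · refine le_trans (mul_le_mul_of_nonneg_right ?_ (norm_nonneg _)) (hC₁ m)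
      exact Real.rpow_le_rpow_of_exponent_le (hn₀' m (not_lt.1 h)) (by linarith)
  have h23 : x₂ = x₃ := by
    refine hx₃u x₂ ⟨⟨C₂, fun m => ?_⟩, heq₂⟩
    split_ifs with h
    · refine le_trans (mul_le_mul_of_nonneg_right ?_ (norm_nonneg _)) (hC₂ m)
      exact Real.rpow_le_rpow_of_exponent_ge (hμpos m) (hn₀ m h).le (by linarith)
    · exact hC₂ m
  have h12 : x₁ = x₂ := h13.trans h23.symm
  have hC₂' : ∀ m, μ m ^ (-β) * ‖x₁ m‖ ≤ C₂ := by rw [h12]; exact hC₂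
  -- global boundedness of x₁
  have hbound : ∀ m, ‖x₁ m‖ ≤ max C₁ C₂ := by
    intro m
    rcases le_or_gt 1 (μ m) with h | h
    · refine le_max_of_le_left (le_trans ?_ (hC₁ m))
      exact le_mul_of_one_le_left (norm_nonneg _) (Real.one_le_rpow h hβ.le)
    · refine le_max_of_le_right (le_trans ?_ (hC₂' m))
      exact le_mul_of_one_le_left (norm_nonneg _)
        (Real.one_le_rpow_of_pos_of_le_one_of_nonpos (hμpos m) h.le (neg_nonpos.2 hβ.le))
  -- forward orbit of x₁ from time n
  have hforward : ∀ m, n ≤ m → 𝒜 m n (x₁ n) = x₁ m := by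
    refine Int.le_induction ?_ ?_
    · rw [h𝒜id]; rfl
    · intro m hm ih
      rw [h𝒜succ m n hm]
      have hrec := heq₁ m
      have hy0 : y (m + 1) = 0 := by simp only [hy]; rw [if_neg (by omega)]
      rw [hy0, sub_eq_zero] at hrec
      rw [ContinuousLinearMap.comp_apply, ih, ← hrec]
  -- the candidate decomposition
  have hSmem : ∃ C, ∀ m, n ≤ m → ‖𝒜 m n (x₁ n)‖ ≤ C :=
    ⟨max C₁ C₂, fun m hm => by rw [hforward m hm]; exact hbound m⟩
  have hUmem : ∃ z : ℤ → X, z n = v - x₁ n ∧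
      (∀ m, m < n → z (m + 1) = A m (z m)) ∧ ∃ C, ∀ m, m ≤ n → ‖z m‖ ≤ C := by
    refine ⟨fun m => y m - x₁ m, by simp [hy], fun m hm => ?_,
      ‖v‖ + max C₁ C₂, fun m _ => ?_⟩
    · have hrec := heq₁ m
      rw [sub_eq_iff_eq_add] at hrec
      have hym : y m = 0 := by simp only [hy]; rw [if_neg (by omega)]
      show y (m + 1) - x₁ (m + 1) = A m (y m - x₁ m)
      rw [hym, zero_sub, map_neg, hrec]
      abel
    · refine le_trans (norm_sub_le _ _) (add_le_add ?_ (hbound m))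
      simp only [hy]
      split_ifs <;> simp
  refine ⟨(x₁ n, v - x₁ n), ⟨hSmem, hUmem, ?_⟩, ?_⟩
  · show v = x₁ n + (v - x₁ n)
    abel
  -- uniqueness
  rintro ⟨s', u'⟩ ⟨⟨Cs', hCs'⟩, ⟨z', hz'n, hz'rec, Cz', hCz'⟩, hv'⟩
  have hSd : ∃ C, ∀ m, n ≤ m → ‖𝒜 m n (s' - x₁ n)‖ ≤ C := by
    obtain ⟨Cp, hCp⟩ := hSmem
    exact ⟨Cs' + Cp, fun m hm => by
      rw [map_sub]
      exact le_trans (norm_sub_le _ _) (add_le_add (hCs' m hm) (hCp m hm))⟩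
  have hUd : ∃ z : ℤ → X, z n = u' - (v - x₁ n) ∧
      (∀ m, m < n → z (m + 1) = A m (z m)) ∧ ∃ C, ∀ m, m ≤ n → ‖z m‖ ≤ C := by
    obtain ⟨zq, hzqn, hzqrec, Cq, hCq⟩ := hUmem
    refine ⟨fun m => z' m - zq m, ?_, fun m hm => ?_, Cz' + Cq, fun m hm => ?_⟩
    · show z' n - zq n = u' - (v - x₁ n)
      rw [hz'n, hzqn]
    · show z' (m + 1) - zq (m + 1) = A m (z' m - zq m)
      rw [hz'rec m hm, hzqrec m hm, map_sub]
    · exact le_trans (norm_sub_le _ _) (add_le_add (hCz' m hm) (hCq m hm))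
  have hzero : (s' - x₁ n) + (u' - (v - x₁ n)) = 0 := by
    have : v = s' + u' := hv'
    rw [this]; abel
  obtain ⟨h1, h2⟩ := hkey _ _ hSd hUd hzero
  have e1 : s' = x₁ n := by rwa [sub_eq_zero] at h1
  have e2 : u' = v - x₁ n := by rwa [sub_eq_zero] at h2
  rw [Prod.mk.injEq]
  exact ⟨e1, e2⟩
end

section
/- Counterexample: let X = ℝ, μ_n = e^{e^n}, A_n = (μ_{n+1}/μ_n)^{-1/2}, so 𝒜(m,n) = (μ_m/μ_n)^{-1/2} for m ≥ n, and φ_n^μ = μ_n/(μ_{n+1} − μ_n). Let y_0 = 0 and y_n = 1 for n ≥ 1. Then there is no bounded sequence (x_n)_{n∈ℕ} with x_0 = 0 satisfying φ_{n+1}^μ (x_{n+1} − A_n x_n) = y_{n+1} for all n ∈ ℕ. In fact any such sequence satisfies x_n ≥ 2((μ_{n+1}/μ_n)^{1/2} − (μ_1/μ_n)^{1/2}) for n ≥ 1, which tends to ∞. -/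
/-- Counterexample: for `X = ℝ`, `μ_n = e^{e^n}`, `A_n = (μ_{n+1}/μ_n)^{-1/2}`
and `φ_n^μ = μ_n/(μ_{n+1} − μ_n)`, with input `y_0 = 0`, `y_n = 1` (`n ≥ 1`),
any sequence `(x_n)` with `x_0 = 0` satisfying
`φ_{n+1}^μ (x_{n+1} − A_n x_n) = y_{n+1}` for all `n` obeys
`x_n ≥ 2((μ_{n+1}/μ_n)^{1/2} − (μ_1/μ_n)^{1/2})` for `n ≥ 1`; in particular no
such bounded sequence exists. -/
theorem stmt19
    (μ : ℕ → ℝ) (hμ : ∀ n, μ n = Real.exp (Real.exp n))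
    (A : ℕ → ℝ) (hA : ∀ n, A n = (μ (n + 1) / μ n) ^ (-(1 : ℝ) / 2))
    (φ : ℕ → ℝ) (hφ : ∀ n, φ n = μ n / (μ (n + 1) - μ n))
    (y : ℕ → ℝ) (hy0 : y 0 = 0) (hy : ∀ n, 1 ≤ n → y n = 1) :
    (∀ x : ℕ → ℝ, x 0 = 0 →
      (∀ n, φ (n + 1) * (x (n + 1) - A n * x n) = y (n + 1)) →
      ∀ n, 1 ≤ n →
        2 * ((μ (n + 1) / μ n) ^ ((1 : ℝ) / 2) - (μ 1 / μ n) ^ ((1 : ℝ) / 2))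
          ≤ x n)
    ∧ ¬ ∃ x : ℕ → ℝ, (∃ C, ∀ n, |x n| ≤ C) ∧ x 0 = 0 ∧
        ∀ n, φ (n + 1) * (x (n + 1) - A n * x n) = y (n + 1) := by
  have hpos : ∀ n, 0 < μ n := fun n => (hμ n) ▸ Real.exp_pos _
  have hmono : ∀ n, μ n < μ (n + 1) := by
    intro n
    rw [hμ n, hμ (n + 1)]
    exact Real.exp_lt_exp.mpr (Real.exp_lt_exp.mpr (by push_cast; linarith))
  set S : ℕ → ℝ := fun n => Real.sqrt (μ n) with hSdef
  have Spos : ∀ n, 0 < S n := fun n => Real.sqrt_pos.mpr (hpos n)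
  have Ssq : ∀ n, S n ^ 2 = μ n := fun n => Real.sq_sqrt (hpos n).le
  have Smono : ∀ n, S n < S (n + 1) := fun n =>
    Real.sqrt_lt_sqrt (hpos n).le (hmono n)
  have Sle : ∀ m n : ℕ, m ≤ n → S m ≤ S n := by
    intro m n h
    induction n with
    | zero => simp [Nat.le_zero.mp h]
    | succ k ih =>
      rcases Nat.lt_or_ge m (k + 1) with h' | h'
      · exact (ih (by omega)).trans (Smono k).le
      · have hm : m = k + 1 := by omega
        simp [hm]
  have Sexp : ∀ n, S n = Real.exp (Real.exp n / 2) := by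
    intro n
    have h2 : μ n = (Real.exp (Real.exp n / 2)) ^ 2 := by
      rw [hμ n, sq, ← Real.exp_add]; ring_nf
    simp only [hSdef, h2]
    exact Real.sqrt_sq (Real.exp_pos _).le
  have hAS : ∀ n, A n = S n / S (n + 1) := by
    intro n
    rw [hA n, show -(1 : ℝ) / 2 = -(1 / 2) by ring,
      Real.rpow_neg (div_nonneg (hpos _).le (hpos _).le),
      ← Real.sqrt_eq_rpow, Real.sqrt_div (hpos _).le]
    rw [inv_div]
  have hrpow : ∀ m n : ℕ, (μ m / μ n) ^ ((1 : ℝ) / 2) = S m / S n := by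
    intro m n
    rw [← Real.sqrt_eq_rpow, Real.sqrt_div (hpos _).le]
  -- main estimate for any solution x
  have main : ∀ x : ℕ → ℝ, x 0 = 0 →
      (∀ n, φ (n + 1) * (x (n + 1) - A n * x n) = y (n + 1)) →
      ∀ n, 1 ≤ n →
        2 * ((μ (n + 1) / μ n) ^ ((1 : ℝ) / 2) - (μ 1 / μ n) ^ ((1 : ℝ) / 2))
          ≤ x n := by
    intro x hx0 hrec
    have zrec : ∀ n, S (n + 1) * x (n + 1)
        = S n * x n + (μ (n + 1 + 1) - μ (n + 1)) / S (n + 1) := by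
      intro n
      have h := hrec n
      rw [hφ (n + 1), hy (n + 1) (by omega)] at h
      have hμne : μ (n + 1 + 1) - μ (n + 1) ≠ 0 := by
        have := hmono (n + 1); intro h'; linarith
      have ht : μ (n + 1) * (x (n + 1) - A n * x n) = μ (n + 1 + 1) - μ (n + 1) := by
        rw [div_mul_eq_mul_div, div_eq_one_iff_eq hμne] at h
        exact h
      have hx1 : x (n + 1) = S n / S (n + 1) * x n
          + (μ (n + 1 + 1) - μ (n + 1)) / μ (n + 1) := by
        rw [hAS n] at ht
        have h' : x (n + 1) - S n / S (n + 1) * x n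
            = (μ (n + 1 + 1) - μ (n + 1)) / μ (n + 1) := by
          rw [eq_div_iff (hpos (n + 1)).ne']
          linear_combination ht
        linarith [h']
      rw [hx1, ← Ssq (n + 1)]
      have hS1 := (Spos (n + 1)).ne'
      field_simp
    have key : ∀ n, 2 * (S (n + 1) - S 1) ≤ S n * x n := by
      intro n
      induction n with
      | zero => simp [hx0]
      | succ n ih =>
        have hz := zrec n
        have hstep : 2 * (S (n + 1 + 1) - S (n + 1))
            ≤ (μ (n + 1 + 1) - μ (n + 1)) / S (n + 1) := by
          rw [le_div_iff₀ (Spos (n + 1))]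
          nlinarith [Smono (n + 1), Spos (n + 1), Spos (n + 1 + 1),
            Ssq (n + 1), Ssq (n + 1 + 1)]
        linarith
    intro n _
    rw [hrpow (n + 1) n, hrpow 1 n]
    have h := key n
    have h2 : 2 * (S (n + 1) / S n - S 1 / S n)
        = 2 * (S (n + 1) - S 1) / S n := by ring
    rw [h2, div_le_iff₀ (Spos n)]
    nlinarith [Spos n]
  refine ⟨main, ?_⟩
  rintro ⟨x, ⟨C, hC⟩, hx0, hrec⟩
  -- growth lower bound: for n ≥ 1, x n ≥ n + 1
  have grow : ∀ n : ℕ, 1 ≤ n → (n : ℝ) + 1 ≤ x n := by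
    intro n hn
    have h := main x hx0 hrec n hn
    rw [hrpow (n + 1) n, hrpow 1 n] at h
    have hS1n : S 1 / S n ≤ 1 := by
      rw [div_le_one (Spos n)]
      exact Sle 1 n hn
    have he : (2 : ℝ) ≤ Real.exp 1 := by
      have := Real.add_one_le_exp (1 : ℝ); linarith
    have hp := Real.exp_pos ((n : ℝ))
    have hB : ((n : ℝ) + 1) / 2 ≤ Real.exp ((n : ℝ)) * (Real.exp 1 - 1) / 2 := by
      nlinarith [Real.add_one_le_exp ((n : ℝ))]
    have hratio : ((n : ℝ) + 1) / 2 + 1 ≤ S (n + 1) / S n := by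
      rw [Sexp (n + 1), Sexp n, ← Real.exp_sub]
      have harg : Real.exp ((n : ℝ)) * (Real.exp 1 - 1) / 2
          = Real.exp ((n + 1 : ℕ) : ℝ) / 2 - Real.exp ((n : ℕ) : ℝ) / 2 := by
        push_cast
        rw [Real.exp_add]
        ring
      rw [← harg]
      have h1 : Real.exp ((n : ℝ)) * (Real.exp 1 - 1) / 2 + 1
          ≤ Real.exp (Real.exp ((n : ℝ)) * (Real.exp 1 - 1) / 2) :=
        Real.add_one_le_exp _
      linarith
    linarith
  set N : ℕ := ⌈C⌉₊ + 1 with hN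
  have h1 : (N : ℝ) + 1 ≤ x N := grow N (by omega)
  have h2 : x N ≤ C := (abs_le.mp (hC N)).2
  have h3 : C ≤ (⌈C⌉₊ : ℝ) := Nat.le_ceil C
  have h4 : ((⌈C⌉₊ : ℝ)) < (N : ℝ) + 1 := by
    rw [hN]; push_cast; linarith
  linarith
end
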